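/- arXiv:2408.08728 — 7 statements merged into one kernel-verified Lean document; each statement's English description precedes it below -/
import Mathlib

section
/- Let λ > 0, η > 0, c > 0 and t₀ ∈ ℝ, and let V : ℝ → ℝ be a smooth function satisfying |V(t) + λ²| ≤ c·exp(η·t) for all t < t₀. Then there exists a twice continuously differentiable function w : ℝ → ℝ satisfying w''(t) + V(t)·w(t) = 0 for all t ∈ ℝ, such that w(t)·exp(−λ·t) → 1 and w'(t)·exp(−λ·t) → λ as t → −∞. -/
open MeasureTheory Set Filter Real Topology NNReal

namespace Stmt0Aux

lemma integrableOn_of_bound {g h : ℝ → ℝ} {s : Set ℝ} (hs : MeasurableSet s)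
    (hg : Continuous g) (hh : IntegrableOn h s) (hb : ∀ x ∈ s, |g x| ≤ h x) :
    IntegrableOn g s := by
  refine Integrable.mono hh hg.aestronglyMeasurable.restrict ?_
  filter_upwards [ae_restrict_mem hs] with x hx
  rw [Real.norm_eq_abs, Real.norm_eq_abs]
  exact (hb x hx).trans (le_abs_self _)

lemma hasDerivAt_exp_mul_div (b : ℝ) (hb : b ≠ 0) (x : ℝ) :
    HasDerivAt (fun s => Real.exp (b * s) / b) (Real.exp (b * x)) x := by
  have h := (((hasDerivAt_id x).const_mul b).exp).div_const b
  refine h.congr_deriv (Eq.symm ?_)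
  field_simp
  rfl

lemma integrableOn_exp_mul_Iic {b : ℝ} (hb : 0 < b) (t : ℝ) :
    IntegrableOn (fun s => Real.exp (b * s)) (Iic t) := by
  have hcont : Continuous fun s => Real.exp (b * s) :=
    Real.continuous_exp.comp (continuous_const.mul continuous_id)
  refine integrableOn_Iic_of_intervalIntegral_norm_bounded (Real.exp (b * t) / b) t
    (fun i => hcont.integrableOn_Ioc) (l := atBot) tendsto_id ?_
  refine Eventually.of_forall fun i => ?_
  have hval : ∫ x in i..t, ‖Real.exp (b * x)‖ = Real.exp (b * t) / b - Real.exp (b * i) / b := by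
    rw [show (fun x => ‖Real.exp (b * x)‖) = fun x => Real.exp (b * x) from
      funext fun x => Real.norm_eq_abs _ ▸ abs_of_pos (Real.exp_pos _)]
    exact intervalIntegral.integral_eq_sub_of_hasDerivAt
      (fun x _ => hasDerivAt_exp_mul_div b hb.ne' x) (hcont.intervalIntegrable _ _)
  simp only [id] at *
  rw [hval]
  have := (Real.exp_pos (b * i)).le
  have hbpos := hb
  nlinarith [div_nonneg this hb.le]

lemma integral_exp_mul_Iic {b : ℝ} (hb : 0 < b) (t : ℝ) :
    ∫ s in Iic t, Real.exp (b * s) = Real.exp (b * t) / b := by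
  have hlim : Tendsto (fun s => Real.exp (b * s) / b) atBot (𝓝 0) := by
    have h1 : Tendsto (fun s : ℝ => b * s) atBot atBot :=
      Tendsto.const_mul_atBot hb tendsto_id
    have := (Real.tendsto_exp_atBot.comp h1).div_const b
    simpa using this
  have := integral_Iic_of_hasDerivAt_of_tendsto'
    (fun x _ => hasDerivAt_exp_mul_div b hb.ne' x) (integrableOn_exp_mul_Iic hb t) hlim
  simpa using this

lemma hasDerivAt_primitive_Iic {g : ℝ → ℝ} (hg : Continuous g)
    (hint : ∀ t : ℝ, IntegrableOn g (Iic t)) (t : ℝ) :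
    HasDerivAt (fun x => ∫ s in Iic x, g s) (g t) t := by
  have key : (fun x => ∫ s in Iic x, g s)
      = fun x => (∫ s in Iic t, g s) + ∫ s in t..x, g s := by
    funext x
    rw [← intervalIntegral.integral_Iic_sub_Iic (hint t) (hint x)]
    ring
  rw [key]
  exact (intervalIntegral.integral_hasDerivAt_right (hg.intervalIntegrable _ _)
    (hg.stronglyMeasurable.stronglyMeasurableAtFilter) hg.continuousAt).const_add _

set_option maxHeartbeats 1000000 in
theorem core (lam : ℝ) (hlam : 0 < lam) (q : ℝ → ℝ) (hq : Continuous q)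
    (hqint : ∀ t : ℝ, IntegrableOn q (Iic t))
    (hQ0 : Tendsto (fun t => ∫ s in Iic t, |q s|) atBot (𝓝 0)) :
    ∃ u J : ℝ → ℝ,
      (∀ t, HasDerivAt u (J t) t) ∧
      (∀ t, HasDerivAt J (-(2 * lam) * J t + q t * u t) t) ∧
      Tendsto u atBot (𝓝 1) ∧ Tendsto J atBot (𝓝 0) := by
  -- the weight function
  set Q : ℝ → ℝ := fun t => ∫ s in Iic t, |q s| with hQdef
  have hqabs : Continuous fun s => |q s| := hq.abs
  have hqabsint : ∀ t : ℝ, IntegrableOn (fun s => |q s|) (Iic t) := fun t => (hqint t).abs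
  have hQ' : ∀ t, HasDerivAt Q (|q t|) t := hasDerivAt_primitive_Iic hqabs hqabsint
  have hQcont : Continuous Q := continuous_iff_continuousAt.2 fun t => (hQ' t).continuousAt
  have hQnn : ∀ t, 0 ≤ Q t := fun t => setIntegral_nonneg measurableSet_Iic fun s _ => abs_nonneg _
  have hQmono : Monotone Q := by
    intro a b hab
    exact setIntegral_mono_set (hqabsint b) (Eventually.of_forall fun s => abs_nonneg _)
      (HasSubset.Subset.eventuallyLE (Iic_subset_Iic.2 hab))
  set E : ℝ → ℝ := fun t => Real.exp (Q t / lam) with hEdef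
  have hEcont : Continuous E := Real.continuous_exp.comp (hQcont.div_const lam)
  have hE1 : ∀ t, 1 ≤ E t := fun t => Real.one_le_exp (div_nonneg (hQnn t) hlam.le)
  have hEpos : ∀ t, 0 < E t := fun t => Real.exp_pos _
  have hEmono : Monotone E := fun a b hab => by
    have : Q a / lam ≤ Q b / lam := by
      gcongr
      exact hQmono hab
    exact Real.exp_le_exp.2 this
  have hE' : ∀ t, HasDerivAt (fun s => lam * E s) (|q t| * E t) t := by
    intro t
    have h := (((hQ' t).div_const lam).exp).const_mul lam
    refine h.congr_deriv (Eq.symm ?_)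
    field_simp [hEdef]
    ring
  have hEt : Tendsto E atBot (𝓝 1) := by
    have h1 : Tendsto (fun t => Q t / lam) atBot (𝓝 0) := by
      simpa using hQ0.div_const lam
    have := (Real.continuous_exp.tendsto 0).comp h1
    rw [Real.exp_zero] at this
    exact this
  -- integrability of |q| * E on Iic t
  have hqEint : ∀ t : ℝ, IntegrableOn (fun s => |q s| * E s) (Iic t) := by
    intro t
    refine integrableOn_of_bound measurableSet_Iic (hqabs.mul hEcont)
      (((hqabsint t).const_mul (E t))) fun x hx => ?_
    rw [abs_of_nonneg (mul_nonneg (abs_nonneg _) (hEpos x).le)]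
    calc |q x| * E x ≤ |q x| * E t :=
          mul_le_mul_of_nonneg_left (hEmono hx) (abs_nonneg _)
      _ = E t * |q x| := mul_comm _ _
  -- the key integral identity
  have keyI : ∀ t : ℝ, ∫ s in Iic t, (|q s| * E s) = lam * E t - lam := by
    intro t
    have hlim : Tendsto (fun s => lam * E s) atBot (𝓝 (lam * 1)) := hEt.const_mul lam
    have := integral_Iic_of_hasDerivAt_of_tendsto' (fun x _ => hE' x) (hqEint t) hlim
    rw [this]; ring
  -- the Banach space
  have hker : ∀ U : ℝ → ℝ, Continuous U → ∀ M : ℝ, 0 ≤ M → (∀ s, |U s| ≤ M * E s) →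
      ∀ t : ℝ, ∀ k : ℝ → ℝ, Continuous k → (∀ s ∈ Iic t, |k s| ≤ 1) →
      IntegrableOn (fun s => k s * (q s * U s)) (Iic t) ∧
      |∫ s in Iic t, k s * (q s * U s)| ≤ M * (lam * (E t - 1)) := by
    intro U hU M hM0 hMb t k hk hk1
    have hbnd : ∀ s ∈ Iic t, |k s * (q s * U s)| ≤ M * (|q s| * E s) := by
      intro s hs
      rw [abs_mul, abs_mul]
      calc |k s| * (|q s| * |U s|) ≤ 1 * (|q s| * (M * E s)) := by
            apply mul_le_mul (hk1 s hs) _ (mul_nonneg (abs_nonneg _) (abs_nonneg _)) zero_le_one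
            exact mul_le_mul_of_nonneg_left (hMb s) (abs_nonneg _)
        _ = M * (|q s| * E s) := by ring
    have hint : IntegrableOn (fun s => k s * (q s * U s)) (Iic t) := by
      refine integrableOn_of_bound measurableSet_Iic (hk.mul (hq.mul hU))
        ((hqEint t).const_mul M) fun x hx => ?_
      exact hbnd x hx
    refine ⟨hint, ?_⟩
    calc |∫ s in Iic t, k s * (q s * U s)| ≤ ∫ s in Iic t, |k s * (q s * U s)| := by
          simpa only [Real.norm_eq_abs] using
            norm_integral_le_integral_norm (μ := volume.restrict (Iic t))
              (fun s => k s * (q s * U s))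
      _ ≤ ∫ s in Iic t, M * (|q s| * E s) := by
          refine setIntegral_mono_on hint.abs ((hqEint t).const_mul M)
            measurableSet_Iic hbnd
      _ = M * ∫ s in Iic t, (|q s| * E s) := integral_const_mul _ _
      _ = M * (lam * (E t - 1)) := by rw [keyI t]; ring
  -- combined estimates
  have hDelta : ∀ U : ℝ → ℝ, Continuous U → ∀ M : ℝ, 0 ≤ M → (∀ s, |U s| ≤ M * E s) →
      ∀ t : ℝ,
      IntegrableOn (fun s => q s * U s) (Iic t) ∧
      IntegrableOn (fun s => Real.exp ((2 * lam) * s) * (q s * U s)) (Iic t) ∧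
      |(∫ s in Iic t, q s * U s) -
          Real.exp (-(2 * lam) * t) * ∫ s in Iic t, Real.exp ((2 * lam) * s) * (q s * U s)|
        ≤ M * (lam * (E t - 1)) ∧
      |Real.exp (-(2 * lam) * t) * ∫ s in Iic t, Real.exp ((2 * lam) * s) * (q s * U s)|
        ≤ M * (lam * (E t - 1)) := by
    intro U hU M hM0 hMb t
    have hk2c : Continuous fun s => Real.exp (-(2 * lam) * t) * Real.exp ((2 * lam) * s) :=
      continuous_const.mul (Real.continuous_exp.comp (continuous_const.mul continuous_id))
    have hk2b : ∀ s ∈ Iic t, |Real.exp (-(2 * lam) * t) * Real.exp ((2 * lam) * s)| ≤ 1 := by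
      intro s hs
      rw [← Real.exp_add, abs_of_pos (Real.exp_pos _)]
      rw [show -(2 * lam) * t + 2 * lam * s = 2 * lam * (s - t) by ring]
      have hst : s ≤ t := hs
      calc Real.exp (2 * lam * (s - t)) ≤ Real.exp 0 :=
            Real.exp_le_exp.2 (by nlinarith)
        _ = 1 := Real.exp_zero
    have h2 := hker U hU M hM0 hMb t _ hk2c hk2b
    have h1 := hker U hU M hM0 hMb t (fun _ => 1) continuous_const
      (fun s _ => by norm_num)
    have h1' : IntegrableOn (fun s => q s * U s) (Iic t) := by
      have := h1.1; simpa using this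
    have hk3c : Continuous fun s => 1 - Real.exp (-(2 * lam) * t) * Real.exp ((2 * lam) * s) :=
      continuous_const.sub hk2c
    have hk3b : ∀ s ∈ Iic t,
        |1 - Real.exp (-(2 * lam) * t) * Real.exp ((2 * lam) * s)| ≤ 1 := by
      intro s hs
      have h := hk2b s hs
      have hpos : 0 < Real.exp (-(2 * lam) * t) * Real.exp ((2 * lam) * s) :=
        mul_pos (Real.exp_pos _) (Real.exp_pos _)
      rw [abs_of_pos hpos] at h
      rw [abs_le]
      constructor <;> nlinarith
    have h3 := hker U hU M hM0 hMb t _ hk3c hk3b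
    have hg2int : IntegrableOn (fun s => Real.exp ((2 * lam) * s) * (q s * U s)) (Iic t) := by
      refine integrableOn_of_bound measurableSet_Iic
        ((Real.continuous_exp.comp (continuous_const.mul continuous_id)).mul (hq.mul hU))
        (((hqabsint t)).const_mul (Real.exp ((2 * lam) * t) * (M * E t))) fun x hx => ?_
      have hx' : x ≤ t := hx
      have he : Real.exp ((2 * lam) * x) ≤ Real.exp ((2 * lam) * t) :=
        Real.exp_le_exp.2 (by nlinarith)
      have hUx : |U x| ≤ M * E t := (hMb x).trans
        (mul_le_mul_of_nonneg_left (hEmono hx') hM0)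
      rw [abs_mul, abs_mul, abs_of_pos (Real.exp_pos _)]
      have hqnn : (0:ℝ) ≤ |q x| := abs_nonneg _
      have h0 : (0:ℝ) ≤ Real.exp ((2*lam)*x) := (Real.exp_pos _).le
      have h0' : (0:ℝ) ≤ M * E t := mul_nonneg hM0 (hEpos t).le
      calc Real.exp ((2*lam)*x) * (|q x| * |U x|)
          ≤ Real.exp ((2*lam)*t) * (|q x| * (M * E t)) := by
            apply mul_le_mul he (mul_le_mul_of_nonneg_left hUx hqnn)
              (mul_nonneg hqnn (abs_nonneg _)) (Real.exp_pos _).le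
        _ = Real.exp ((2 * lam) * t) * (M * E t) * |q x| := by ring
    have hrw : Real.exp (-(2 * lam) * t) * ∫ s in Iic t, Real.exp ((2 * lam) * s) * (q s * U s)
        = ∫ s in Iic t,
            (Real.exp (-(2 * lam) * t) * Real.exp ((2 * lam) * s)) * (q s * U s) := by
      rw [← integral_const_mul]
      congr 1
      funext s
      ring
    refine ⟨h1', hg2int, ?_, ?_⟩
    · rw [hrw, ← integral_sub h1' h2.1]
      have hfun : (fun s => q s * U s -
            (Real.exp (-(2 * lam) * t) * Real.exp ((2 * lam) * s)) * (q s * U s))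
          = fun s => (1 - Real.exp (-(2 * lam) * t) * Real.exp ((2 * lam) * s)) * (q s * U s) :=
        funext fun s => by ring
      rw [hfun]
      exact h3.2
    · rw [hrw]
      exact h2.2
  -- the Banach fixed point argument
  let X := BoundedContinuousFunction ℝ ℝ
  let uu : X → ℝ → ℝ := fun v s => v s * E s
  have huuc : ∀ v : X, Continuous (uu v) := fun v => v.continuous.mul hEcont
  have huub : ∀ (v : X) (s : ℝ), |uu v s| ≤ ‖v‖ * E s := by
    intro v s
    have h1 : |v s| ≤ ‖v‖ := by
      simpa [Real.norm_eq_abs] using v.norm_coe_le_norm s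
    calc |uu v s| = |v s| * E s := by
          rw [show uu v s = v s * E s from rfl, abs_mul, abs_of_pos (hEpos s)]
      _ ≤ ‖v‖ * E s := mul_le_mul_of_nonneg_right h1 (hEpos s).le
  let Sf : X → ℝ → ℝ := fun v t =>
    Real.exp (-(Q t / lam)) * (1 + (1 / (2 * lam)) * ((∫ s in Iic t, q s * uu v s) -
      Real.exp (-(2 * lam) * t) * ∫ s in Iic t, Real.exp ((2 * lam) * s) * (q s * uu v s)))
  have hDv : ∀ v : X, ∀ t : ℝ, _ := fun v =>
    hDelta (uu v) (huuc v) ‖v‖ (norm_nonneg v) (huub v)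
  have hAc : ∀ v : X, Continuous fun t => ∫ s in Iic t, q s * uu v s := fun v =>
    continuous_iff_continuousAt.2 fun t =>
      (hasDerivAt_primitive_Iic (hq.mul (huuc v)) (fun r => (hDv v r).1) t).continuousAt
  have hBc : ∀ v : X, Continuous fun t =>
      ∫ s in Iic t, Real.exp ((2 * lam) * s) * (q s * uu v s) := fun v =>
    continuous_iff_continuousAt.2 fun t =>
      (hasDerivAt_primitive_Iic
        ((Real.continuous_exp.comp (continuous_const.mul continuous_id)).mul
          (hq.mul (huuc v))) (fun r => (hDv v r).2.1) t).continuousAt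
  have hSfc : ∀ v : X, Continuous (Sf v) := by
    intro v
    apply Continuous.mul
    · exact Real.continuous_exp.comp (hQcont.div_const lam).neg
    · apply continuous_const.add
      apply Continuous.mul continuous_const
      apply Continuous.sub (hAc v)
      exact (Real.continuous_exp.comp (continuous_const.mul continuous_id)).mul (hBc v)
  have hphiE : ∀ t, Real.exp (-(Q t / lam)) * E t = 1 := by
    intro t
    rw [show E t = Real.exp (Q t / lam) from rfl, ← Real.exp_add]
    simp
  have hphi_pos : ∀ t, 0 < Real.exp (-(Q t / lam)) := fun t => Real.exp_pos _
  have hphi_le1 : ∀ t, Real.exp (-(Q t / lam)) ≤ 1 := by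
    intro t
    rw [← Real.exp_zero]
    exact Real.exp_le_exp.2 (neg_nonpos.2 (div_nonneg (hQnn t) hlam.le))
  have hhalf : (1 / (2 * lam)) * lam = 1 / 2 := by field_simp
  have hSfb : ∀ (v : X) (t : ℝ), |Sf v t| ≤ 1 + ‖v‖ := by
    intro v t
    have h := (hDv v t).2.2.1
    have h1 : Real.exp (-(Q t / lam)) * (E t - 1) = 1 - Real.exp (-(Q t / lam)) := by
      rw [mul_sub, mul_one, hphiE t]
    have habs := abs_le.1 h
    have hE := hE1 t
    have hphi1 := hphi_le1 t
    have hphi0 := (hphi_pos t).le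
    have hv0 : (0:ℝ) ≤ ‖v‖ := norm_nonneg v
    rw [show Sf v t = Real.exp (-(Q t / lam)) * (1 + (1 / (2 * lam)) *
        ((∫ s in Iic t, q s * uu v s) -
        Real.exp (-(2 * lam) * t) * ∫ s in Iic t, Real.exp ((2 * lam) * s) * (q s * uu v s)))
      from rfl]
    rw [abs_le]
    have hl2 : (0:ℝ) < 1 / (2 * lam) := by positivity
    have hc0 : (0:ℝ) ≤ Real.exp (-(Q t / lam)) * (1 / (2 * lam)) := mul_nonneg hphi0 hl2.le
    have hkey : (Real.exp (-(Q t / lam)) * (1 / (2 * lam))) * (‖v‖ * (lam * (E t - 1)))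
        = ‖v‖ * (1 - Real.exp (-(Q t / lam))) / 2 := by
      calc (Real.exp (-(Q t / lam)) * (1 / (2 * lam))) * (‖v‖ * (lam * (E t - 1)))
          = ((1 / (2 * lam)) * lam) * (‖v‖ * (Real.exp (-(Q t / lam)) * (E t - 1))) := by ring
        _ = ((1 / (2 * lam)) * lam) * (‖v‖ * (1 - Real.exp (-(Q t / lam)))) := by rw [h1]
        _ = ‖v‖ * (1 - Real.exp (-(Q t / lam))) / 2 := by rw [hhalf]; ring
    have hb1 := mul_le_mul_of_nonneg_left habs.2 hc0
    have hb2 := mul_le_mul_of_nonneg_left habs.1 hc0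
    rw [hkey] at hb1
    have hb3 : ‖v‖ * (1 - Real.exp (-(Q t / lam))) ≤ ‖v‖ :=
      mul_le_of_le_one_right hv0 (by linarith)
    have hb4 : 0 ≤ ‖v‖ * (1 - Real.exp (-(Q t / lam))) :=
      mul_nonneg hv0 (by linarith)
    constructor <;> linarith [hb1, hb2, hb3, hb4]
  have hcontr : ∀ v v' : X, ∀ t : ℝ, |Sf v t - Sf v' t| ≤ (1 / 2) * dist v v' := by
    intro v v' t
    have hUc : Continuous fun s => uu v s - uu v' s := (huuc v).sub (huuc v')
    have hUb : ∀ s, |uu v s - uu v' s| ≤ dist v v' * E s := by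
      intro s
      have h1 : |v s - v' s| ≤ dist v v' := by
        simpa [Real.dist_eq] using BoundedContinuousFunction.dist_coe_le_dist (f := v) (g := v') s
      calc |uu v s - uu v' s| = |v s - v' s| * E s := by
            rw [show uu v s - uu v' s = (v s - v' s) * E s from by
              rw [show uu v s = v s * E s from rfl, show uu v' s = v' s * E s from rfl]; ring,
              abs_mul, abs_of_pos (hEpos s)]
        _ ≤ dist v v' * E s := mul_le_mul_of_nonneg_right h1 (hEpos s).le
    have hD := hDelta _ hUc (dist v v') dist_nonneg hUb t
    have h := hD.2.2.1
    have hsubA : (∫ s in Iic t, q s * (uu v s - uu v' s))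
        = (∫ s in Iic t, q s * uu v s) - ∫ s in Iic t, q s * uu v' s := by
      rw [← integral_sub (hDv v t).1 (hDv v' t).1]
      congr 1; funext s; ring
    have hsubB : (∫ s in Iic t, Real.exp ((2 * lam) * s) * (q s * (uu v s - uu v' s)))
        = (∫ s in Iic t, Real.exp ((2 * lam) * s) * (q s * uu v s))
          - ∫ s in Iic t, Real.exp ((2 * lam) * s) * (q s * uu v' s) := by
      rw [← integral_sub (hDv v t).2.1 (hDv v' t).2.1]
      congr 1; funext s; ring
    have hkey : Sf v t - Sf v' t = Real.exp (-(Q t / lam)) * ((1 / (2 * lam)) *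
        ((∫ s in Iic t, q s * (uu v s - uu v' s)) -
          Real.exp (-(2 * lam) * t) *
            ∫ s in Iic t, Real.exp ((2 * lam) * s) * (q s * (uu v s - uu v' s)))) := by
      rw [hsubA, hsubB]
      rw [show Sf v t = Real.exp (-(Q t / lam)) * (1 + (1 / (2 * lam)) *
          ((∫ s in Iic t, q s * uu v s) -
          Real.exp (-(2 * lam) * t) * ∫ s in Iic t, Real.exp ((2 * lam) * s) * (q s * uu v s)))
        from rfl,
        show Sf v' t = Real.exp (-(Q t / lam)) * (1 + (1 / (2 * lam)) *
          ((∫ s in Iic t, q s * uu v' s) -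
          Real.exp (-(2 * lam) * t) * ∫ s in Iic t, Real.exp ((2 * lam) * s) * (q s * uu v' s)))
        from rfl]
      ring
    rw [hkey]
    have h1 : Real.exp (-(Q t / lam)) * (E t - 1) = 1 - Real.exp (-(Q t / lam)) := by
      rw [mul_sub, mul_one, hphiE t]
    have habs := abs_le.1 h
    have hE := hE1 t
    have hphi1 := hphi_le1 t
    have hphi0 := (hphi_pos t).le
    have hd0 : (0:ℝ) ≤ dist v v' := dist_nonneg
    have hl2 : (0:ℝ) < 1 / (2 * lam) := by positivity
    have hc0 : (0:ℝ) ≤ Real.exp (-(Q t / lam)) * (1 / (2 * lam)) := mul_nonneg hphi0 hl2.le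
    have hkey2 : (Real.exp (-(Q t / lam)) * (1 / (2 * lam))) * (dist v v' * (lam * (E t - 1)))
        = dist v v' * (1 - Real.exp (-(Q t / lam))) / 2 := by
      calc (Real.exp (-(Q t / lam)) * (1 / (2 * lam))) * (dist v v' * (lam * (E t - 1)))
          = ((1 / (2 * lam)) * lam) * (dist v v' * (Real.exp (-(Q t / lam)) * (E t - 1))) := by
            ring
        _ = ((1 / (2 * lam)) * lam) * (dist v v' * (1 - Real.exp (-(Q t / lam)))) := by rw [h1]
        _ = dist v v' * (1 - Real.exp (-(Q t / lam))) / 2 := by rw [hhalf]; ring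
    have hb1 := mul_le_mul_of_nonneg_left habs.2 hc0
    have hb2 := mul_le_mul_of_nonneg_left habs.1 hc0
    rw [hkey2] at hb1
    have hb3 : dist v v' * (1 - Real.exp (-(Q t / lam))) ≤ dist v v' :=
      mul_le_of_le_one_right hd0 (by linarith)
    have hb4 : 0 ≤ dist v v' * (1 - Real.exp (-(Q t / lam))) :=
      mul_nonneg hd0 (by linarith)
    rw [abs_le]
    constructor <;> linarith [hb1, hb2, hb3, hb4]
  let Smap : X → X := fun v =>
    BoundedContinuousFunction.ofNormedAddCommGroup (Sf v) (hSfc v) (1 + ‖v‖)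
      (fun t => by rw [Real.norm_eq_abs]; exact hSfb v t)
  have hlip : LipschitzWith (1 / 2 : ℝ≥0) Smap := by
    apply LipschitzWith.of_dist_le_mul
    intro v v'
    rw [BoundedContinuousFunction.dist_le (by positivity)]
    intro t
    have h := hcontr v v' t
    have hco : ((1 / 2 : ℝ≥0) : ℝ) = 1 / 2 := by norm_num
    rw [hco]
    rw [Real.dist_eq]
    exact h
  have hCW : ContractingWith (1 / 2 : ℝ≥0) Smap := ⟨NNReal.coe_lt_coe.1 (by norm_num), hlip⟩
  obtain ⟨v, hv⟩ : ∃ v : X, Smap v = v := ⟨hCW.fixedPoint Smap, hCW.fixedPoint_isFixedPt⟩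
  have hfixt : ∀ t, Sf v t = v t := by
    intro t
    conv_rhs => rw [← hv]
    rfl
  have hueq : ∀ t : ℝ, uu v t = 1 + (1 / (2 * lam)) * ((∫ s in Iic t, q s * uu v s) -
      Real.exp (-(2 * lam) * t) *
        ∫ s in Iic t, Real.exp ((2 * lam) * s) * (q s * uu v s)) := by
    intro t
    have h := hfixt t
    have key : ∀ y : ℝ, Real.exp (-(Q t / lam)) * y * E t = y := by
      intro y
      calc Real.exp (-(Q t / lam)) * y * E t = y * (Real.exp (-(Q t / lam)) * E t) := by ring
        _ = y := by rw [hphiE t]; ring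
    calc uu v t = v t * E t := rfl
      _ = Sf v t * E t := by rw [h]
      _ = _ := key _
  have hg1c : Continuous fun s => q s * uu v s := hq.mul (huuc v)
  have hg2c : Continuous fun s => Real.exp ((2 * lam) * s) * (q s * uu v s) :=
    (Real.continuous_exp.comp (continuous_const.mul continuous_id)).mul hg1c
  have hA' : ∀ t, HasDerivAt (fun r => ∫ s in Iic r, q s * uu v s) (q t * uu v t) t :=
    hasDerivAt_primitive_Iic hg1c fun r => (hDv v r).1
  have hB' : ∀ t, HasDerivAt (fun r => ∫ s in Iic r, Real.exp ((2 * lam) * s) * (q s * uu v s))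
      (Real.exp ((2 * lam) * t) * (q t * uu v t)) t :=
    hasDerivAt_primitive_Iic hg2c fun r => (hDv v r).2.1
  set J : ℝ → ℝ := fun t => Real.exp (-(2 * lam) * t) *
    ∫ s in Iic t, Real.exp ((2 * lam) * s) * (q s * uu v s) with hJdef
  have hee : ∀ t : ℝ, Real.exp (-(2 * lam) * t) * Real.exp ((2 * lam) * t) = 1 := by
    intro t
    rw [← Real.exp_add]
    rw [show -(2 * lam) * t + 2 * lam * t = 0 by ring]
    exact Real.exp_zero
  have hexp' : ∀ t : ℝ, HasDerivAt (fun r => Real.exp (-(2 * lam) * r))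
      (-(2 * lam) * Real.exp (-(2 * lam) * t)) t := by
    intro t
    have h := ((hasDerivAt_id t).const_mul (-(2 * lam))).exp
    refine h.congr_deriv (Eq.symm ?_)
    simp only [id_eq, mul_one]
    ring
  have hJ' : ∀ t, HasDerivAt J (-(2 * lam) * J t + q t * uu v t) t := by
    intro t
    have h := (hexp' t).mul (hB' t)
    refine h.congr_deriv (Eq.symm ?_)
    simp only [hJdef]
    linear_combination -(q t * uu v t) * (hee t)
  have hu' : ∀ t, HasDerivAt (uu v) (J t) t := by
    intro t
    have h := (((hA' t).sub ((hexp' t).mul (hB' t))).const_mul (1 / (2 * lam))).const_add 1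
    have hfun : uu v = fun r => 1 + (1 / (2 * lam)) * ((∫ s in Iic r, q s * uu v s) -
        Real.exp (-(2 * lam) * r) *
          ∫ s in Iic r, Real.exp ((2 * lam) * s) * (q s * uu v s)) :=
      funext hueq
    rw [hfun]
    refine h.congr_deriv (Eq.symm ?_)
    simp only [hJdef]
    have h2 : Real.exp (-(2 * lam) * t) * (Real.exp ((2 * lam) * t) * (q t * uu v t))
        = q t * uu v t := by rw [← mul_assoc, hee t, one_mul]
    rw [h2]
    have hl0 : lam ≠ 0 := ne_of_gt hlam
    field_simp
    ring
  have hElim : Tendsto (fun t => E t - 1) atBot (𝓝 0) := by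
    have := hEt.sub_const 1
    simpa using this
  have hJlim : Tendsto J atBot (𝓝 0) := by
    apply squeeze_zero_norm (a := fun t => ‖v‖ * (lam * (E t - 1)))
    · intro t
      rw [Real.norm_eq_abs]
      exact (hDv v t).2.2.2
    · have := ((hElim.const_mul lam).const_mul ‖v‖)
      simpa using this
  have hulim : Tendsto (uu v) atBot (𝓝 1) := by
    have hsub : Tendsto (fun t => uu v t - 1) atBot (𝓝 0) := by
      apply squeeze_zero_norm
        (a := fun t => (1 / (2 * lam)) * (‖v‖ * (lam * (E t - 1))))
      · intro t
        have h := hueq t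
        rw [Real.norm_eq_abs]
        rw [show uu v t - 1 = (1 / (2 * lam)) * ((∫ s in Iic t, q s * uu v s) -
            Real.exp (-(2 * lam) * t) *
              ∫ s in Iic t, Real.exp ((2 * lam) * s) * (q s * uu v s)) from by rw [h]; ring]
        rw [abs_mul, abs_of_pos (show (0:ℝ) < 1 / (2 * lam) by positivity)]
        exact mul_le_mul_of_nonneg_left (hDv v t).2.2.1 (by positivity)
      · have := (((hElim.const_mul lam).const_mul ‖v‖).const_mul (1 / (2 * lam)))
        simpa using this
    have := hsub.add_const 1
    simpa using this
  exact ⟨uu v, J, hu', hJ', hulim, hJlim⟩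


lemma hasDerivAt_exp_const_mul (b t : ℝ) :
    HasDerivAt (fun r => Real.exp (b * r)) (b * Real.exp (b * t)) t := by
  have h := ((hasDerivAt_id t).const_mul b).exp
  refine h.congr_deriv (Eq.symm ?_)
  simp only [id_eq, mul_one]
  ring

end Stmt0Aux

open MeasureTheory Set Filter Real Topology Stmt0Aux in
set_option maxHeartbeats 1000000 in
/-- existence of a solution of `w'' + V w = 0` with
`w(t) e^{-λ t} → 1` and `w'(t) e^{-λ t} → λ` as `t → -∞`, when
`|V(t) + λ²| ≤ c e^{η t}` for `t < t₀`. -/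
theorem stmt0 (lam eta c t0 : ℝ) (hlam : 0 < lam) (heta : 0 < eta) (hc : 0 < c)
    (V : ℝ → ℝ) (hV : ContDiff ℝ (⊤ : ℕ∞) V)
    (hVb : ∀ t < t0, |V t + lam ^ 2| ≤ c * Real.exp (eta * t)) :
    ∃ w : ℝ → ℝ, ContDiff ℝ 2 w ∧
      (∀ t : ℝ, deriv (deriv w) t + V t * w t = 0) ∧
      Filter.Tendsto (fun t => w t * Real.exp (-lam * t)) Filter.atBot (nhds 1) ∧
      Filter.Tendsto (fun t => deriv w t * Real.exp (-lam * t)) Filter.atBot (nhds lam) := by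
  set q : ℝ → ℝ := fun t => -(V t + lam ^ 2) with hqdef
  have hqc : Continuous q := (hV.continuous.add continuous_const).neg
  have hqb : ∀ t < t0, |q t| ≤ c * Real.exp (eta * t) := by
    intro t ht
    have h := hVb t ht
    rw [hqdef]
    calc |(fun t => -(V t + lam ^ 2)) t| = |V t + lam ^ 2| := by
          simp only []; rw [abs_neg]
      _ ≤ c * Real.exp (eta * t) := h
  have hexpint : ∀ t : ℝ, IntegrableOn (fun s => c * Real.exp (eta * s)) (Iic t) :=
    fun t => (Stmt0Aux.integrableOn_exp_mul_Iic heta t).const_mul c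
  have hqint : ∀ t : ℝ, IntegrableOn q (Iic t) := by
    intro t
    have h1 : IntegrableOn q (Iic (t0 - 1)) := by
      refine integrableOn_of_bound measurableSet_Iic hqc (hexpint _) fun x hx => ?_
      have hx' : x ≤ t0 - 1 := hx
      exact hqb x (by linarith)
    rcases le_total t (t0 - 1) with h | h
    · exact h1.mono_set (Iic_subset_Iic.2 h)
    · have h2 : IntegrableOn q (Icc (t0 - 1) t) := hqc.integrableOn_Icc
      refine (h1.union h2).mono_set ?_
      intro x hx
      have hx' : x ≤ t := hx
      rcases le_total x (t0 - 1) with h3 | h3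
      · exact Or.inl h3
      · exact Or.inr ⟨h3, hx'⟩
  have hQ0 : Tendsto (fun t => ∫ s in Iic t, |q s|) atBot (𝓝 0) := by
    have hupper : ∀ t ≤ t0 - 1, (∫ s in Iic t, |q s|) ≤ c * (Real.exp (eta * t) / eta) := by
      intro t ht
      have h1 : (∫ s in Iic t, |q s|) ≤ ∫ s in Iic t, c * Real.exp (eta * s) := by
        refine setIntegral_mono_on (hqint t).abs (hexpint t) measurableSet_Iic fun x hx => ?_
        have hx' : x ≤ t := hx
        exact hqb x (by linarith)
      have h2 : (∫ s in Iic t, c * Real.exp (eta * s)) = c * (Real.exp (eta * t) / eta) := by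
        rw [integral_const_mul, Stmt0Aux.integral_exp_mul_Iic heta t]
      linarith
    have hlow : ∀ t : ℝ, (0:ℝ) ≤ ∫ s in Iic t, |q s| := fun t =>
      setIntegral_nonneg measurableSet_Iic fun s _ => abs_nonneg _
    have htend : Tendsto (fun t => c * (Real.exp (eta * t) / eta)) atBot (𝓝 0) := by
      have h1 : Tendsto (fun s : ℝ => eta * s) atBot atBot :=
        Tendsto.const_mul_atBot heta tendsto_id
      have := ((Real.tendsto_exp_atBot.comp h1).div_const eta).const_mul c
      simpa using this
    refine tendsto_of_tendsto_of_tendsto_of_le_of_le' tendsto_const_nhds htend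
      (Eventually.of_forall hlow) ?_
    filter_upwards [Iic_mem_atBot (t0 - 1)] with t ht
    exact hupper t ht
  obtain ⟨u, J, hu', hJ', hulim, hJlim⟩ := core lam hlam q hqc hqint hQ0
  have hucont : Continuous u := continuous_iff_continuousAt.2 fun t => (hu' t).continuousAt
  have hJcont : Continuous J := continuous_iff_continuousAt.2 fun t => (hJ' t).continuousAt
  set w : ℝ → ℝ := fun t => Real.exp (lam * t) * u t with hwdef
  have hwcont : Continuous w :=
    (Real.continuous_exp.comp (continuous_const.mul continuous_id)).mul hucont
  have hw' : ∀ t, HasDerivAt w (lam * w t + Real.exp (lam * t) * J t) t := by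
    intro t
    have h := (hasDerivAt_exp_const_mul lam t).mul (hu' t)
    rw [hwdef]
    refine h.congr_deriv (Eq.symm ?_)
    simp only [hwdef]
    ring
  set w1 : ℝ → ℝ := fun t => lam * w t + Real.exp (lam * t) * J t with hw1def
  have hderivw : deriv w = w1 := funext fun t => (hw' t).deriv
  have hw1' : ∀ t, HasDerivAt w1 (-(V t * w t)) t := by
    intro t
    have h := ((hw' t).const_mul lam).add ((hasDerivAt_exp_const_mul lam t).mul (hJ' t))
    rw [hw1def]
    refine h.congr_deriv (Eq.symm ?_)
    simp only [hwdef, hqdef]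
    ring
  have hode : ∀ t : ℝ, deriv (deriv w) t + V t * w t = 0 := by
    intro t
    rw [hderivw, (hw1' t).deriv]
    ring
  have hderivw1 : deriv w1 = fun t => -(V t * w t) := funext fun t => (hw1' t).deriv
  have hwc2 : ContDiff ℝ 2 w := by
    rw [show (2 : WithTop ℕ∞) = 1 + 1 from by norm_num]
    rw [contDiff_succ_iff_deriv]
    refine ⟨fun t => (hw' t).differentiableAt, by simp, ?_⟩
    rw [hderivw, contDiff_one_iff_deriv]
    refine ⟨fun t => (hw1' t).differentiableAt, ?_⟩
    rw [hderivw1]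
    exact (hV.continuous.mul hwcont).neg
  have hee : ∀ t : ℝ, Real.exp (lam * t) * Real.exp (-lam * t) = 1 := by
    intro t
    rw [← Real.exp_add, show lam * t + -lam * t = 0 by ring]
    exact Real.exp_zero
  have hlim1 : Tendsto (fun t => w t * Real.exp (-lam * t)) atBot (𝓝 1) := by
    have hfun : (fun t => w t * Real.exp (-lam * t)) = u := by
      funext t
      simp only [hwdef]
      linear_combination (u t) * (hee t)
    rw [hfun]
    exact hulim
  have hlim2 : Tendsto (fun t => deriv w t * Real.exp (-lam * t)) atBot (𝓝 lam) := by
    have hfun : (fun t => deriv w t * Real.exp (-lam * t)) = fun t => lam * u t + J t := by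
      funext t
      rw [hderivw]
      simp only [hw1def, hwdef]
      linear_combination (lam * u t + J t) * (hee t)
    rw [hfun]
    have := (hulim.const_mul lam).add hJlim
    simpa using this
  exact ⟨w, hwc2, hode, hlim1, hlim2⟩
end

section
/- Let η > 0, c > 0 and t₀ ∈ ℝ, and let V : ℝ → ℝ be a smooth function satisfying |V(t)| ≤ c·exp(η·t) for all t < t₀. Then there exists a twice continuously differentiable function w : ℝ → ℝ satisfying w''(t) + V(t)·w(t) = 0 for all t ∈ ℝ and a constant C > 0 such that |w(t) + t| ≤ C and |w'(t) + 1| ≤ C·|t|·exp(η·t) for all t < min(t₀, −1). -/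
set_option maxHeartbeats 1000000

open MeasureTheory Set Filter

set_option linter.unusedSectionVars false

namespace Stmt4Aux

lemma tendsto_exp_mul_atBot' {a : ℝ} (ha : 0 < a) :
    Tendsto (fun s => Real.exp (a * s)) atBot (nhds 0) :=
  Real.tendsto_exp_atBot.comp (tendsto_id.const_mul_atBot ha)

lemma hasDerivAt_exp_mul (a x : ℝ) :
    HasDerivAt (fun s => Real.exp (a * s)) (Real.exp (a * x) * a) x := by
  simpa using ((hasDerivAt_id x).const_mul a).exp

lemma integrableOn_Iic_of_antideriv {f F : ℝ → ℝ} {b : ℝ}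
    (hf : Continuous f) (h0 : ∀ x, x ≤ b → 0 ≤ f x)
    (hF : ∀ x, HasDerivAt F (f x) x)
    (hFnn : ∀ x, x ≤ b → 0 ≤ F x) :
    IntegrableOn f (Iic b) := by
  apply integrableOn_Iic_of_intervalIntegral_norm_bounded (F b) b
    (fun i : ℝ => (hf.integrableOn_Icc).mono_set Ioc_subset_Icc_self) tendsto_id
  filter_upwards [eventually_le_atBot b] with i hib
  show (∫ x in i..b, ‖f x‖) ≤ F b
  have h1 : ∫ x in i..b, ‖f x‖ = ∫ x in i..b, f x := by
    apply intervalIntegral.integral_congr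
    intro x hx
    rw [uIcc_of_le hib] at hx
    exact Real.norm_of_nonneg (h0 x hx.2)
  rw [h1, intervalIntegral.integral_eq_sub_of_hasDerivAt (fun x _ => hF x)
    (hf.intervalIntegrable _ _)]
  have := hFnn i hib
  linarith

lemma integrableOn_exp_mul_Iic {a : ℝ} (ha : 0 < a) (b : ℝ) :
    IntegrableOn (fun s => Real.exp (a * s)) (Iic b) := by
  apply integrableOn_Iic_of_antideriv (F := fun s => Real.exp (a * s) / a)
    (by fun_prop) (fun x _ => (Real.exp_pos _).le)
    (fun x => ?_) (fun x _ => by positivity)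
  have h := (hasDerivAt_exp_mul a x).div_const a
  simpa [mul_div_assoc, div_self ha.ne'] using h


lemma integral_exp_mul_Iic {a : ℝ} (ha : 0 < a) (b : ℝ) :
    ∫ s in Iic b, Real.exp (a * s) = Real.exp (a * b) / a := by
  have h := integral_Iic_of_hasDerivAt_of_tendsto'
    (f := fun s => Real.exp (a * s) / a) (f' := fun s => Real.exp (a * s)) (a := b)
    (m := 0) (fun x _ => by simpa [mul_div_assoc, div_self ha.ne']
      using (hasDerivAt_exp_mul a x).div_const a)
    (integrableOn_exp_mul_Iic ha b)
    (by simpa using (tendsto_exp_mul_atBot' ha).div_const a)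
  simpa using h

lemma tendsto_mul_exp_mul_atBot {a : ℝ} (ha : 0 < a) :
    Tendsto (fun s : ℝ => s * Real.exp (a * s)) atBot (nhds 0) := by
  have h1 : Tendsto (fun s : ℝ => a * -s) atBot atTop := by
    exact (tendsto_neg_atBot_atTop).const_mul_atTop ha
  have h2 : Tendsto (fun s : ℝ => (a * -s) * Real.exp (-(a * -s))) atBot (nhds 0) := by
    have := (Real.tendsto_pow_mul_exp_neg_atTop_nhds_zero 1).comp h1
    apply this.congr
    intro s
    simp [Function.comp]
  have h3 : Tendsto (fun s : ℝ => -(1/a) * ((a * -s) * Real.exp (-(a * -s)))) atBot (nhds 0) := by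
    simpa using h2.const_mul (-(1/a))
  apply h3.congr
  intro s
  field_simp

lemma integral_one_sub_exp_Iic {a : ℝ} (ha : 0 < a) {b : ℝ} (hb : b ≤ 0) :
    ∫ s in Iic b, (1 - s) * Real.exp (a * s)
      = Real.exp (a * b) * ((1 - b) / a + 1 / a ^ 2) := by
  have hF : ∀ x : ℝ, HasDerivAt (fun s => Real.exp (a * s) * ((1 - s) / a + 1 / a ^ 2))
      ((1 - x) * Real.exp (a * x)) x := by
    intro x
    have h := (hasDerivAt_exp_mul a x).mul
      (((hasDerivAt_id x).const_sub 1).div_const a |>.add_const (1 / a ^ 2))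
    refine h.congr_deriv ?_
    simp only [id_eq]
    field_simp
    ring
  have hint : IntegrableOn (fun s => (1 - s) * Real.exp (a * s)) (Iic b) := by
    apply integrableOn_Iic_of_antideriv (F := fun s => Real.exp (a * s) * ((1 - s) / a + 1 / a ^ 2))
      (by fun_prop) (fun x hx => by nlinarith [Real.exp_pos (a * x)]) hF
      (fun x hx => by
        have hx0 : x ≤ 0 := hx.trans hb
        have h1x : (0:ℝ) < 1 - x := by linarith
        have : (0:ℝ) < (1 - x) / a + 1 / a ^ 2 := by positivity
        positivity)
  have htend : Tendsto (fun s => Real.exp (a * s) * ((1 - s) / a + 1 / a ^ 2)) atBot (nhds 0) := by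
    have h1 := (tendsto_exp_mul_atBot' ha).const_mul (1 / a + 1 / a ^ 2)
    have h2 := (tendsto_mul_exp_mul_atBot ha).const_mul (1 / a)
    have h := h1.sub h2
    simp only [mul_zero, sub_zero] at h
    apply h.congr
    intro s
    field_simp
    ring
  have h := integral_Iic_of_hasDerivAt_of_tendsto' (fun x _ => hF x) hint htend
  simpa using h

lemma hasDerivAt_integral_Iic {f : ℝ → ℝ} (hf : Continuous f)
    (hint : ∀ b, IntegrableOn f (Iic b)) (t : ℝ) :
    HasDerivAt (fun x => ∫ s in Iic x, f s) (f t) t := by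
  have key : ∀ x, (∫ s in Iic x, f s) = (∫ s in Iic (t-1), f s) + ∫ s in (t-1)..x, f s := by
    intro x
    rw [← intervalIntegral.integral_Iic_sub_Iic (hint (t-1)) (hint x)]
    ring
  have hd : HasDerivAt (fun x => (∫ s in Iic (t-1), f s) + ∫ s in (t-1)..x, f s) (f t) t := by
    apply HasDerivAt.const_add
    exact intervalIntegral.integral_hasDerivAt_right (hf.intervalIntegrable _ _)
      (hf.stronglyMeasurableAtFilter _ _) hf.continuousAt
  exact hd.congr_of_eventuallyEq (Eventually.of_forall key)


noncomputable def mfun (V : ℝ → ℝ) (s : ℝ) : ℝ := (1 + |s|) ^ 2 * |V s|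

noncomputable def Mfun (V : ℝ → ℝ) (t : ℝ) : ℝ := ∫ s in Iic t, mfun V s

noncomputable def useq (V : ℝ → ℝ) : ℕ → ℝ → ℝ
  | 0 => fun t => -t
  | n + 1 => fun t => -∫ s in Iic t, (t - s) * (V s * useq V n s)

noncomputable def wsol (V : ℝ → ℝ) (t : ℝ) : ℝ := ∑' n, useq V n t

noncomputable def Dconst (eta t0 : ℝ) : ℝ :=
  (1 + |t0|) ^ 2 * Real.exp (eta * |t0|) + 2 + 32 / eta ^ 2

lemma exp_hasSum (x : ℝ) : HasSum (fun n : ℕ => x ^ n / n.factorial) (Real.exp x) := by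
  rw [Real.exp_eq_exp_ℝ]
  exact NormedSpace.expSeries_div_hasSum_exp (𝔸 := ℝ) x

section Main

variable {eta c t0 : ℝ} {V : ℝ → ℝ}

lemma Dconst_pos (heta : 0 < eta) : 0 < Dconst eta t0 := by
  unfold Dconst; positivity

lemma mfun_nonneg (V : ℝ → ℝ) (s : ℝ) : 0 ≤ mfun V s := by
  unfold mfun; positivity

lemma mfun_cont (hcont : Continuous V) : Continuous (mfun V) := by
  unfold mfun; fun_prop

lemma key_poly (heta : 0 < eta) :
    ∀ s ≤ t0, (1 + |s|) ^ 2 ≤ Dconst eta t0 * Real.exp (-(eta / 2) * s) := by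
  intro s hs
  rcases le_or_gt s 0 with h0 | h0
  · have habs : |s| = -s := abs_of_nonpos h0
    have hy : 0 ≤ -(eta / 2) * s := by nlinarith
    have he1 : (1:ℝ) ≤ Real.exp (-(eta / 2) * s) := Real.one_le_exp hy
    have he2 : (-(eta / 2) * s / 2) ^ 2 ≤ Real.exp (-(eta / 2) * s) := by
      have h3 : -(eta / 2) * s / 2 + 1 ≤ Real.exp (-(eta / 2) * s / 2) := by
        have := Real.add_one_le_exp (-(eta / 2) * s / 2)
        linarith
      have h4 : Real.exp (-(eta / 2) * s) = Real.exp (-(eta / 2) * s / 2) ^ 2 := by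
        rw [← Real.exp_nat_mul]; ring_nf
      rw [h4]
      have h5 : 0 ≤ -(eta / 2) * s / 2 := by positivity
      nlinarith [Real.exp_pos (-(eta / 2) * s / 2)]
    have hD2 : 2 + 32 / eta ^ 2 ≤ Dconst eta t0 := by
      unfold Dconst
      have : 0 ≤ (1 + |t0|) ^ 2 * Real.exp (eta * |t0|) := by positivity
      linarith
    have key : (1 + |s|) ^ 2 ≤ (2 + 32 / eta ^ 2) * Real.exp (-(eta / 2) * s) := by
      rw [habs]
      have h2s : (1 + -s) ^ 2 ≤ 2 + 2 * s ^ 2 := by nlinarith [sq_nonneg (1 + s)]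
      have h6 : 2 * s ^ 2 ≤ 32 / eta ^ 2 * Real.exp (-(eta / 2) * s) := by
        have h7 : (-(eta / 2) * s / 2) ^ 2 = eta ^ 2 * s ^ 2 / 16 := by ring
        rw [h7] at he2
        have h8 : 2 * s ^ 2 = 32 / eta ^ 2 * (eta ^ 2 * s ^ 2 / 16) := by
          field_simp
          ring
        rw [h8]
        have : 0 ≤ 32 / eta ^ 2 := by positivity
        exact mul_le_mul_of_nonneg_left he2 this
      nlinarith
    calc (1 + |s|) ^ 2 ≤ (2 + 32 / eta ^ 2) * Real.exp (-(eta / 2) * s) := key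
      _ ≤ Dconst eta t0 * Real.exp (-(eta / 2) * s) := by
          have := Real.exp_pos (-(eta / 2) * s)
          nlinarith
  · have habs : |s| = s := abs_of_nonneg h0.le
    have ht0 : 0 < t0 := lt_of_lt_of_le h0 hs
    have habs0 : |t0| = t0 := abs_of_nonneg ht0.le
    have h1 : (1 + |s|) ^ 2 ≤ (1 + |t0|) ^ 2 := by
      rw [habs, habs0]; nlinarith
    have h2 : (1:ℝ) ≤ Real.exp (eta * |t0|) * Real.exp (-(eta / 2) * s) := by
      rw [← Real.exp_add]
      apply Real.one_le_exp
      rw [habs0]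
      nlinarith
    have h3 : (1 + |t0|) ^ 2 ≤ (1 + |t0|) ^ 2 * Real.exp (eta * |t0|) * Real.exp (-(eta / 2) * s) := by
      nlinarith [sq_nonneg (1 + |t0|)]
    have h4 : (1 + |t0|) ^ 2 * Real.exp (eta * |t0|) ≤ Dconst eta t0 := by
      unfold Dconst
      have : 0 ≤ 32 / eta ^ 2 := by positivity
      linarith
    calc (1 + |s|) ^ 2 ≤ (1 + |t0|) ^ 2 := h1
      _ ≤ (1 + |t0|) ^ 2 * Real.exp (eta * |t0|) * Real.exp (-(eta / 2) * s) := h3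
      _ ≤ Dconst eta t0 * Real.exp (-(eta / 2) * s) := by
          have := Real.exp_pos (-(eta / 2) * s)
          nlinarith

lemma mfun_bound (heta : 0 < eta)
    (hVb : ∀ t < t0, |V t| ≤ c * Real.exp (eta * t)) :
    ∀ s < t0, mfun V s ≤ c * Dconst eta t0 * Real.exp (eta / 2 * s) := by
  intro s hs
  have h1 := key_poly (t0 := t0) heta s hs.le
  have h2 := hVb s hs
  have h3 : mfun V s ≤ (Dconst eta t0 * Real.exp (-(eta / 2) * s)) * (c * Real.exp (eta * s)) := by
    unfold mfun
    exact mul_le_mul h1 h2 (abs_nonneg _) (mul_nonneg (Dconst_pos heta).le (Real.exp_pos _).le)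
  calc mfun V s ≤ _ := h3
    _ = c * Dconst eta t0 * (Real.exp (-(eta / 2) * s) * Real.exp (eta * s)) := by ring
    _ = c * Dconst eta t0 * Real.exp (eta / 2 * s) := by
        rw [← Real.exp_add]
        ring_nf

lemma ae_lt_t0 (b : ℝ) : ∀ᵐ s ∂(volume.restrict (Iic b)), s ≠ t0 := by
  apply ae_restrict_of_ae
  rw [ae_iff]
  simp [Real.volume_singleton]

lemma mfun_int (heta : 0 < eta) (hcont : Continuous V)
    (hVb : ∀ t < t0, |V t| ≤ c * Real.exp (eta * t)) (b : ℝ) :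
    IntegrableOn (mfun V) (Iic b) := by
  have hc0 : 0 ≤ c := by
    have := (abs_nonneg (V (t0 - 1))).trans (hVb (t0 - 1) (by linarith))
    nlinarith [Real.exp_pos (eta * (t0 - 1))]
  have base : ∀ b' ≤ t0, IntegrableOn (mfun V) (Iic b') := by
    intro b' hb'
    apply Integrable.mono' (((integrableOn_exp_mul_Iic (half_pos heta) b')).const_mul
      (c * Dconst eta t0)) (mfun_cont hcont).aestronglyMeasurable
    filter_upwards [ae_lt_t0 (t0 := t0) b', ae_restrict_mem measurableSet_Iic] with s hs1 hs2
    have hslt : s < t0 := lt_of_le_of_ne (le_trans hs2 hb') hs1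
    rw [Real.norm_of_nonneg (mfun_nonneg V s)]
    have := mfun_bound (c := c) heta hVb s hslt
    calc mfun V s ≤ c * Dconst eta t0 * Real.exp (eta / 2 * s) := this
      _ = c * Dconst eta t0 * Real.exp (eta / 2 * s) := rfl
  rcases le_or_gt b t0 with hb | hb
  · exact base b hb
  · have h1 := base t0 le_rfl
    have h2 : IntegrableOn (mfun V) (Icc t0 b) := (mfun_cont hcont).integrableOn_Icc
    apply (h1.union h2).mono_set
    intro x hx
    rcases le_or_gt x t0 with h | h
    · exact Or.inl h
    · exact Or.inr ⟨h.le, hx⟩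


variable (heta : 0 < eta) (hcont : Continuous V)
    (hVb : ∀ t < t0, |V t| ≤ c * Real.exp (eta * t))

include heta hcont hVb

lemma Mfun_nonneg (t : ℝ) : 0 ≤ Mfun V t :=
  setIntegral_nonneg measurableSet_Iic fun s _ => mfun_nonneg V s

lemma Mfun_mono : Monotone (Mfun V) := by
  intro a b hab
  apply setIntegral_mono_set (mfun_int heta hcont hVb b)
    (Eventually.of_forall fun s => mfun_nonneg V s)
    (HasSubset.Subset.eventuallyLE (Iic_subset_Iic.mpr hab))

lemma Mfun_hasDerivAt (t : ℝ) : HasDerivAt (Mfun V) (mfun V t) t :=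
  hasDerivAt_integral_Iic (mfun_cont hcont) (mfun_int heta hcont hVb) t

lemma Mfun_cont : Continuous (Mfun V) :=
  continuous_iff_continuousAt.2 fun t => (Mfun_hasDerivAt heta hcont hVb t).continuousAt

lemma Mfun_bound : ∀ t ≤ t0, Mfun V t ≤ c * Dconst eta t0 * (2 / eta) * Real.exp (eta / 2 * t) := by
  intro t ht
  have h1 : Mfun V t ≤ ∫ s in Iic t, c * Dconst eta t0 * Real.exp (eta / 2 * s) := by
    apply integral_mono_ae (mfun_int heta hcont hVb t)
      (((integrableOn_exp_mul_Iic (half_pos heta) t)).const_mul (c * Dconst eta t0))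
    filter_upwards [ae_lt_t0 (t0 := t0) t, ae_restrict_mem measurableSet_Iic] with s hs1 hs2
    exact mfun_bound heta hVb s (lt_of_le_of_ne (le_trans hs2 ht) hs1)
  rw [integral_const_mul] at h1
  have h2 : ∫ s in Iic t, Real.exp (eta / 2 * s) = Real.exp (eta / 2 * t) / (eta / 2) :=
    integral_exp_mul_Iic (half_pos heta) t
  rw [h2] at h1
  calc Mfun V t ≤ c * Dconst eta t0 * (Real.exp (eta / 2 * t) / (eta / 2)) := h1
    _ = c * Dconst eta t0 * (2 / eta) * Real.exp (eta / 2 * t) := by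
        field_simp

lemma Mfun_tendsto0 : Tendsto (Mfun V) atBot (nhds 0) := by
  have hb : Tendsto (fun t => c * Dconst eta t0 * (2 / eta) * Real.exp (eta / 2 * t))
      atBot (nhds 0) := by
    simpa using (tendsto_exp_mul_atBot' (half_pos heta)).const_mul (c * Dconst eta t0 * (2 / eta))
  apply tendsto_of_tendsto_of_tendsto_of_le_of_le' tendsto_const_nhds hb
  · exact Eventually.of_forall (Mfun_nonneg heta hcont hVb)
  · filter_upwards [eventually_le_atBot t0] with t ht
    exact Mfun_bound heta hcont hVb t ht

lemma m_Mpow_int (n : ℕ) (b : ℝ) :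
    IntegrableOn (fun s => mfun V s * Mfun V s ^ n) (Iic b) := by
  apply Integrable.mono' ((mfun_int heta hcont hVb b).const_mul (Mfun V b ^ n))
    (((mfun_cont hcont).mul ((Mfun_cont heta hcont hVb).pow n)).aestronglyMeasurable)
  filter_upwards [ae_restrict_mem measurableSet_Iic] with s hs
  show ‖mfun V s * Mfun V s ^ n‖ ≤ _
  rw [Real.norm_of_nonneg (mul_nonneg (mfun_nonneg V s) (pow_nonneg (Mfun_nonneg heta hcont hVb s) n))]
  rw [mul_comm (Mfun V b ^ n)]
  apply mul_le_mul_of_nonneg_left _ (mfun_nonneg V s)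
  exact pow_le_pow_left₀ (Mfun_nonneg heta hcont hVb s) (Mfun_mono heta hcont hVb hs) n

lemma integral_m_Mpow (n : ℕ) (t : ℝ) :
    ∫ s in Iic t, mfun V s * Mfun V s ^ n = Mfun V t ^ (n + 1) / (n + 1) := by
  have h := integral_Iic_of_hasDerivAt_of_tendsto'
    (f := fun s => Mfun V s ^ (n + 1) / (n + 1))
    (f' := fun s => mfun V s * Mfun V s ^ n) (a := t) (m := 0)
    (fun x _ => by
      have h1 := ((Mfun_hasDerivAt heta hcont hVb x).pow (n + 1)).div_const ((n : ℝ) + 1)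
      refine h1.congr_deriv ?_
      push_cast
      field_simp)
    (m_Mpow_int heta hcont hVb n t)
    (by
      have h2 := ((Mfun_tendsto0 heta hcont hVb).pow (n + 1)).div_const ((n : ℝ) + 1)
      simpa using h2)
  simpa using h


lemma integrableOn_Vu {u : ℝ → ℝ} (hu : Continuous u) {b K : ℝ}
    (hub : ∀ s, s ≤ b → |u s| ≤ (1 + |s|) * K) :
    IntegrableOn (fun s => V s * u s) (Iic b) ∧
      IntegrableOn (fun s => s * (V s * u s)) (Iic b) := by
  have hK : 0 ≤ K := by
    have h := (abs_nonneg (u b)).trans (hub b le_rfl)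
    nlinarith [abs_nonneg b]
  have hbnd : ∀ s, s ≤ b → |V s| * |u s| ≤ K * mfun V s ∧
      |s| * (|V s| * |u s|) ≤ K * mfun V s := by
    intro s hs
    have hB : (1:ℝ) ≤ 1 + |s| := by simp [abs_nonneg]
    have h1 : |u s| ≤ (1 + |s|) * K := hub s hs
    have h2 : |V s| * |u s| ≤ |V s| * ((1 + |s|) * K) :=
      mul_le_mul_of_nonneg_left h1 (abs_nonneg _)
    have hVnn := abs_nonneg (V s)
    have hsnn := abs_nonneg s
    constructor
    · calc |V s| * |u s| ≤ |V s| * ((1 + |s|) * K) := h2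
        _ ≤ K * mfun V s := by
            unfold mfun
            nlinarith [mul_nonneg (mul_nonneg hK hVnn)
              (mul_nonneg (le_trans zero_le_one hB) hsnn)]
    · calc |s| * (|V s| * |u s|) ≤ |s| * (|V s| * ((1 + |s|) * K)) :=
          mul_le_mul_of_nonneg_left h2 hsnn
        _ ≤ K * mfun V s := by
            unfold mfun
            nlinarith [mul_nonneg (mul_nonneg hK hVnn) (le_trans zero_le_one hB),
              mul_nonneg (mul_nonneg hK hVnn)
                (mul_nonneg (le_trans zero_le_one hB) hsnn)]
  constructor
  · apply Integrable.mono' ((mfun_int heta hcont hVb b).const_mul K)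
      (hcont.mul hu).aestronglyMeasurable
    filter_upwards [ae_restrict_mem measurableSet_Iic] with s hs
    show ‖V s * u s‖ ≤ _
    rw [Real.norm_eq_abs, abs_mul]
    exact (hbnd s hs).1
  · apply Integrable.mono' ((mfun_int heta hcont hVb b).const_mul K)
      ((continuous_id.mul (hcont.mul hu)).aestronglyMeasurable)
    filter_upwards [ae_restrict_mem measurableSet_Iic] with s hs
    show ‖s * (V s * u s)‖ ≤ _
    rw [Real.norm_eq_abs, abs_mul, abs_mul]
    exact (hbnd s hs).2

lemma useq_prop (n : ℕ) :
    Continuous (useq V n) ∧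
      ∀ t, |useq V n t| ≤ (1 + |t|) * (Mfun V t ^ n / n.factorial) := by
  induction n with
  | zero =>
    constructor
    · show Continuous (fun t : ℝ => -t)
      fun_prop
    · intro t
      show |(-t)| ≤ (1 + |t|) * (Mfun V t ^ 0 / Nat.factorial 0)
      simp [abs_neg]
  | succ n ih =>
    obtain ⟨hcn, hbn⟩ := ih
    have hints : ∀ b : ℝ, IntegrableOn (fun s => V s * useq V n s) (Iic b) ∧
        IntegrableOn (fun s => s * (V s * useq V n s)) (Iic b) := by
      intro b
      apply integrableOn_Vu heta hcont hVb hcn (K := Mfun V b ^ n / n.factorial)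
      intro s hs
      calc |useq V n s| ≤ (1 + |s|) * (Mfun V s ^ n / n.factorial) := hbn s
        _ ≤ (1 + |s|) * (Mfun V b ^ n / n.factorial) := by
            have h1 : Mfun V s ^ n ≤ Mfun V b ^ n :=
              pow_le_pow_left₀ (Mfun_nonneg heta hcont hVb s)
                (Mfun_mono heta hcont hVb hs) n
            have h2 : (0:ℝ) ≤ 1 + |s| := by positivity
            have h3 : (0:ℝ) < n.factorial := by
              exact_mod_cast n.factorial_pos
            apply mul_le_mul_of_nonneg_left _ h2
            exact div_le_div_of_nonneg_right h1 h3.le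
    have hrepr : ∀ t : ℝ, useq V (n + 1) t
        = -(t * (∫ s in Iic t, V s * useq V n s) - ∫ s in Iic t, s * (V s * useq V n s)) := by
      intro t
      show -∫ s in Iic t, (t - s) * (V s * useq V n s) = _
      congr 1
      have h1 : (fun s => (t - s) * (V s * useq V n s))
          = fun s => t * (V s * useq V n s) - s * (V s * useq V n s) := by
        funext s; ring
      rw [h1, integral_sub ((hints t).1.const_mul t) (hints t).2, integral_const_mul]
    constructor
    · have hG : Continuous (fun t => ∫ s in Iic t, V s * useq V n s) :=
        continuous_iff_continuousAt.2 fun t =>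
          (hasDerivAt_integral_Iic (hcont.mul hcn) (fun b => (hints b).1) t).continuousAt
      have hH : Continuous (fun t => ∫ s in Iic t, s * (V s * useq V n s)) :=
        continuous_iff_continuousAt.2 fun t =>
          (hasDerivAt_integral_Iic (continuous_id.mul (hcont.mul hcn))
            (fun b => (hints b).2) t).continuousAt
      have hfe : useq V (n+1) = fun t => -(t * (∫ s in Iic t, V s * useq V n s)
          - ∫ s in Iic t, s * (V s * useq V n s)) := funext hrepr
      rw [hfe]
      exact ((continuous_id.mul hG).sub hH).neg
    · intro t
      have habs : |useq V (n+1) t| = ‖∫ s in Iic t, (t - s) * (V s * useq V n s)‖ := by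
        show |(-∫ s in Iic t, (t - s) * (V s * useq V n s))| = _
        rw [abs_neg, Real.norm_eq_abs]
      rw [habs]
      have hgint : Integrable (fun s => (1 + |t|) / n.factorial * (mfun V s * Mfun V s ^ n))
          (volume.restrict (Iic t)) := (m_Mpow_int heta hcont hVb n t).const_mul _
      have hae : ∀ᵐ s ∂(volume.restrict (Iic t)), ‖(t - s) * (V s * useq V n s)‖
          ≤ (1 + |t|) / n.factorial * (mfun V s * Mfun V s ^ n) := by
        filter_upwards [ae_restrict_mem measurableSet_Iic] with s hs
        have hs' : s ≤ t := hs
        have h1 : ‖(t - s) * (V s * useq V n s)‖ = (t - s) * (|V s| * |useq V n s|) := by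
          rw [Real.norm_eq_abs, abs_mul, abs_mul, abs_of_nonneg (by linarith : (0:ℝ) ≤ t - s)]
        rw [h1]
        have hts : t - s ≤ (1 + |t|) * (1 + |s|) := by
          have ht1 := abs_nonneg t
          have hs1 := abs_nonneg s
          have h2 : t - s ≤ |t| + |s| := by
            have := le_abs_self t
            have := neg_abs_le s
            linarith
          nlinarith
        have h3 : |V s| * |useq V n s|
            ≤ |V s| * ((1 + |s|) * (Mfun V s ^ n / n.factorial)) :=
          mul_le_mul_of_nonneg_left (hbn s) (abs_nonneg _)
        calc (t - s) * (|V s| * |useq V n s|)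
            ≤ ((1 + |t|) * (1 + |s|)) * (|V s| * ((1 + |s|) * (Mfun V s ^ n / n.factorial))) := by
              apply mul_le_mul hts h3 (by positivity) (by positivity)
          _ = (1 + |t|) / n.factorial * (((1 + |s|) ^ 2 * |V s|) * Mfun V s ^ n) := by
              have h4 : ((n.factorial : ℝ)) ≠ 0 := by exact_mod_cast n.factorial_pos.ne'
              field_simp
          _ = (1 + |t|) / n.factorial * (mfun V s * Mfun V s ^ n) := by rw [mfun]
      calc ‖∫ s in Iic t, (t - s) * (V s * useq V n s)‖
          ≤ ∫ s in Iic t, (1 + |t|) / n.factorial * (mfun V s * Mfun V s ^ n) :=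
            norm_integral_le_of_norm_le hgint hae
        _ = (1 + |t|) / n.factorial * (Mfun V t ^ (n+1) / (n+1)) := by
            rw [integral_const_mul, integral_m_Mpow heta hcont hVb n t]
        _ = (1 + |t|) * (Mfun V t ^ (n+1) / (n+1).factorial) := by
            rw [Nat.factorial_succ]
            have h4 : ((n.factorial : ℝ)) ≠ 0 := by exact_mod_cast n.factorial_pos.ne'
            have h5 : ((n:ℝ) + 1) ≠ 0 := by positivity
            push_cast
            have halg : ∀ A B k f : ℝ, f ≠ 0 → k ≠ 0 →
                A / f * (B / k) = A * (B / (k * f)) := by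
              intros A B k f hf hk
              field_simp
            exact halg _ _ _ _ h4 h5


lemma summable_useq (t : ℝ) : Summable (fun n => useq V n t) :=
  Summable.of_norm_bounded
    ((Real.summable_pow_div_factorial (Mfun V t)).mul_left (1 + |t|))
    (fun n => by
      rw [Real.norm_eq_abs]
      exact (useq_prop heta hcont hVb n).2 t)

lemma wsol_hasSum (t : ℝ) : HasSum (fun n => useq V n t) (wsol V t) :=
  (summable_useq heta hcont hVb t).hasSum

lemma wsol_bound (t : ℝ) : |wsol V t| ≤ (1 + |t|) * Real.exp (Mfun V t) := by
  have h := tsum_of_norm_bounded ((exp_hasSum (Mfun V t)).mul_left (1 + |t|))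
    (fun n : ℕ => by
      rw [Real.norm_eq_abs]
      exact (useq_prop heta hcont hVb n).2 t)
  rw [← Real.norm_eq_abs]
  exact h

lemma wsol_cont : Continuous (wsol V) := by
  rw [continuous_iff_continuousAt]
  intro x
  set R := |x| + 1 with hR
  have hcR : ContinuousOn (wsol V) (Ioo (-R) R) := by
    apply continuousOn_tsum (fun n => (useq_prop heta hcont hVb n).1.continuousOn)
      ((Real.summable_pow_div_factorial (Mfun V R)).mul_left (1 + R))
    intro n s hs
    rw [Real.norm_eq_abs]
    obtain ⟨hs1, hs2⟩ := hs
    have hsR : |s| ≤ R := by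
      rw [abs_le]
      constructor <;> linarith
    have hsR' : s ≤ R := le_trans (le_abs_self s) hsR
    have h1 : Mfun V s ^ n ≤ Mfun V R ^ n :=
      pow_le_pow_left₀ (Mfun_nonneg heta hcont hVb s) (Mfun_mono heta hcont hVb hsR') n
    have h3 : (0:ℝ) < n.factorial := by exact_mod_cast n.factorial_pos
    calc |useq V n s| ≤ (1 + |s|) * (Mfun V s ^ n / n.factorial) :=
          (useq_prop heta hcont hVb n).2 s
      _ ≤ (1 + R) * (Mfun V R ^ n / n.factorial) := by
          apply mul_le_mul (by linarith) (div_le_div_of_nonneg_right h1 h3.le)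
            (div_nonneg (pow_nonneg (Mfun_nonneg heta hcont hVb s) n) h3.le)
            (by rw [hR]; positivity)
  exact hcR.continuousAt (Ioo_mem_nhds (by linarith [neg_abs_le x]) (by linarith [le_abs_self x]))

lemma hint_Vw (b : ℝ) : IntegrableOn (fun s => V s * wsol V s) (Iic b) ∧
    IntegrableOn (fun s => s * (V s * wsol V s)) (Iic b) := by
  apply integrableOn_Vu heta hcont hVb (wsol_cont heta hcont hVb)
    (K := Real.exp (Mfun V b))
  intro s hs
  calc |wsol V s| ≤ (1 + |s|) * Real.exp (Mfun V s) := wsol_bound heta hcont hVb s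
    _ ≤ (1 + |s|) * Real.exp (Mfun V b) := by
        apply mul_le_mul_of_nonneg_left
          (Real.exp_le_exp.mpr (Mfun_mono heta hcont hVb hs)) (by positivity)


lemma hint_Vu (n : ℕ) (b : ℝ) : IntegrableOn (fun s => V s * useq V n s) (Iic b) ∧
    IntegrableOn (fun s => s * (V s * useq V n s)) (Iic b) := by
  apply integrableOn_Vu heta hcont hVb (useq_prop heta hcont hVb n).1
    (K := Mfun V b ^ n / n.factorial)
  intro s hs
  have h1 : Mfun V s ^ n ≤ Mfun V b ^ n :=
    pow_le_pow_left₀ (Mfun_nonneg heta hcont hVb s) (Mfun_mono heta hcont hVb hs) n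
  have h3 : (0:ℝ) < n.factorial := by exact_mod_cast n.factorial_pos
  calc |useq V n s| ≤ (1 + |s|) * (Mfun V s ^ n / n.factorial) :=
        (useq_prop heta hcont hVb n).2 s
    _ ≤ (1 + |s|) * (Mfun V b ^ n / n.factorial) :=
        mul_le_mul_of_nonneg_left (div_le_div_of_nonneg_right h1 h3.le) (by positivity)

lemma hint_tsu (n : ℕ) (t : ℝ) :
    IntegrableOn (fun s => (t - s) * (V s * useq V n s)) (Iic t) := by
  have h : (fun s => (t - s) * (V s * useq V n s))
      = fun s => t * (V s * useq V n s) - s * (V s * useq V n s) := funext fun s => by ring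
  rw [h]
  exact ((hint_Vu heta hcont hVb n t).1.const_mul t).sub (hint_Vu heta hcont hVb n t).2

lemma split_integral {u : ℝ → ℝ} (t : ℝ)
    (h1 : IntegrableOn (fun s => V s * u s) (Iic t))
    (h2 : IntegrableOn (fun s => s * (V s * u s)) (Iic t)) :
    ∫ s in Iic t, (t - s) * (V s * u s)
      = t * (∫ s in Iic t, V s * u s) - ∫ s in Iic t, s * (V s * u s) := by
  have h : (fun s => (t - s) * (V s * u s))
      = fun s => t * (V s * u s) - s * (V s * u s) := funext fun s => by ring
  rw [h, integral_sub (h1.const_mul t) h2, integral_const_mul]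

lemma tsu_norm_bound (n : ℕ) (t : ℝ) :
    ∫ s in Iic t, ‖(t - s) * (V s * useq V n s)‖
      ≤ (1 + |t|) * (Mfun V t ^ (n+1) / (n+1).factorial) := by
  have hgint : Integrable (fun s => (1 + |t|) / n.factorial * (mfun V s * Mfun V s ^ n))
      (volume.restrict (Iic t)) := (m_Mpow_int heta hcont hVb n t).const_mul _
  have hae : ∀ᵐ s ∂(volume.restrict (Iic t)), ‖(t - s) * (V s * useq V n s)‖
      ≤ (1 + |t|) / n.factorial * (mfun V s * Mfun V s ^ n) := by
    filter_upwards [ae_restrict_mem measurableSet_Iic] with s hs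
    have hs' : s ≤ t := hs
    have h1 : ‖(t - s) * (V s * useq V n s)‖ = (t - s) * (|V s| * |useq V n s|) := by
      rw [Real.norm_eq_abs, abs_mul, abs_mul, abs_of_nonneg (by linarith : (0:ℝ) ≤ t - s)]
    rw [h1]
    have hts : t - s ≤ (1 + |t|) * (1 + |s|) := by
      have ht1 := abs_nonneg t
      have hs1 := abs_nonneg s
      have h2 : t - s ≤ |t| + |s| := by
        have := le_abs_self t
        have := neg_abs_le s
        linarith
      nlinarith
    have h3 : |V s| * |useq V n s|
        ≤ |V s| * ((1 + |s|) * (Mfun V s ^ n / n.factorial)) :=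
      mul_le_mul_of_nonneg_left ((useq_prop heta hcont hVb n).2 s) (abs_nonneg _)
    calc (t - s) * (|V s| * |useq V n s|)
        ≤ ((1 + |t|) * (1 + |s|)) * (|V s| * ((1 + |s|) * (Mfun V s ^ n / n.factorial))) := by
          apply mul_le_mul hts h3 (by positivity) (by positivity)
      _ = (1 + |t|) / n.factorial * (((1 + |s|) ^ 2 * |V s|) * Mfun V s ^ n) := by
          have h4 : ((n.factorial : ℝ)) ≠ 0 := by exact_mod_cast n.factorial_pos.ne'
          field_simp
      _ = (1 + |t|) / n.factorial * (mfun V s * Mfun V s ^ n) := by rw [mfun]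
  calc ∫ s in Iic t, ‖(t - s) * (V s * useq V n s)‖
      ≤ ∫ s in Iic t, (1 + |t|) / n.factorial * (mfun V s * Mfun V s ^ n) :=
        integral_mono_ae (hint_tsu heta hcont hVb n t).norm hgint hae
    _ = (1 + |t|) / n.factorial * (Mfun V t ^ (n+1) / (n+1)) := by
        rw [integral_const_mul, integral_m_Mpow heta hcont hVb n t]
    _ = (1 + |t|) * (Mfun V t ^ (n+1) / (n+1).factorial) := by
        rw [Nat.factorial_succ]
        have h4 : ((n.factorial : ℝ)) ≠ 0 := by exact_mod_cast n.factorial_pos.ne'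
        have h5 : ((n:ℝ) + 1) ≠ 0 := by positivity
        push_cast
        have halg : ∀ A B k f : ℝ, f ≠ 0 → k ≠ 0 →
            A / f * (B / k) = A * (B / (k * f)) := by
          intros A B k f hf hk
          field_simp
        exact halg _ _ _ _ h4 h5

lemma key_identity (t : ℝ) :
    t * (∫ s in Iic t, V s * wsol V s) - (∫ s in Iic t, s * (V s * wsol V s))
      = -(wsol V t + t) := by
  have hF_int : ∀ n : ℕ, Integrable (fun s => (t - s) * (V s * useq V n s))
      (volume.restrict (Iic t)) := fun n => hint_tsu heta hcont hVb n t
  have hnorm_sum : Summable (fun n : ℕ => ∫ s in Iic t, ‖(t - s) * (V s * useq V n s)‖) := by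
    have hs1 : Summable (fun n : ℕ => (1 + |t|) * (Mfun V t ^ n / n.factorial)) :=
      (Real.summable_pow_div_factorial (Mfun V t)).mul_left (1 + |t|)
    have hs2 : Summable (fun n : ℕ => (1 + |t|) * (Mfun V t ^ (n+1) / (n+1).factorial)) := by
      exact_mod_cast hs1.comp_injective (add_left_injective 1)
    apply Summable.of_nonneg_of_le
      (fun n => integral_nonneg fun s => norm_nonneg _)
      (fun n => tsu_norm_bound heta hcont hVb n t) hs2
  have hhs := hasSum_integral_of_summable_integral_norm hF_int hnorm_sum
  have hptw : ∀ s : ℝ, (∑' n, (t - s) * (V s * useq V n s)) = (t - s) * (V s * wsol V s) := by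
    intro s
    calc (∑' n, (t - s) * (V s * useq V n s))
        = ∑' n, ((t - s) * V s) * useq V n s := by
          congr 1
          funext n
          ring
      _ = ((t - s) * V s) * wsol V s :=
          (((wsol_hasSum heta hcont hVb s)).mul_left ((t - s) * V s)).tsum_eq
      _ = (t - s) * (V s * wsol V s) := by ring
  have hint_eq : (∫ s in Iic t, ∑' n, (t - s) * (V s * useq V n s))
      = ∫ s in Iic t, (t - s) * (V s * wsol V s) :=
    integral_congr_ae (Eventually.of_forall hptw)
  rw [hint_eq] at hhs
  have hterm : (fun n : ℕ => ∫ s in Iic t, (t - s) * (V s * useq V n s))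
      = fun n => -(useq V (n+1) t) := by
    funext n
    show _ = -(-∫ s in Iic t, (t - s) * (V s * useq V n s))
    rw [neg_neg]
  rw [hterm] at hhs
  have h0 : HasSum (fun n => useq V (n+1) t) (wsol V t + t) := by
    have h := wsol_hasSum heta hcont hVb t
    rw [← hasSum_nat_add_iff' 1] at h
    have : wsol V t - ∑ i ∈ Finset.range 1, useq V i t = wsol V t + t := by
      simp [useq]
    rwa [this] at h
  have huniq := hhs.unique h0.neg
  rw [split_integral heta hcont hVb t (hint_Vw heta hcont hVb t).1
    (hint_Vw heta hcont hVb t).2] at huniq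
  exact huniq

lemma wsol_eq (t : ℝ) : wsol V t
    = -t - (t * (∫ s in Iic t, V s * wsol V s) - ∫ s in Iic t, s * (V s * wsol V s)) := by
  rw [key_identity heta hcont hVb t]
  ring

lemma wsol_plus_t (t : ℝ) : wsol V t + t = -∫ s in Iic t, (t - s) * (V s * wsol V s) := by
  rw [split_integral heta hcont hVb t (hint_Vw heta hcont hVb t).1
    (hint_Vw heta hcont hVb t).2, key_identity heta hcont hVb t]
  ring

lemma wsol_hasDerivAt (t : ℝ) :
    HasDerivAt (wsol V) (-1 - ∫ s in Iic t, V s * wsol V s) t := by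
  have hG := hasDerivAt_integral_Iic (hcont.mul (wsol_cont heta hcont hVb))
    (fun b => (hint_Vw heta hcont hVb b).1)
  have hH := hasDerivAt_integral_Iic (continuous_id.mul (hcont.mul (wsol_cont heta hcont hVb)))
    (fun b => (hint_Vw heta hcont hVb b).2)
  have hd := (((hasDerivAt_id t).neg).sub (((hasDerivAt_id t).mul (hG t)).sub (hH t)))
  have hd2 := hd.congr_of_eventuallyEq (Eventually.of_forall (wsol_eq heta hcont hVb))
  refine hd2.congr_deriv ?_
  simp


lemma wsol_deriv_eq : deriv (wsol V) = fun t => -1 - ∫ s in Iic t, V s * wsol V s :=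
  funext fun t => (wsol_hasDerivAt heta hcont hVb t).deriv

lemma wsol_deriv2 (t : ℝ) : HasDerivAt (deriv (wsol V)) (-(V t * wsol V t)) t := by
  rw [wsol_deriv_eq heta hcont hVb]
  have hG := hasDerivAt_integral_Iic (hcont.mul (wsol_cont heta hcont hVb))
    (fun b => (hint_Vw heta hcont hVb b).1)
  exact (hG t).const_sub (-1)

lemma wsol_contDiff : ContDiff ℝ 2 (wsol V) := by
  have h2 : (2 : WithTop ℕ∞) = 1 + 1 := by norm_num
  rw [h2]
  refine contDiff_succ_iff_deriv.mpr ⟨fun t => (wsol_hasDerivAt heta hcont hVb t).differentiableAt,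
    ?_, ?_⟩
  · intro h
    simp at h
  · refine contDiff_one_iff_deriv.mpr ⟨fun t => (wsol_deriv2 heta hcont hVb t).differentiableAt, ?_⟩
    have hde : deriv (deriv (wsol V)) = fun t => -(V t * wsol V t) :=
      funext fun t => (wsol_deriv2 heta hcont hVb t).deriv
    rw [hde]
    exact (hcont.mul (wsol_cont heta hcont hVb)).neg

end Main

end Stmt4Aux

open Stmt4Aux

/-- the case `λ = 0`: a solution behaving like `-t + O(1)`
as `t → -∞`. -/
theorem stmt4 (eta c t0 : ℝ) (heta : 0 < eta) (hc : 0 < c)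
    (V : ℝ → ℝ) (hV : ContDiff ℝ (⊤ : ℕ∞) V)
    (hVb : ∀ t < t0, |V t| ≤ c * Real.exp (eta * t)) :
    ∃ w : ℝ → ℝ, ContDiff ℝ 2 w ∧
      (∀ t : ℝ, deriv (deriv w) t + V t * w t = 0) ∧
      ∃ C : ℝ, 0 < C ∧
        ∀ t < min t0 (-1 : ℝ),
          |w t + t| ≤ C ∧ |deriv w t + 1| ≤ C * |t| * Real.exp (eta * t) := by
  have hcont : Continuous V := hV.continuous
  have hDp := Dconst_pos (t0 := t0) heta
  have hEp := Real.exp_pos (Mfun V t0)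
  set D := Dconst eta t0 with hD
  set E0 := Real.exp (Mfun V t0) with hE0
  refine ⟨wsol V, wsol_contDiff heta hcont hVb, ?_, ?_⟩
  · intro t
    rw [(wsol_deriv2 heta hcont hVb t).deriv]
    ring
  · refine ⟨8 * c * D * E0 / eta ^ 2 + 2 * c * E0 * (1 / eta + 1 / eta ^ 2) + 1, by positivity, ?_⟩
    intro t ht
    have ht0 : t < t0 := lt_of_lt_of_le ht (min_le_left _ _)
    have ht1 : t < -1 := lt_of_lt_of_le ht (min_le_right _ _)
    have htneg : t < 0 := by linarith
    have habs : |t| = -t := abs_of_neg htneg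
    have habs1 : (1 : ℝ) ≤ |t| := by rw [habs]; linarith
    -- the key smallness |t| * exp(eta/2 * t) ≤ 2/eta
    have hsmall : |t| * Real.exp (eta / 2 * t) ≤ 2 / eta := by
      have hkey : eta / 2 * (-t) ≤ Real.exp (eta / 2 * (-t)) := by
        have := Real.add_one_le_exp (eta / 2 * (-t))
        linarith
      have h3 : -t ≤ 2 / eta * Real.exp (eta / 2 * (-t)) := by
        calc -t = 2 / eta * (eta / 2 * (-t)) := by field_simp
          _ ≤ 2 / eta * Real.exp (eta / 2 * (-t)) :=
              mul_le_mul_of_nonneg_left hkey (by positivity)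
      have hinv : Real.exp (eta / 2 * t) = (Real.exp (eta / 2 * (-t)))⁻¹ := by
        rw [← Real.exp_neg]
        ring_nf
      rw [habs, hinv]
      calc -t * (Real.exp (eta / 2 * (-t)))⁻¹
          ≤ (2 / eta * Real.exp (eta / 2 * (-t))) * (Real.exp (eta / 2 * (-t)))⁻¹ :=
            mul_le_mul_of_nonneg_right h3 (inv_nonneg.mpr (Real.exp_pos _).le)
        _ = 2 / eta := by field_simp
    constructor
    · -- |w t + t| ≤ C
      rw [wsol_plus_t heta hcont hVb t, abs_neg]
      rw [← Real.norm_eq_abs]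
      have hgint : Integrable (fun s => (1 + |t|) * E0 * mfun V s)
          (volume.restrict (Iic t)) := (mfun_int heta hcont hVb t).const_mul _
      have hae : ∀ᵐ s ∂(volume.restrict (Iic t)), ‖(t - s) * (V s * wsol V s)‖
          ≤ (1 + |t|) * E0 * mfun V s := by
        filter_upwards [ae_restrict_mem measurableSet_Iic] with s hs
        have hs' : s ≤ t := hs
        have h1 : ‖(t - s) * (V s * wsol V s)‖ = (t - s) * (|V s| * |wsol V s|) := by
          rw [Real.norm_eq_abs, abs_mul, abs_mul, abs_of_nonneg (by linarith : (0:ℝ) ≤ t - s)]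
        rw [h1]
        have hts : t - s ≤ (1 + |t|) * (1 + |s|) := by
          have ht2 := abs_nonneg t
          have hs2 := abs_nonneg s
          have h2 : t - s ≤ |t| + |s| := by
            have := le_abs_self t
            have := neg_abs_le s
            linarith
          nlinarith
        have hw : |wsol V s| ≤ (1 + |s|) * E0 := by
          calc |wsol V s| ≤ (1 + |s|) * Real.exp (Mfun V s) := wsol_bound heta hcont hVb s
            _ ≤ (1 + |s|) * E0 := mul_le_mul_of_nonneg_left
                (Real.exp_le_exp.mpr (Mfun_mono heta hcont hVb (le_trans hs' ht0.le)))
                (by positivity)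
        calc (t - s) * (|V s| * |wsol V s|)
            ≤ ((1 + |t|) * (1 + |s|)) * (|V s| * ((1 + |s|) * E0)) :=
              mul_le_mul hts (mul_le_mul_of_nonneg_left hw (abs_nonneg _))
                (by positivity) (by positivity)
          _ = (1 + |t|) * E0 * ((1 + |s|) ^ 2 * |V s|) := by ring
          _ = (1 + |t|) * E0 * mfun V s := by rw [mfun]
      have hnb : ‖∫ s in Iic t, (t - s) * (V s * wsol V s)‖
          ≤ (1 + |t|) * E0 * Mfun V t := by
        calc ‖∫ s in Iic t, (t - s) * (V s * wsol V s)‖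
            ≤ ∫ s in Iic t, (1 + |t|) * E0 * mfun V s :=
              norm_integral_le_of_norm_le hgint hae
          _ = (1 + |t|) * E0 * Mfun V t := by rw [integral_const_mul]; rfl
      have hMt : Mfun V t ≤ c * D * (2 / eta) * Real.exp (eta / 2 * t) :=
        Mfun_bound heta hcont hVb t ht0.le
      have h4 : (1 + |t|) * Real.exp (eta / 2 * t) ≤ 2 * (2 / eta) := by
        calc (1 + |t|) * Real.exp (eta / 2 * t) ≤ (2 * |t|) * Real.exp (eta / 2 * t) := by
              apply mul_le_mul_of_nonneg_right (by linarith) (Real.exp_pos _).le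
          _ = 2 * (|t| * Real.exp (eta / 2 * t)) := by ring
          _ ≤ 2 * (2 / eta) := by linarith
      have h6 : (0:ℝ) ≤ c * D * E0 * (2 / eta) := by positivity
      calc ‖∫ s in Iic t, (t - s) * (V s * wsol V s)‖
          ≤ (1 + |t|) * E0 * Mfun V t := hnb
        _ ≤ (1 + |t|) * E0 * (c * D * (2 / eta) * Real.exp (eta / 2 * t)) :=
            mul_le_mul_of_nonneg_left hMt (by positivity)
        _ = (c * D * E0 * (2 / eta)) * ((1 + |t|) * Real.exp (eta / 2 * t)) := by ring
        _ ≤ (c * D * E0 * (2 / eta)) * (2 * (2 / eta)) := mul_le_mul_of_nonneg_left h4 h6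
        _ = 8 * c * D * E0 / eta ^ 2 := by field_simp; ring
        _ ≤ 8 * c * D * E0 / eta ^ 2 + 2 * c * E0 * (1 / eta + 1 / eta ^ 2) + 1 := by
            have : (0:ℝ) ≤ 2 * c * E0 * (1 / eta + 1 / eta ^ 2) := by positivity
            linarith
    · -- |w' t + 1| ≤ C |t| exp(eta t)
      rw [wsol_deriv_eq heta hcont hVb]
      have heq : -1 - (∫ s in Iic t, V s * wsol V s) + 1 = -(∫ s in Iic t, V s * wsol V s) := by
        ring
      rw [heq, abs_neg, ← Real.norm_eq_abs]
      have hbint : IntegrableOn (fun s => (1 - s) * Real.exp (eta * s)) (Iic t) := by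
        have h := integrableOn_Iic_of_antideriv
          (f := fun s => (1 - s) * Real.exp (eta * s))
          (F := fun s => Real.exp (eta * s) * ((1 - s) / eta + 1 / eta ^ 2)) (b := t)
          (by fun_prop) (fun x hx => by
            show (0:ℝ) ≤ (1 - x) * Real.exp (eta * x)
            have h1x : (0:ℝ) < 1 - x := by nlinarith
            positivity)
          (fun x => by
            have h := (hasDerivAt_exp_mul eta x).mul
              (((hasDerivAt_id x).const_sub 1).div_const eta |>.add_const (1 / eta ^ 2))
            refine h.congr_deriv ?_
            simp only [id_eq]
            field_simp
            ring)
          (fun x hx => by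
            have hx0 : x ≤ t := hx
            have h1x : (0:ℝ) < 1 - x := by linarith
            have : (0:ℝ) < (1 - x) / eta + 1 / eta ^ 2 := by positivity
            positivity)
        exact h
      have hgint : Integrable (fun s => c * E0 * ((1 - s) * Real.exp (eta * s)))
          (volume.restrict (Iic t)) := hbint.const_mul _
      have hae : ∀ᵐ s ∂(volume.restrict (Iic t)), ‖V s * wsol V s‖
          ≤ c * E0 * ((1 - s) * Real.exp (eta * s)) := by
        filter_upwards [ae_lt_t0 (t0 := t0) t, ae_restrict_mem measurableSet_Iic] with s hs1 hs2
        have hslt : s < t0 := lt_of_le_of_ne (le_trans hs2 ht0.le) hs1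
        have hsneg : s < 0 := lt_of_le_of_lt hs2 htneg
        have habss : |s| = -s := abs_of_neg hsneg
        have hw : |wsol V s| ≤ (1 - s) * E0 := by
          calc |wsol V s| ≤ (1 + |s|) * Real.exp (Mfun V s) := wsol_bound heta hcont hVb s
            _ ≤ (1 + |s|) * E0 := mul_le_mul_of_nonneg_left
                (Real.exp_le_exp.mpr (Mfun_mono heta hcont hVb hslt.le)) (by positivity)
            _ = (1 - s) * E0 := by rw [habss]; ring
        have hVs := hVb s hslt
        rw [Real.norm_eq_abs, abs_mul]
        calc |V s| * |wsol V s| ≤ (c * Real.exp (eta * s)) * ((1 - s) * E0) :=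
              mul_le_mul hVs hw (abs_nonneg _) (by positivity)
          _ = c * E0 * ((1 - s) * Real.exp (eta * s)) := by ring
      have hval : ∫ s in Iic t, c * E0 * ((1 - s) * Real.exp (eta * s))
          = c * E0 * (Real.exp (eta * t) * ((1 - t) / eta + 1 / eta ^ 2)) := by
        rw [integral_const_mul, integral_one_sub_exp_Iic heta htneg.le]
      have hfin : (1 - t) / eta + 1 / eta ^ 2 ≤ 2 * |t| * (1 / eta + 1 / eta ^ 2) := by
        rw [habs]
        have h1 : (1 - t) / eta ≤ 2 * (-t) / eta := by
          apply div_le_div_of_nonneg_right ?_ heta.le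
          linarith
        have h2 : 1 / eta ^ 2 ≤ 2 * (-t) / eta ^ 2 := by
          apply div_le_div_of_nonneg_right ?_ (by positivity)
          linarith
        calc (1 - t) / eta + 1 / eta ^ 2 ≤ 2 * (-t) / eta + 2 * (-t) / eta ^ 2 := by linarith
          _ = 2 * (-t) * (1 / eta + 1 / eta ^ 2) := by ring
      calc ‖∫ s in Iic t, V s * wsol V s‖
          ≤ ∫ s in Iic t, c * E0 * ((1 - s) * Real.exp (eta * s)) :=
            norm_integral_le_of_norm_le hgint hae
        _ = c * E0 * (Real.exp (eta * t) * ((1 - t) / eta + 1 / eta ^ 2)) := hval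
        _ ≤ c * E0 * (Real.exp (eta * t) * (2 * |t| * (1 / eta + 1 / eta ^ 2))) := by
            apply mul_le_mul_of_nonneg_left
              (mul_le_mul_of_nonneg_left hfin (Real.exp_pos _).le) (by positivity)
        _ = (2 * c * E0 * (1 / eta + 1 / eta ^ 2)) * |t| * Real.exp (eta * t) := by ring
        _ ≤ (8 * c * D * E0 / eta ^ 2 + 2 * c * E0 * (1 / eta + 1 / eta ^ 2) + 1) * |t|
              * Real.exp (eta * t) := by
            have h7 : (0:ℝ) ≤ |t| * Real.exp (eta * t) := by positivity
            have h8 : 2 * c * E0 * (1 / eta + 1 / eta ^ 2)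
                ≤ 8 * c * D * E0 / eta ^ 2 + 2 * c * E0 * (1 / eta + 1 / eta ^ 2) + 1 := by
              have : (0:ℝ) ≤ 8 * c * D * E0 / eta ^ 2 := by positivity
              linarith
            calc (2 * c * E0 * (1 / eta + 1 / eta ^ 2)) * |t| * Real.exp (eta * t)
                = (2 * c * E0 * (1 / eta + 1 / eta ^ 2)) * (|t| * Real.exp (eta * t)) := by ring
              _ ≤ (8 * c * D * E0 / eta ^ 2 + 2 * c * E0 * (1 / eta + 1 / eta ^ 2) + 1)
                    * (|t| * Real.exp (eta * t)) := mul_le_mul_of_nonneg_right h8 h7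
              _ = _ := by ring
end

section
/- Let λ > 0, η > 0, c > 0 and t₀ ∈ ℝ, and let V : ℝ → ℝ be a smooth function satisfying |V(t) − λ²| ≤ c·exp(η·t) for all t < t₀. Then there exist two linearly independent twice continuously differentiable solutions w⁺, w⁻ : ℝ → ℝ of w''(t) + V(t)·w(t) = 0 such that w⁺(t) − cos(λ·t) → 0 and w⁻(t) − sin(λ·t) → 0 as t → −∞, and moreover w⁺, w⁻, (w⁺)' and (w⁻)' are all bounded on the interval (−∞, t₀). -/
set_option maxHeartbeats 1000000

open MeasureTheory intervalIntegral Real Set Filter Topology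

namespace Stmt6

lemma hasDerivAt_expb (b x : ℝ) (hb : b ≠ 0) :
    HasDerivAt (fun y => Real.exp (b * y) / b) (Real.exp (b * x)) x := by
  have h : HasDerivAt (fun y => Real.exp (b * y)) (Real.exp (b * x) * b) x := by
    simpa [Function.comp_def] using (Real.hasDerivAt_exp (b * x)).comp x ((hasDerivAt_id x).const_mul b)
  simpa [mul_div_cancel_right₀ _ hb] using h.div_const b

lemma integral_expb (b a u : ℝ) (hb : b ≠ 0) :
    ∫ x in a..u, Real.exp (b * x) = Real.exp (b * u) / b - Real.exp (b * a) / b := by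
  refine integral_eq_sub_of_hasDerivAt (fun x _ => hasDerivAt_expb b x hb) ?_
  exact (Real.continuous_exp.comp (continuous_const.mul continuous_id)).intervalIntegrable a u

lemma integrableOn_expb_Iic (b u : ℝ) (hb : 0 < b) :
    IntegrableOn (fun x => Real.exp (b * x)) (Iic u) := by
  refine integrableOn_Iic_of_intervalIntegral_norm_bounded (Real.exp (b * u) / b) u
    (fun y => ((Real.continuous_exp.comp
      (continuous_const.mul continuous_id)).intervalIntegrable y u).1) tendsto_id
    (Filter.Eventually.of_forall fun y => ?_)
  simp_rw [Real.norm_of_nonneg (Real.exp_pos _).le, integral_expb b y u hb.ne']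
  have : 0 < Real.exp (b * y) / b := div_pos (Real.exp_pos _) hb
  linarith

lemma integral_expb_Iic (b u : ℝ) (hb : 0 < b) :
    ∫ x in Iic u, Real.exp (b * x) = Real.exp (b * u) / b := by
  refine tendsto_nhds_unique
    (intervalIntegral_tendsto_integral_Iic _ (integrableOn_expb_Iic b u hb) tendsto_id) ?_
  simp_rw [integral_expb b _ u hb.ne']
  rw [show 𝓝 (Real.exp (b * u) / b) = 𝓝 (Real.exp (b * u) / b - 0 / b) by norm_num]
  exact (((Real.tendsto_exp_atBot.comp
    (tendsto_id.const_mul_atBot hb)).div_const b).const_sub _)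


/-- The first-order system vector field for `w'' + V w = 0`. -/
def vf (V : ℝ → ℝ) (t : ℝ) (p : ℝ × ℝ) : ℝ × ℝ := (p.2, -V t * p.1)

lemma vf_dist (V : ℝ → ℝ) (t : ℝ) {M : ℝ} (hM : |V t| ≤ M) (p q : ℝ × ℝ) :
    dist (vf V t p) (vf V t q) ≤ (1 + M) * dist p q := by
  have hM0 : 0 ≤ M := (abs_nonneg _).trans hM
  have h1 : dist p.1 q.1 ≤ dist p q := by rw [Prod.dist_eq]; exact le_max_left _ _
  have h2 : dist p.2 q.2 ≤ dist p q := by rw [Prod.dist_eq]; exact le_max_right _ _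
  have hd0 : 0 ≤ dist p q := dist_nonneg
  rw [Prod.dist_eq]
  apply max_le
  · show dist p.2 q.2 ≤ (1 + M) * dist p q
    nlinarith
  · show dist (-V t * p.1) (-V t * q.1) ≤ (1 + M) * dist p q
    rw [Real.dist_eq, show -V t * p.1 - -V t * q.1 = V t * (q.1 - p.1) by ring, abs_mul,
      abs_sub_comm]
    have h3 : |p.1 - q.1| = dist p.1 q.1 := (Real.dist_eq _ _).symm
    rw [h3]
    nlinarith [abs_nonneg (V t), dist_nonneg (x := p.1) (y := q.1)]

lemma vf_norm (V : ℝ → ℝ) (t : ℝ) {M : ℝ} (hM : |V t| ≤ M) (p : ℝ × ℝ) :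
    ‖vf V t p‖ ≤ (1 + M) * ‖p‖ := by
  have := vf_dist V t hM p 0
  have h0 : vf V t 0 = 0 := by simp [vf]
  rw [h0, dist_zero_right, dist_zero_right] at this
  exact this

lemma integral_sub_pow (m : ℕ) (b u : ℝ) :
    ∫ s in b..u, (s - b) ^ m = (u - b) ^ (m + 1) / (m + 1) := by
  have h : ∀ s : ℝ, HasDerivAt (fun s : ℝ => (s - b) ^ (m + 1) / (m + 1)) ((s - b) ^ m) s := by
    intro s
    have h1 : HasDerivAt (fun s : ℝ => s - b) 1 s := (hasDerivAt_id s).sub_const b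
    have h2 := (hasDerivAt_pow (m + 1) (s - b)).comp s h1
    have h3 := h2.div_const ((m : ℝ) + 1)
    refine h3.congr_deriv (Eq.symm ?_)
    have : ((m : ℝ) + 1) ≠ 0 := by positivity
    field_simp
    rw [Nat.add_sub_cancel]; push_cast; ring
  rw [integral_eq_sub_of_hasDerivAt (fun x _ => h x)
    (Continuous.intervalIntegrable (by continuity) _ _)]
  simp

lemma integral_sub_pow' (m : ℕ) (a u : ℝ) :
    ∫ s in a..u, (a - s) ^ m = -((a - u) ^ (m + 1) / (m + 1)) + (a - a) ^ (m+1) / (m+1) := by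
  have h : ∀ s : ℝ, HasDerivAt (fun s : ℝ => -((a - s) ^ (m + 1) / (m + 1))) ((a - s) ^ m) s := by
    intro s
    have h1 : HasDerivAt (fun s : ℝ => a - s) (-1) s := (hasDerivAt_id s).const_sub a
    have h2 := (hasDerivAt_pow (m + 1) (a - s)).comp s h1
    have h3 := (h2.div_const ((m : ℝ) + 1)).neg
    refine h3.congr_deriv (Eq.symm ?_)
    have : ((m : ℝ) + 1) ≠ 0 := by positivity
    field_simp
    rw [Nat.add_sub_cancel]; push_cast; ring
  rw [integral_eq_sub_of_hasDerivAt (fun x _ => h x)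
    (Continuous.intervalIntegrable (by continuity) _ _)]
  ring

lemma abs_integral_abs_pow (m : ℕ) (a u : ℝ) :
    |∫ s in a..u, |s - a| ^ m| = |u - a| ^ (m + 1) / (m + 1) := by
  have hm1 : (0:ℝ) < m + 1 := by positivity
  rcases le_total a u with h | h
  · have hc : ∀ s ∈ uIcc a u, |s - a| ^ m = (s - a) ^ m := by
      intro s hs
      rw [uIcc_of_le h] at hs
      rw [abs_of_nonneg (by linarith [hs.1])]
    rw [intervalIntegral.integral_congr hc, integral_sub_pow, abs_div,
      abs_of_nonneg (by positivity : (0:ℝ) ≤ (m:ℝ)+1), abs_pow, abs_of_nonneg (by linarith)]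
  · have hc : ∀ s ∈ uIcc a u, |s - a| ^ m = (a - s) ^ m := by
      intro s hs
      rw [uIcc_of_ge h] at hs
      rw [abs_sub_comm, abs_of_nonneg (by linarith [hs.2])]
    rw [intervalIntegral.integral_congr hc, integral_sub_pow']
    have h0 : (a - a) ^ (m + 1) = 0 := by
      rw [sub_self]; exact zero_pow (Nat.succ_ne_zero m)
    rw [h0, zero_div, add_zero, abs_neg, abs_div,
      abs_of_nonneg (by positivity : (0:ℝ) ≤ (m:ℝ)+1), abs_pow, abs_sub_comm]

lemma exists_sol_Ioo (V : ℝ → ℝ) (hV : Continuous V) (a r : ℝ) (hr : 0 < r) (p₀ : ℝ × ℝ) :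
    ∃ x : ℝ → ℝ × ℝ, Continuous x ∧ x a = p₀ ∧
      ∀ t ∈ Ioo (a - r) (a + r), HasDerivAt x (vf V t (x t)) t := by
  classical
  set cl : ℝ → ℝ := fun t => max (a - r) (min t (a + r)) with hcl
  have hclcont : Continuous cl := continuous_const.max (continuous_id.min continuous_const)
  have hclmem : ∀ t, cl t ∈ Icc (a - r) (a + r) := by
    intro t
    exact ⟨le_max_left _ _, max_le (by linarith) (min_le_right _ _)⟩
  have hclid : ∀ t ∈ Icc (a - r) (a + r), cl t = t := by
    intro t ht
    rw [hcl]
    simp only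
    rw [min_eq_left ht.2, max_eq_right ht.1]
  have hclr : ∀ t, |cl t - a| ≤ r := by
    intro t
    have h := hclmem t
    rw [abs_le]
    constructor <;> [linarith [h.1]; linarith [h.2]]
  obtain ⟨M0, hM0⟩ := isCompact_Icc.exists_bound_of_continuousOn
      (hV.continuousOn : ContinuousOn V (Icc (a - r) (a + r)))
  set M := max M0 0 with hM
  have hMb : ∀ t, |V (cl t)| ≤ M := fun t =>
    le_trans (by simpa using hM0 (cl t) (hclmem t)) (le_max_left _ _)
  have hM0' : (0:ℝ) ≤ M := le_max_right _ _
  set L := 1 + M with hL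
  have hL0 : (0:ℝ) ≤ L := by linarith
  have hgcont : ∀ f : BoundedContinuousFunction ℝ (ℝ × ℝ),
      Continuous (fun s => vf V (cl s) (f s)) := by
    intro f
    show Continuous fun s => ((f s).2, -V (cl s) * (f s).1)
    exact (continuous_snd.comp f.continuous).prodMk
      (((hV.comp hclcont).neg).mul (continuous_fst.comp f.continuous))
  have hgbd : ∀ f : BoundedContinuousFunction ℝ (ℝ × ℝ), ∀ s,
      ‖vf V (cl s) (f s)‖ ≤ L * ‖f‖ := by
    intro f s
    refine (vf_norm V (cl s) (hMb s) (f s)).trans ?_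
    exact mul_le_mul_of_nonneg_left (f.norm_coe_le_norm s) hL0
  have hgint : ∀ f : BoundedContinuousFunction ℝ (ℝ × ℝ), ∀ u v : ℝ,
      IntervalIntegrable (fun s => vf V (cl s) (f s)) volume u v :=
    fun f u v => (hgcont f).intervalIntegrable u v
  have hTbd : ∀ f : BoundedContinuousFunction ℝ (ℝ × ℝ), ∀ t,
      ‖p₀ + ∫ s in a..(cl t), vf V (cl s) (f s)‖ ≤ ‖p₀‖ + L * ‖f‖ * r := by
    intro f t
    refine (norm_add_le _ _).trans ?_
    have h1 : ‖∫ s in a..(cl t), vf V (cl s) (f s)‖ ≤ (L * ‖f‖) * |cl t - a| :=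
      intervalIntegral.norm_integral_le_of_norm_le_const (fun s _ => hgbd f s)
    have h2 : (L * ‖f‖) * |cl t - a| ≤ L * ‖f‖ * r :=
      mul_le_mul_of_nonneg_left (hclr t) (by positivity)
    linarith
  set T : BoundedContinuousFunction ℝ (ℝ × ℝ) → BoundedContinuousFunction ℝ (ℝ × ℝ) :=
    fun f => BoundedContinuousFunction.ofNormedAddCommGroup
      (fun t => p₀ + ∫ s in a..(cl t), vf V (cl s) (f s))
      (continuous_const.add ((intervalIntegral.continuous_primitive (hgint f) a).comp hclcont))
      (‖p₀‖ + L * ‖f‖ * r) (hTbd f) with hT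
  have hTcoe : ∀ f : BoundedContinuousFunction ℝ (ℝ × ℝ), ∀ t,
      T f t = p₀ + ∫ s in a..(cl t), vf V (cl s) (f s) := by
    intro f t
    rw [hT]
    rfl
  have key : ∀ m : ℕ, ∀ f g : BoundedContinuousFunction ℝ (ℝ × ℝ), ∀ t,
      dist (T^[m] f t) (T^[m] g t) ≤ L ^ m * |cl t - a| ^ m / m.factorial * dist f g := by
    intro m
    induction m with
    | zero =>
      intro f g t
      simpa using BoundedContinuousFunction.dist_coe_le_dist t
    | succ m ih =>
      intro f g t
      rw [Function.iterate_succ_apply', Function.iterate_succ_apply']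
      set F := T^[m] f with hF
      set G := T^[m] g with hG
      rw [dist_eq_norm, hTcoe F t, hTcoe G t,
        show p₀ + (∫ s in a..(cl t), vf V (cl s) (F s)) - (p₀ + ∫ s in a..(cl t), vf V (cl s) (G s))
          = (∫ s in a..(cl t), vf V (cl s) (F s)) - ∫ s in a..(cl t), vf V (cl s) (G s) by abel,
        ← intervalIntegral.integral_sub (hgint F a (cl t)) (hgint G a (cl t))]
      have hbound : ∀ s ∈ uIoc a (cl t),
          ‖vf V (cl s) (F s) - vf V (cl s) (G s)‖
            ≤ L ^ (m+1) * |s - a| ^ m / m.factorial * dist f g := by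
        intro s hs
        have hsIcc : s ∈ Icc (a - r) (a + r) := by
          rcases mem_uIoc.mp hs with h' | h'
          · exact ⟨by linarith [h'.1], le_trans h'.2 (hclmem t).2⟩
          · exact ⟨le_trans (hclmem t).1 h'.1.le, by linarith [h'.2]⟩
        have hcls : cl s = s := hclid s hsIcc
        have h1 : dist (vf V (cl s) (F s)) (vf V (cl s) (G s)) ≤ L * dist (F s) (G s) :=
          vf_dist V (cl s) (hMb s) _ _
        have h2 := ih f g s
        rw [← hF, ← hG, hcls] at h2
        rw [← dist_eq_norm]
        calc dist (vf V (cl s) (F s)) (vf V (cl s) (G s)) ≤ L * dist (F s) (G s) := h1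
          _ ≤ L * (L ^ m * |s - a| ^ m / m.factorial * dist f g) :=
              mul_le_mul_of_nonneg_left h2 hL0
          _ = L ^ (m+1) * |s - a| ^ m / m.factorial * dist f g := by ring
      refine le_trans (intervalIntegral.norm_integral_le_abs_of_norm_le
        (g := fun s => L ^ (m+1) * |s - a| ^ m / m.factorial * dist f g)
        ((ae_restrict_mem measurableSet_uIoc).mono hbound) ?_) ?_
      · apply Continuous.intervalIntegrable
        have : Continuous fun s : ℝ => |s - a| ^ m :=
          (continuous_abs.comp (continuous_id.sub continuous_const)).pow m
        exact ((continuous_const.mul this).div_const _).mul continuous_const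
      · rw [show (fun s => L ^ (m+1) * |s - a| ^ m / m.factorial * dist f g)
            = fun s => (L ^ (m+1) / m.factorial * dist f g) * |s - a| ^ m by
            funext s; ring,
          intervalIntegral.integral_const_mul, abs_mul, abs_integral_abs_pow,
          abs_of_nonneg (by positivity : (0:ℝ) ≤ L ^ (m+1) / m.factorial * dist f g)]
        apply le_of_eq
        rw [Nat.factorial_succ]
        push_cast
        have hfac : (0:ℝ) < m.factorial := by positivity
        field_simp
  have hdist : ∀ m : ℕ, ∀ f g : BoundedContinuousFunction ℝ (ℝ × ℝ),
      dist (T^[m] f) (T^[m] g) ≤ (L*r)^m / m.factorial * dist f g := by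
    intro m f g
    refine (BoundedContinuousFunction.dist_le (by positivity)).mpr fun t =>
      (key m f g t).trans ?_
    have h1 : L ^ m * |cl t - a| ^ m ≤ (L*r)^m := by
      rw [mul_pow]
      exact mul_le_mul_of_nonneg_left (pow_le_pow_left₀ (abs_nonneg _) (hclr t) m)
        (by positivity)
    gcongr
  obtain ⟨m, hm⟩ : ∃ m : ℕ, (L*r)^m / m.factorial < 1 := by
    have h1 := (FloorSemiring.tendsto_pow_div_factorial_atTop (L*r)).eventually
      (gt_mem_nhds one_pos)
    exact h1.exists
  set K : NNReal := Real.toNNReal ((L*r)^m / m.factorial) with hK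
  have hKcoe : (K:ℝ) = (L*r)^m / m.factorial := Real.coe_toNNReal _ (by positivity)
  have hcontr : ContractingWith K (T^[m]) := by
    constructor
    · have : (K:ℝ) < 1 := by rw [hKcoe]; exact hm
      exact_mod_cast this
    · apply LipschitzWith.of_dist_le_mul
      intro f g
      rw [hKcoe]
      exact hdist m f g
  haveI : Nonempty (BoundedContinuousFunction ℝ (ℝ × ℝ)) := ⟨0⟩
  have hfix := ContractingWith.isFixedPt_fixedPoint_iterate hcontr
  set f := ContractingWith.fixedPoint (T^[m]) hcontr with hf
  have hfeq : ∀ t, (f : ℝ → ℝ×ℝ) t = p₀ + ∫ s in a..(cl t), vf V (cl s) (f s) := by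
    intro t
    conv_lhs => rw [← hfix]
    exact hTcoe f t
  have haIcc : a ∈ Icc (a - r) (a + r) := ⟨by linarith, by linarith⟩
  refine ⟨f, f.continuous, ?_, ?_⟩
  · rw [hfeq a, hclid a haIcc, intervalIntegral.integral_same, add_zero]
  · intro t ht
    have hmem : Ioo (a-r) (a+r) ∈ 𝓝 t := Ioo_mem_nhds ht.1 ht.2
    have heq : (f : ℝ → ℝ×ℝ) =ᶠ[𝓝 t] fun u => p₀ + ∫ s in a..u, vf V (cl s) (f s) :=
      Filter.eventuallyEq_of_mem hmem
        (fun u hu => by rw [hfeq u, hclid u (Ioo_subset_Icc_self hu)])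
    have hd : HasDerivAt (fun u => p₀ + ∫ s in a..u, vf V (cl s) (f s))
        (vf V (cl t) (f t)) t := by
      have := intervalIntegral.integral_hasDerivAt_right (hgint f a t)
        ((hgcont f).stronglyMeasurableAtFilter volume (𝓝 t)) (hgcont f).continuousAt
      simpa using this.const_add p₀
    rw [hclid t (Ioo_subset_Icc_self ht)] at hd
    exact heq.hasDerivAt_iff.mpr hd

lemma sol_unique (V : ℝ → ℝ) (hV : Continuous V) {b c t₀ : ℝ} (h : t₀ ∈ Ioo b c)
    {x y : ℝ → ℝ × ℝ}
    (hx : ∀ t ∈ Ioo b c, HasDerivAt x (vf V t (x t)) t)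
    (hy : ∀ t ∈ Ioo b c, HasDerivAt y (vf V t (y t)) t)
    (h0 : x t₀ = y t₀) : EqOn x y (Ioo b c) := by
  have hbc : b ≤ c := le_of_lt (lt_trans h.1 h.2)
  set cl : ℝ → ℝ := fun t => max b (min t c) with hcl
  have hclmem : ∀ t, cl t ∈ Icc b c := fun t =>
    ⟨le_max_left _ _, max_le hbc (min_le_right _ _)⟩
  have hclid : ∀ t ∈ Ioo b c, cl t = t := by
    intro t ht
    rw [hcl]
    simp only
    rw [min_eq_left ht.2.le, max_eq_right ht.1.le]
  obtain ⟨M0, hM0⟩ := isCompact_Icc.exists_bound_of_continuousOn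
    (hV.continuousOn : ContinuousOn V (Icc b c))
  set M := max M0 0 with hM
  have hMb : ∀ t, |V (cl t)| ≤ M := fun t =>
    le_trans (by simpa using hM0 (cl t) (hclmem t)) (le_max_left _ _)
  have hM0' : (0:ℝ) ≤ M := le_max_right _ _
  set K : NNReal := Real.toNNReal (1 + M) with hK
  have hKcoe : (K:ℝ) = 1 + M := Real.coe_toNNReal _ (by linarith)
  have hlip : ∀ t, LipschitzOnWith K (fun p => vf V (cl t) p) univ := by
    intro t
    apply LipschitzWith.lipschitzOnWith
    apply LipschitzWith.of_dist_le_mul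
    intro p q
    rw [hKcoe]
    exact vf_dist V (cl t) (hMb t) p q
  have := ODE_solution_unique_of_mem_Ioo (v := fun t p => vf V (cl t) p)
    (s := fun _ => univ) (fun t _ => hlip t) h
    (fun t ht => ⟨by rw [hclid t ht]; exact hx t ht, mem_univ _⟩)
    (fun t ht => ⟨by rw [hclid t ht]; exact hy t ht, mem_univ _⟩) h0
  exact this

lemma exists_sol_global (V : ℝ → ℝ) (hV : Continuous V) (a : ℝ) (p₀ : ℝ × ℝ) :
    ∃ x : ℝ → ℝ × ℝ, Continuous x ∧ x a = p₀ ∧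
      ∀ t, HasDerivAt x (vf V t (x t)) t := by
  choose sol hc hval hd using fun n : ℕ =>
    exists_sol_Ioo V hV a ((n:ℝ)+1) (by positivity) p₀
  have hmem : ∀ (t : ℝ) (n : ℕ), |t - a| < (n:ℝ) + 1 →
      t ∈ Ioo (a - ((n:ℝ)+1)) (a + ((n:ℝ)+1)) := by
    intro t n h
    rw [abs_lt] at h
    exact ⟨by linarith [h.1], by linarith [h.2]⟩
  have hself : ∀ t : ℝ, |t - a| < (⌈|t - a|⌉₊ : ℝ) + 1 :=
    fun t => lt_of_le_of_lt (Nat.le_ceil _) (by linarith)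
  have huniq : ∀ (n m : ℕ), n ≤ m →
      EqOn (sol m) (sol n) (Ioo (a - ((n:ℝ)+1)) (a + ((n:ℝ)+1))) := by
    intro n m hnm
    have hcast : (n:ℝ) ≤ (m:ℝ) := by exact_mod_cast hnm
    have hsub : Ioo (a - ((n:ℝ)+1)) (a + ((n:ℝ)+1)) ⊆ Ioo (a - ((m:ℝ)+1)) (a + ((m:ℝ)+1)) :=
      Ioo_subset_Ioo (by linarith) (by linarith)
    exact sol_unique V hV (⟨by linarith, by linarith⟩ : a ∈ Ioo (a - ((n:ℝ)+1)) (a + ((n:ℝ)+1)))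
      (fun t ht => hd m t (hsub ht)) (fun t ht => hd n t ht)
      ((hval m).trans (hval n).symm)
  set N : ℝ → ℕ := fun t => ⌈|t - a|⌉₊ with hN
  have hkey : ∀ t, HasDerivAt (fun s => sol (N s) s) (vf V t (sol (N t) t)) t := by
    intro t
    set n := N t with hn
    have hIoo : t ∈ Ioo (a - ((n:ℝ)+1)) (a + ((n:ℝ)+1)) := hmem t n (hself t)
    have hev : (fun s => sol (N s) s) =ᶠ[𝓝 t] sol (n+1) := by
      apply eventuallyEq_of_mem (Ioo_mem_nhds hIoo.1 hIoo.2)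
      intro s hs
      have h1 : |s - a| ≤ (n:ℝ) + 1 := by
        rw [abs_le]
        exact ⟨by linarith [hs.1], by linarith [hs.2]⟩
      have h2 : N s ≤ n + 1 := Nat.ceil_le.mpr (by push_cast; linarith)
      have h3 : s ∈ Ioo (a - ((N s : ℝ)+1)) (a + ((N s:ℝ)+1)) := hmem s (N s) (hself s)
      exact (huniq (N s) (n+1) h2 h3).symm
    have hdd : HasDerivAt (sol (n+1)) (vf V t (sol (n+1) t)) t := by
      refine hd (n+1) t (Ioo_subset_Ioo ?_ ?_ hIoo) <;> push_cast <;> linarith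
    have h4 : HasDerivAt (fun s => sol (N s) s) (vf V t (sol (n+1) t)) t :=
      hev.hasDerivAt_iff.mpr hdd
    have hvaleq : sol (n+1) t = sol n t := huniq n (n+1) (Nat.le_succ n) hIoo
    rwa [hvaleq] at h4
  refine ⟨fun t => sol (N t) t, ?_, hval (N a), hkey⟩
  exact continuous_iff_continuousAt.mpr fun t => (hkey t).continuousAt

lemma half_line (lam eta c t1 : ℝ) (hlam : 0 < lam) (heta : 0 < eta) (hc : 0 < c)
    (al be : ℝ) (V : ℝ → ℝ) (hV : Continuous V)
    (hVb : ∀ t ≤ t1, |V t - lam ^ 2| ≤ c * Real.exp (eta * t))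
    (hsmall : c * Real.exp (eta * t1) / eta ≤ lam / 8) :
    ∃ (w w' : ℝ → ℝ) (B : ℝ), Continuous w ∧
      (∀ t, |w t| ≤ B) ∧ (∀ t < t1, |w' t| ≤ B) ∧
      (∀ t < t1, HasDerivAt w (w' t) t) ∧
      (∀ t < t1, HasDerivAt w' (-V t * w t) t) ∧
      Tendsto (fun t => w t - (al * Real.cos (lam * t) + be * Real.sin (lam * t)))
        atBot (𝓝 0) := by
  classical
  have hlam' : lam ≠ 0 := hlam.ne'
  have habs3p : ∀ A B C : ℝ, |A + B + C| ≤ |A| + |B| + |C| := by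
    intro A B C
    calc |A + B + C| ≤ |A + B| + |C| := abs_add_le _ _
      _ ≤ |A| + |B| + |C| := add_le_add_left (abs_add_le _ _) _
  have habs3 : ∀ A B C : ℝ, |A + B - C| ≤ |A| + |B| + |C| := by
    intro A B C
    calc |A + B - C| = |(A + B) + (-C)| := by ring_nf
      _ ≤ |A + B| + |(-C)| := abs_add_le _ _
      _ ≤ |A| + |B| + |C| := by rw [abs_neg]; exact add_le_add_left (abs_add_le _ _) _
  set base : ℝ → ℝ := fun t => al * Real.cos (lam * t) + be * Real.sin (lam * t) with hbase
  set q : ℝ → ℝ := fun s => lam ^ 2 - V s with hq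
  have hqb : ∀ s, s ≤ t1 → |q s| ≤ c * Real.exp (eta * s) := by
    intro s hs
    rw [hq]
    simp only
    rw [abs_sub_comm]
    exact hVb s hs
  have hqcont : Continuous q := continuous_const.sub hV
  set G : (ℝ → ℝ) → BoundedContinuousFunction ℝ ℝ → ℝ → ℝ :=
    fun k f u => ∫ s in Iic u, Set.indicator (Iic t1) (fun s' => k s' * (q s' * f s')) s
    with hG
  have hmeas : ∀ (k : ℝ → ℝ), Continuous k → ∀ (f : BoundedContinuousFunction ℝ ℝ),
      StronglyMeasurable (Set.indicator (Iic t1) (fun s' => k s' * (q s' * f s'))) :=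
    fun k hk f => ((hk.mul (hqcont.mul f.continuous)).stronglyMeasurable).indicator
      measurableSet_Iic
  have hbd : ∀ (k : ℝ → ℝ), (∀ s, |k s| ≤ 1) → ∀ (f : BoundedContinuousFunction ℝ ℝ), ∀ s,
      |Set.indicator (Iic t1) (fun s' => k s' * (q s' * f s')) s|
        ≤ c * Real.exp (eta * s) * ‖f‖ := by
    intro k hk f s
    have hpos : 0 ≤ c * Real.exp (eta * s) * ‖f‖ := by positivity
    by_cases hs : s ∈ Iic t1
    · rw [Set.indicator_of_mem hs]
      rw [show |k s * (q s * f s)| = |k s| * (|q s| * |f s|) by rw [abs_mul, abs_mul]]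
      have h2 : |q s| ≤ c * Real.exp (eta * s) := hqb s hs
      have h3 : |f s| ≤ ‖f‖ := by
        simpa [Real.norm_eq_abs] using f.norm_coe_le_norm s
      have h4 : |k s| ≤ 1 := hk s
      calc |k s| * (|q s| * |f s|) ≤ 1 * (|q s| * |f s|) :=
            mul_le_mul_of_nonneg_right h4 (by positivity)
        _ = |q s| * |f s| := one_mul _
        _ ≤ c * Real.exp (eta * s) * ‖f‖ :=
            mul_le_mul h2 h3 (abs_nonneg _) (by positivity)
    · rw [Set.indicator_of_notMem hs]
      simpa using hpos
  have hintb : ∀ u : ℝ, ∀ r : ℝ, IntegrableOn (fun s => c * Real.exp (eta * s) * r) (Iic u) :=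
    fun u r => ((integrableOn_expb_Iic eta u heta).const_mul c).mul_const r
  have hint : ∀ (k : ℝ → ℝ), Continuous k → (∀ s, |k s| ≤ 1) →
      ∀ (f : BoundedContinuousFunction ℝ ℝ), ∀ u : ℝ,
      IntegrableOn (Set.indicator (Iic t1) (fun s' => k s' * (q s' * f s'))) (Iic u) := by
    intro k hk hk1 f u
    refine Integrable.mono' (hintb u ‖f‖) ((hmeas k hk f).aestronglyMeasurable.restrict)
      (Filter.Eventually.of_forall fun s => ?_)
    rw [Real.norm_eq_abs]
    exact hbd k hk1 f s
  have habs : ∀ (k : ℝ → ℝ), Continuous k → (∀ s, |k s| ≤ 1) →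
      ∀ (f : BoundedContinuousFunction ℝ ℝ), ∀ u : ℝ,
      |G k f u| ≤ c * Real.exp (eta * u) / eta * ‖f‖ := by
    intro k hk hk1 f u
    rw [hG]
    simp only
    have h1 : ‖∫ s in Iic u, Set.indicator (Iic t1) (fun s' => k s' * (q s' * f s')) s‖
        ≤ ∫ s in Iic u, c * Real.exp (eta * s) * ‖f‖ := by
      refine MeasureTheory.norm_integral_le_of_norm_le (hintb u ‖f‖)
        (Filter.Eventually.of_forall fun s => ?_)
      rw [Real.norm_eq_abs]
      exact hbd k hk1 f s
    rw [Real.norm_eq_abs] at h1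
    refine h1.trans (le_of_eq ?_)
    simp_rw [show ∀ s : ℝ, c * Real.exp (eta * s) * ‖f‖ = (c * ‖f‖) * Real.exp (eta * s)
      from fun s => by ring]
    rw [MeasureTheory.integral_const_mul, integral_expb_Iic eta u heta]
    ring
  have hGsmall : ∀ (k : ℝ → ℝ), Continuous k → (∀ s, |k s| ≤ 1) →
      ∀ (f : BoundedContinuousFunction ℝ ℝ), ∀ u : ℝ, u ≤ t1 →
      |G k f u| ≤ lam / 8 * ‖f‖ := by
    intro k hk hk1 f u hu
    refine (habs k hk hk1 f u).trans ?_
    have h1 : c * Real.exp (eta * u) / eta ≤ c * Real.exp (eta * t1) / eta := by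
      gcongr
    have h2 : c * Real.exp (eta * u) / eta ≤ lam / 8 := h1.trans hsmall
    exact mul_le_mul_of_nonneg_right h2 (norm_nonneg f)
  have hGsub : ∀ (k : ℝ → ℝ), Continuous k → (∀ s, |k s| ≤ 1) →
      ∀ (f g : BoundedContinuousFunction ℝ ℝ), ∀ u : ℝ,
      G k f u - G k g u = G k (f - g) u := by
    intro k hk hk1 f g u
    rw [hG]
    simp only
    rw [← MeasureTheory.integral_sub (hint k hk hk1 f u) (hint k hk hk1 g u)]
    apply MeasureTheory.integral_congr_ae
    refine Filter.Eventually.of_forall fun s => ?_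
    by_cases hs : s ∈ Iic t1
    · simp only [Set.indicator_of_mem hs, BoundedContinuousFunction.coe_sub, Pi.sub_apply]
      ring
    · simp [Set.indicator_of_notMem hs]
  have hii : ∀ (k : ℝ → ℝ), Continuous k → (∀ s, |k s| ≤ 1) →
      ∀ (f : BoundedContinuousFunction ℝ ℝ), ∀ u v : ℝ,
      IntervalIntegrable (Set.indicator (Iic t1) (fun s' => k s' * (q s' * f s')))
        volume u v := by
    intro k hk hk1 f u v
    refine ((hint k hk hk1 f (max u v)).mono_set ?_).intervalIntegrable
    rw [Set.uIcc]
    exact fun s hs => hs.2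
  have hrepr : ∀ (k : ℝ → ℝ), Continuous k → (∀ s, |k s| ≤ 1) →
      ∀ (f : BoundedContinuousFunction ℝ ℝ), ∀ u : ℝ,
      G k f u = G k f t1
        + ∫ s in t1..u, Set.indicator (Iic t1) (fun s' => k s' * (q s' * f s')) s := by
    intro k hk hk1 f u
    have h1 := intervalIntegral.integral_Iic_sub_Iic (hint k hk hk1 f t1) (hint k hk hk1 f u)
    rw [hG]
    simp only
    linarith [h1]
  have hGcont : ∀ (k : ℝ → ℝ), Continuous k → (∀ s, |k s| ≤ 1) →
      ∀ (f : BoundedContinuousFunction ℝ ℝ), Continuous (G k f) := by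
    intro k hk hk1 f
    rw [show G k f = fun u => G k f t1
        + ∫ s in t1..u, Set.indicator (Iic t1) (fun s' => k s' * (q s' * f s')) s
      from funext (hrepr k hk hk1 f)]
    exact continuous_const.add (intervalIntegral.continuous_primitive (hii k hk hk1 f) t1)
  have hGderiv : ∀ (k : ℝ → ℝ), Continuous k → (∀ s, |k s| ≤ 1) →
      ∀ (f : BoundedContinuousFunction ℝ ℝ), ∀ t : ℝ, t < t1 →
      HasDerivAt (G k f) (k t * (q t * f t)) t := by
    intro k hk hk1 f t ht
    rw [show G k f = fun u => G k f t1
        + ∫ s in t1..u, Set.indicator (Iic t1) (fun s' => k s' * (q s' * f s')) s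
      from funext (hrepr k hk hk1 f)]
    have hev : (Set.indicator (Iic t1) (fun s' => k s' * (q s' * f s')))
        =ᶠ[𝓝 t] (fun s' => k s' * (q s' * f s')) :=
      eventuallyEq_of_mem (Iio_mem_nhds ht) fun s hs =>
        Set.indicator_of_mem (mem_Iic.mpr (le_of_lt (mem_Iio.mp hs)))
          (fun s' => k s' * (q s' * f s'))
    have hca : ContinuousAt (Set.indicator (Iic t1) (fun s' => k s' * (q s' * f s'))) t :=
      ((hk.mul (hqcont.mul f.continuous)).continuousAt).congr hev.symm
    have hd := intervalIntegral.integral_hasDerivAt_right (hii k hk hk1 f t1 t)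
      ⟨univ, univ_mem, ((hmeas k hk f).aestronglyMeasurable).restrict⟩ hca
    have hval : Set.indicator (Iic t1) (fun s' => k s' * (q s' * f s')) t
        = k t * (q t * f t) :=
      Set.indicator_of_mem (mem_Iic.mpr (le_of_lt ht)) (fun s' => k s' * (q s' * f s'))
    rw [hval] at hd
    exact hd.const_add _
  set kc : ℝ → ℝ := fun s => Real.cos (lam * s) with hkc
  set ks : ℝ → ℝ := fun s => Real.sin (lam * s) with hks
  have hkcc : Continuous kc := Real.continuous_cos.comp (continuous_const.mul continuous_id)
  have hksc : Continuous ks := Real.continuous_sin.comp (continuous_const.mul continuous_id)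
  have hkc1 : ∀ s, |kc s| ≤ 1 := fun s => Real.abs_cos_le_one _
  have hks1 : ∀ s, |ks s| ≤ 1 := fun s => Real.abs_sin_le_one _
  set sig : ℝ → ℝ := fun t => min t t1 with hsig
  have hsigc : Continuous sig := continuous_id.min continuous_const
  have hsigle : ∀ t, sig t ≤ t1 := fun t => min_le_right _ _
  have hsigid : ∀ t, t ≤ t1 → sig t = t := fun t ht => min_eq_left ht
  have hbasebd : ∀ u, |base u| ≤ |al| + |be| := by
    intro u
    rw [hbase]
    simp only
    refine (abs_add_le _ _).trans ?_
    rw [abs_mul, abs_mul]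
    nlinarith [Real.abs_cos_le_one (lam * u), Real.abs_sin_le_one (lam * u),
      abs_nonneg al, abs_nonneg be]
  have hbasec : Continuous base := by
    rw [hbase]
    exact (continuous_const.mul hkcc).add (continuous_const.mul hksc)
  set Tfun : BoundedContinuousFunction ℝ ℝ → ℝ → ℝ := fun f t =>
    base (sig t) + Real.sin (lam * sig t) / lam * G kc f (sig t)
      - Real.cos (lam * sig t) / lam * G ks f (sig t) with hTfun
  have hTterm : ∀ f : BoundedContinuousFunction ℝ ℝ, ∀ u, u ≤ t1 →
      |Real.sin (lam * u) / lam * G kc f u| ≤ ‖f‖ / 8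
        ∧ |Real.cos (lam * u) / lam * G ks f u| ≤ ‖f‖ / 8 := by
    intro f u hu
    have h1 := hGsmall kc hkcc hkc1 f u hu
    have h2 := hGsmall ks hksc hks1 f u hu
    have hs1 : |Real.sin (lam * u)| / lam ≤ 1 / lam := by
      gcongr
      exact Real.abs_sin_le_one _
    have hs2 : |Real.cos (lam * u)| / lam ≤ 1 / lam := by
      gcongr
      exact Real.abs_cos_le_one _
    constructor
    · rw [abs_mul, abs_div, abs_of_pos hlam]
      calc |Real.sin (lam * u)| / lam * |G kc f u| ≤ 1 / lam * (lam / 8 * ‖f‖) :=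
            mul_le_mul hs1 h1 (abs_nonneg _) (by positivity)
        _ = ‖f‖ / 8 := by field_simp
    · rw [abs_mul, abs_div, abs_of_pos hlam]
      calc |Real.cos (lam * u)| / lam * |G ks f u| ≤ 1 / lam * (lam / 8 * ‖f‖) :=
            mul_le_mul hs2 h2 (abs_nonneg _) (by positivity)
        _ = ‖f‖ / 8 := by field_simp
  have hTbd : ∀ f : BoundedContinuousFunction ℝ ℝ, ∀ t,
      |Tfun f t| ≤ |al| + |be| + ‖f‖ / 4 := by
    intro f t
    obtain ⟨h1, h2⟩ := hTterm f (sig t) (hsigle t)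
    have hb := hbasebd (sig t)
    rw [hTfun]
    simp only
    refine (habs3 _ _ _).trans ?_
    linarith
  have hTcont : ∀ f : BoundedContinuousFunction ℝ ℝ, Continuous (Tfun f) := by
    intro f
    have hbig : Continuous (fun u => base u + Real.sin (lam * u) / lam * G kc f u
        - Real.cos (lam * u) / lam * G ks f u) :=
      (hbasec.add ((hksc.div_const lam).mul (hGcont kc hkcc hkc1 f))).sub
        ((hkcc.div_const lam).mul (hGcont ks hksc hks1 f))
    exact hbig.comp hsigc
  set T : BoundedContinuousFunction ℝ ℝ → BoundedContinuousFunction ℝ ℝ := fun f =>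
    BoundedContinuousFunction.ofNormedAddCommGroup (Tfun f) (hTcont f)
      (|al| + |be| + ‖f‖ / 4) (hTbd f) with hT
  have hTcoe : ∀ f : BoundedContinuousFunction ℝ ℝ, ∀ t, T f t = Tfun f t := by
    intro f t
    rw [hT]
    rfl
  have hcd : ∀ f g : BoundedContinuousFunction ℝ ℝ, dist (T f) (T g) ≤ (1/2) * dist f g := by
    intro f g
    refine (BoundedContinuousFunction.dist_le (by positivity)).mpr fun t => ?_
    rw [Real.dist_eq, hTcoe f t, hTcoe g t]
    have hdiff : Tfun f t - Tfun g t
        = Real.sin (lam * sig t) / lam * G kc (f - g) (sig t)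
          - Real.cos (lam * sig t) / lam * G ks (f - g) (sig t) := by
      rw [hTfun]
      simp only
      rw [← hGsub kc hkcc hkc1 f g (sig t), ← hGsub ks hksc hks1 f g (sig t)]
      ring
    rw [hdiff]
    obtain ⟨h1, h2⟩ := hTterm (f - g) (sig t) (hsigle t)
    have hnd : ‖f - g‖ = dist f g := (dist_eq_norm f g).symm
    calc |Real.sin (lam * sig t) / lam * G kc (f - g) (sig t)
        - Real.cos (lam * sig t) / lam * G ks (f - g) (sig t)|
        ≤ |Real.sin (lam * sig t) / lam * G kc (f - g) (sig t)|
          + |Real.cos (lam * sig t) / lam * G ks (f - g) (sig t)| := abs_sub _ _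
      _ ≤ ‖f - g‖ / 8 + ‖f - g‖ / 8 := add_le_add h1 h2
      _ ≤ 1 / 2 * dist f g := by rw [← hnd]; linarith [norm_nonneg (f - g)]
  have hcontr : ContractingWith (1/2 : NNReal) T := by
    constructor
    · rw [← NNReal.coe_lt_coe]
      norm_num
    · apply LipschitzWith.of_dist_le_mul
      intro f g
      refine le_trans (hcd f g) (le_of_eq ?_)
      norm_num
  haveI : Nonempty (BoundedContinuousFunction ℝ ℝ) := ⟨0⟩
  set w : BoundedContinuousFunction ℝ ℝ := ContractingWith.fixedPoint T hcontr with hwdef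
  have hfix : T w = w := hcontr.fixedPoint_isFixedPt
  have hw : ∀ t, (w : ℝ → ℝ) t = Tfun w t := by
    intro t
    conv_lhs => rw [← hfix]
    exact hTcoe w t
  have hw1 : ∀ t, t ≤ t1 → (w : ℝ → ℝ) t = base t
      + Real.sin (lam * t) / lam * G kc w t - Real.cos (lam * t) / lam * G ks w t := by
    intro t ht
    rw [hw t, hTfun]
    simp only [hsigid t ht]
  have hsinD : ∀ t : ℝ, HasDerivAt (fun u => Real.sin (lam * u)) (Real.cos (lam * t) * lam) t := by
    intro t
    have h := (Real.hasDerivAt_sin (lam * t)).comp t ((hasDerivAt_id t).const_mul lam)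
    simpa [Function.comp_def] using h
  have hcosD : ∀ t : ℝ, HasDerivAt (fun u => Real.cos (lam * u))
      (-Real.sin (lam * t) * lam) t := by
    intro t
    have h := (Real.hasDerivAt_cos (lam * t)).comp t ((hasDerivAt_id t).const_mul lam)
    simpa [Function.comp_def] using h
  have hCd : ∀ t, t < t1 → HasDerivAt (G kc w) (kc t * (q t * w t)) t :=
    fun t ht => hGderiv kc hkcc hkc1 w t ht
  have hSd : ∀ t, t < t1 → HasDerivAt (G ks w) (ks t * (q t * w t)) t :=
    fun t ht => hGderiv ks hksc hks1 w t ht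
  set w' : ℝ → ℝ := fun t => lam * (be * Real.cos (lam * t) - al * Real.sin (lam * t))
      + Real.cos (lam * t) * G kc w t + Real.sin (lam * t) * G ks w t with hw'def
  have hbaseD : ∀ t : ℝ, HasDerivAt base
      (al * (-Real.sin (lam * t) * lam) + be * (Real.cos (lam * t) * lam)) t := by
    intro t
    rw [hbase]
    exact ((hcosD t).const_mul al).add ((hsinD t).const_mul be)
  have hderivw : ∀ t, t < t1 → HasDerivAt (w : ℝ → ℝ) (w' t) t := by
    intro t ht
    have hev : (w : ℝ → ℝ) =ᶠ[𝓝 t] (fun u => base u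
        + Real.sin (lam * u) / lam * G kc w u - Real.cos (lam * u) / lam * G ks w u) :=
      eventuallyEq_of_mem (Iio_mem_nhds ht) fun u hu => hw1 u (le_of_lt hu)
    have h2 : HasDerivAt (fun u => Real.sin (lam * u) / lam * G kc w u)
        (Real.cos (lam * t) * lam / lam * G kc w t
          + Real.sin (lam * t) / lam * (kc t * (q t * w t))) t :=
      HasDerivAt.mul ((hsinD t).div_const lam) (hCd t ht)
    have h3 : HasDerivAt (fun u => Real.cos (lam * u) / lam * G ks w u)
        (-Real.sin (lam * t) * lam / lam * G ks w t
          + Real.cos (lam * t) / lam * (ks t * (q t * w t))) t :=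
      HasDerivAt.mul ((hcosD t).div_const lam) (hSd t ht)
    have h4 := ((hbaseD t).add h2).sub h3
    refine hev.hasDerivAt_iff.mpr ?_
    refine h4.congr_deriv (Eq.symm ?_)
    rw [hw'def, hkc, hks]
    simp only
    field_simp
    ring
  have hderivw' : ∀ t, t < t1 → HasDerivAt w' (-V t * (w : ℝ → ℝ) t) t := by
    intro t ht
    have h1 : HasDerivAt (fun u => lam * (be * Real.cos (lam * u) - al * Real.sin (lam * u)))
        (lam * (be * (-Real.sin (lam * t) * lam) - al * (Real.cos (lam * t) * lam))) t :=
      (((hcosD t).const_mul be).sub ((hsinD t).const_mul al)).const_mul lam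
    have h2 : HasDerivAt (fun u => Real.cos (lam * u) * G kc w u)
        (-Real.sin (lam * t) * lam * G kc w t
          + Real.cos (lam * t) * (kc t * (q t * w t))) t :=
      HasDerivAt.mul (hcosD t) (hCd t ht)
    have h3 : HasDerivAt (fun u => Real.sin (lam * u) * G ks w u)
        (Real.cos (lam * t) * lam * G ks w t
          + Real.sin (lam * t) * (ks t * (q t * w t))) t :=
      HasDerivAt.mul (hsinD t) (hSd t ht)
    have h4 := (h1.add h2).add h3
    rw [hw'def]
    refine h4.congr_deriv (Eq.symm ?_)
    have hpyth := Real.sin_sq_add_cos_sq (lam * t)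
    have hwt := hw1 t (le_of_lt ht)
    have hqt : q t = lam ^ 2 - V t := by rw [hq]
    have hwt2 : lam * (w : ℝ → ℝ) t = lam * base t
        + Real.sin (lam * t) * G kc w t - Real.cos (lam * t) * G ks w t := by
      rw [hwt]
      field_simp
    rw [hkc, hks]
    simp only
    linear_combination (-(q t * (w : ℝ → ℝ) t)) * hpyth + (-((w : ℝ → ℝ) t)) * hqt
      + (-lam) * hwt2
  set B : ℝ := max ‖w‖ (lam * (|al| + |be|) + lam / 4 * ‖w‖) with hB
  have hwb : ∀ t, |(w : ℝ → ℝ) t| ≤ B := by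
    intro t
    refine le_trans ?_ (le_max_left _ _)
    simpa [Real.norm_eq_abs] using w.norm_coe_le_norm t
  have hw'b : ∀ t, t < t1 → |w' t| ≤ B := by
    intro t ht
    have h1 : |lam * (be * Real.cos (lam * t) - al * Real.sin (lam * t))|
        ≤ lam * (|al| + |be|) := by
      rw [abs_mul, abs_of_pos hlam]
      have h0 : |be * Real.cos (lam * t) - al * Real.sin (lam * t)| ≤ |al| + |be| := by
        refine (abs_sub _ _).trans ?_
        rw [abs_mul, abs_mul]
        nlinarith [Real.abs_cos_le_one (lam * t), Real.abs_sin_le_one (lam * t),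
          abs_nonneg al, abs_nonneg be]
      exact mul_le_mul_of_nonneg_left h0 hlam.le
    have h2 : |Real.cos (lam * t) * G kc w t| ≤ lam / 8 * ‖w‖ := by
      rw [abs_mul]
      have := hGsmall kc hkcc hkc1 w t (le_of_lt ht)
      nlinarith [Real.abs_cos_le_one (lam * t), abs_nonneg (G kc w t), norm_nonneg w,
        abs_nonneg (Real.cos (lam * t))]
    have h3 : |Real.sin (lam * t) * G ks w t| ≤ lam / 8 * ‖w‖ := by
      rw [abs_mul]
      have := hGsmall ks hksc hks1 w t (le_of_lt ht)
      nlinarith [Real.abs_sin_le_one (lam * t), abs_nonneg (G ks w t), norm_nonneg w,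
        abs_nonneg (Real.sin (lam * t))]
    have h4 : |w' t| ≤ lam * (|al| + |be|) + lam / 8 * ‖w‖ + lam / 8 * ‖w‖ := by
      rw [hw'def]
      simp only
      exact (habs3p _ _ _).trans (add_le_add (add_le_add h1 h2) h3)
    refine le_trans h4 (le_trans ?_ (le_max_right _ _))
    linarith [norm_nonneg w, hlam.le]
  have htend : Tendsto (fun t => (w : ℝ → ℝ) t - base t) atBot (𝓝 0) := by
    apply squeeze_zero_norm' (a := fun t => 2 * c * ‖w‖ / (lam * eta) * Real.exp (eta * t))
    · filter_upwards [Iic_mem_atBot t1] with t ht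
      have h1 := habs kc hkcc hkc1 w t
      have h2 := habs ks hksc hks1 w t
      have heq : (w : ℝ → ℝ) t - base t
          = Real.sin (lam * t) / lam * G kc w t - Real.cos (lam * t) / lam * G ks w t := by
        rw [hw1 t ht]
        ring
      rw [Real.norm_eq_abs, heq]
      have hX : |Real.sin (lam * t) / lam * G kc w t|
          ≤ 1 / lam * (c * Real.exp (eta * t) / eta * ‖w‖) := by
        rw [abs_mul, abs_div, abs_of_pos hlam]
        refine mul_le_mul ?_ h1 (abs_nonneg _) (by positivity)
        gcongr
        exact Real.abs_sin_le_one _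
      have hY : |Real.cos (lam * t) / lam * G ks w t|
          ≤ 1 / lam * (c * Real.exp (eta * t) / eta * ‖w‖) := by
        rw [abs_mul, abs_div, abs_of_pos hlam]
        refine mul_le_mul ?_ h2 (abs_nonneg _) (by positivity)
        gcongr
        exact Real.abs_cos_le_one _
      refine (abs_sub _ _).trans ?_
      refine (add_le_add hX hY).trans (le_of_eq ?_)
      field_simp
      ring
    · have h1 : Tendsto (fun t : ℝ => eta * t) atBot atBot :=
        tendsto_id.const_mul_atBot heta
      have h2 : Tendsto (fun t : ℝ => Real.exp (eta * t)) atBot (𝓝 0) :=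
        Real.tendsto_exp_atBot.comp h1
      have h3 := h2.const_mul (2 * c * ‖w‖ / (lam * eta))
      simpa using h3
  exact ⟨w, w', B, w.continuous, hwb, hw'b, hderivw, hderivw', htend⟩

end Stmt6

open MeasureTheory intervalIntegral Real Set Filter Topology in
/-- oscillatory regime `V → +λ²`: a fundamental system
asymptotic to `cos(λ t)` and `sin(λ t)` at `-∞`, bounded with bounded
derivatives on `(-∞, t₀)`. -/
theorem stmt6 (lam eta c t0 : ℝ) (hlam : 0 < lam) (heta : 0 < eta) (hc : 0 < c)
    (V : ℝ → ℝ) (hV : ContDiff ℝ (⊤ : ℕ∞) V)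
    (hVb : ∀ t < t0, |V t - lam ^ 2| ≤ c * Real.exp (eta * t)) :
    ∃ wp wm : ℝ → ℝ,
      ContDiff ℝ 2 wp ∧ ContDiff ℝ 2 wm ∧
      (∀ t : ℝ, deriv (deriv wp) t + V t * wp t = 0) ∧
      (∀ t : ℝ, deriv (deriv wm) t + V t * wm t = 0) ∧
      (∀ a : ℝ, wp ≠ fun t => a * wm t) ∧
      (∀ a : ℝ, wm ≠ fun t => a * wp t) ∧
      Filter.Tendsto (fun t => wp t - Real.cos (lam * t)) Filter.atBot (nhds 0) ∧
      Filter.Tendsto (fun t => wm t - Real.sin (lam * t)) Filter.atBot (nhds 0) ∧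
      ∃ M : ℝ, ∀ t < t0,
        |wp t| ≤ M ∧ |wm t| ≤ M ∧ |deriv wp t| ≤ M ∧ |deriv wm t| ≤ M := by
  classical
  have hVc : Continuous V := hV.continuous
  set L0 : ℝ := (1/eta) * Real.log (lam * eta / (8*c)) with hL0
  set t1 : ℝ := min (t0 - 1) L0 with ht1
  have ht1t0 : t1 < t0 := lt_of_le_of_lt (min_le_left _ _) (by linarith)
  have hVb' : ∀ t ≤ t1, |V t - lam ^ 2| ≤ c * Real.exp (eta * t) := fun t ht =>
    hVb t (lt_of_le_of_lt ht ht1t0)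
  have hsmall : c * Real.exp (eta * t1) / eta ≤ lam / 8 := by
    have h1 : eta * t1 ≤ eta * L0 := mul_le_mul_of_nonneg_left (min_le_right _ _) heta.le
    have h3 : eta * L0 = Real.log (lam * eta / (8*c)) := by rw [hL0]; field_simp
    have h4 : Real.exp (eta * t1) ≤ lam * eta / (8*c) := by
      rw [← Real.exp_log (show (0:ℝ) < lam * eta/(8*c) by positivity), ← h3]
      exact Real.exp_le_exp.mpr h1
    calc c * Real.exp (eta * t1) / eta ≤ c * (lam * eta / (8*c)) / eta := by gcongr
      _ = lam / 8 := by field_simp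
  obtain ⟨w, w', B, hwc, hwb, hw'b, hwd, hwd', hwt⟩ :=
    Stmt6.half_line lam eta c t1 hlam heta hc 1 0 V hVc hVb' hsmall
  obtain ⟨v, v', Bv, hvc, hvb, hv'b, hvd, hvd', hvt⟩ :=
    Stmt6.half_line lam eta c t1 hlam heta hc 0 1 V hVc hVb' hsmall
  have hwt0 : Tendsto (fun t => w t - Real.cos (lam * t)) atBot (𝓝 0) := by
    simpa using hwt
  have hvt0 : Tendsto (fun t => v t - Real.sin (lam * t)) atBot (𝓝 0) := by
    simpa using hvt
  set a : ℝ := t1 - 1 with ha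
  have hat1 : a < t1 := by rw [ha]; linarith
  obtain ⟨x, hxc, hxa, hxd⟩ := Stmt6.exists_sol_global V hVc a (w a, w' a)
  obtain ⟨y, hyc, hya, hyd⟩ := Stmt6.exists_sol_global V hVc a (v a, v' a)
  have hident : ∀ (z : ℝ → ℝ × ℝ) (u u' : ℝ → ℝ),
      (∀ t, HasDerivAt z (Stmt6.vf V t (z t)) t) →
      (∀ t < t1, HasDerivAt u (u' t) t) →
      (∀ t < t1, HasDerivAt u' (-V t * u t) t) →
      z a = (u a, u' a) → ∀ t, t < t1 → z t = (u t, u' t) := by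
    intro z u u' hz hu hu' hza t ht
    set T : ℝ := min (t - 1) (a - 1) with hT
    have hTa : T ≤ a - 1 := min_le_right _ _
    have hTt : T ≤ t - 1 := min_le_left _ _
    have haI : a ∈ Ioo T t1 := ⟨by linarith, hat1⟩
    have htI : t ∈ Ioo T t1 := ⟨by linarith, ht⟩
    refine Stmt6.sol_unique (y := fun s => (u s, u' s)) V hVc haI
      (fun s _ => hz s) (fun s hs => ?_) hza htI
    exact (hu s hs.2).prodMk (hu' s hs.2)
  have hxw := hident x w w' hxd hwd hwd' hxa
  have hyv := hident y v v' hyd hvd hvd' hya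
  -- generic facts about a global solution
  have hpack : ∀ z : ℝ → ℝ × ℝ, Continuous z →
      (∀ t, HasDerivAt z (Stmt6.vf V t (z t)) t) →
      ContDiff ℝ 2 (fun s => (z s).1)
        ∧ (deriv (fun s => (z s).1) = fun s => (z s).2)
        ∧ (∀ t, deriv (deriv (fun s => (z s).1)) t + V t * (z t).1 = 0) := by
    intro z hzc hz
    have hd1 : ∀ t, HasDerivAt (fun s => (z s).1) ((z t).2) t := fun t => (hz t).fst
    have hd2 : ∀ t, HasDerivAt (fun s => (z s).2) (-V t * (z t).1) t := fun t => (hz t).snd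
    have hdz : deriv (fun s => (z s).1) = fun s => (z s).2 := funext fun t => (hd1 t).deriv
    have hdz2 : deriv (fun s => (z s).2) = fun s => -V s * (z s).1 :=
      funext fun t => (hd2 t).deriv
    have hc1 : ContDiff ℝ 1 (fun s => (z s).2) := by
      rw [contDiff_one_iff_deriv]
      refine ⟨fun t => (hd2 t).differentiableAt, ?_⟩
      rw [hdz2]
      exact hVc.neg.mul (continuous_fst.comp hzc)
    refine ⟨?_, hdz, ?_⟩
    · have h2 : (2 : WithTop ℕ∞) = 1 + 1 := by norm_num
      rw [h2, contDiff_succ_iff_deriv]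
      refine ⟨fun t => (hd1 t).differentiableAt, by simp, ?_⟩
      rw [hdz]
      exact hc1
    · intro t
      rw [hdz]
      rw [show deriv (fun s => (z s).2) t = -V t * (z t).1 from (hd2 t).deriv]
      ring
  obtain ⟨hsm1, hdwp, hode1⟩ := hpack x hxc hxd
  obtain ⟨hsm2, hdwm, hode2⟩ := hpack y hyc hyd
  -- asymptotics
  have htendp : Tendsto (fun t => (x t).1 - Real.cos (lam * t)) atBot (𝓝 0) := by
    refine hwt0.congr' ?_
    filter_upwards [Iio_mem_atBot a] with t ht
    rw [show (x t).1 = w t from congrArg Prod.fst (hxw t (lt_trans ht hat1))]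
  have htendm : Tendsto (fun t => (y t).1 - Real.sin (lam * t)) atBot (𝓝 0) := by
    refine hvt0.congr' ?_
    filter_upwards [Iio_mem_atBot a] with t ht
    rw [show (y t).1 = v t from congrArg Prod.fst (hyv t (lt_trans ht hat1))]
  -- the limit-sequence helper
  have hseq : ∀ F : ℝ → ℝ, Tendsto F atBot (𝓝 0) → ∀ u : ℕ → ℝ,
      Tendsto u atTop atBot → (∀ n, F (u n) = 1) → False := by
    intro F hF u hu hval
    have h1 : Tendsto (fun n => F (u n)) atTop (𝓝 0) := hF.comp hu
    have h2 : Tendsto (fun n => F (u n)) atTop (𝓝 1) := by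
      rw [show (fun n => F (u n)) = fun _ => (1:ℝ) from funext hval]
      exact tendsto_const_nhds
    exact absurd (tendsto_nhds_unique h1 h2) (by norm_num)
  have hbaseTendsto : Tendsto (fun n : ℕ => -(2*Real.pi) / lam * (n:ℝ)) atTop atBot := by
    refine (tendsto_const_mul_atBot_of_neg ?_).mpr tendsto_natCast_atTop_atTop
    have : (0:ℝ) < 2 * Real.pi := by positivity
    apply div_neg_of_neg_of_pos (by linarith) hlam
  -- independence 1 : wp ≠ aa * wm
  have hind1 : ∀ aa : ℝ, (fun t => (x t).1) ≠ fun t => aa * (y t).1 := by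
    intro aa h
    have hF : Tendsto (fun t => Real.cos (lam * t) - aa * Real.sin (lam * t)) atBot (𝓝 0) := by
      have h1 := (htendm.const_mul aa).sub htendp
      simp only [mul_zero, sub_zero] at h1
      refine h1.congr fun t => ?_
      have ht := congrFun h t
      rw [ht]
      ring
    refine hseq _ hF (fun n : ℕ => -(2*Real.pi*(n:ℝ)) / lam) ?_ ?_
    · refine hbaseTendsto.congr fun n => by ring
    · intro n
      have harg : lam * (-(2*Real.pi*(n:ℝ)) / lam) = -(2*Real.pi*(n:ℝ)) := by
        field_simp
      rw [harg, Real.cos_neg, Real.sin_neg]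
      rw [show 2*Real.pi*(n:ℝ) = (n:ℝ) * (2*Real.pi) by ring]
      rw [Real.cos_nat_mul_two_pi]
      rw [show (n:ℝ) * (2*Real.pi) = ((2*n : ℕ) : ℝ) * Real.pi by push_cast; ring]
      rw [Real.sin_nat_mul_pi]
      ring
  -- independence 2 : wm ≠ aa * wp
  have hind2 : ∀ aa : ℝ, (fun t => (y t).1) ≠ fun t => aa * (x t).1 := by
    intro aa h
    have hF : Tendsto (fun t => Real.sin (lam * t) - aa * Real.cos (lam * t)) atBot (𝓝 0) := by
      have h1 := (htendp.const_mul aa).sub htendm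
      simp only [mul_zero, sub_zero] at h1
      refine h1.congr fun t => ?_
      have ht := congrFun h t
      rw [ht]
      ring
    refine hseq _ hF (fun n : ℕ => (Real.pi/2 - 2*Real.pi*(n:ℝ)) / lam) ?_ ?_
    · have h2 : Tendsto (fun n : ℕ => Real.pi/2/lam + -(2*Real.pi)/lam * (n:ℝ))
          atTop atBot := tendsto_atBot_add_const_left _ _ hbaseTendsto
      refine h2.congr fun n => by field_simp; ring
    · intro n
      have harg : lam * ((Real.pi/2 - 2*Real.pi*(n:ℝ)) / lam)
          = Real.pi/2 - 2*Real.pi*(n:ℝ) := by field_simp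
      rw [harg, Real.sin_pi_div_two_sub, Real.cos_pi_div_two_sub]
      rw [show 2*Real.pi*(n:ℝ) = (n:ℝ) * (2*Real.pi) by ring]
      rw [Real.cos_nat_mul_two_pi]
      rw [show (n:ℝ) * (2*Real.pi) = ((2*n : ℕ) : ℝ) * Real.pi by push_cast; ring]
      rw [Real.sin_nat_mul_pi]
      ring
  -- bounds
  obtain ⟨Mx, hMx⟩ := isCompact_Icc.exists_bound_of_continuousOn
    (hxc.continuousOn : ContinuousOn x (Icc a t0))
  obtain ⟨My, hMy⟩ := isCompact_Icc.exists_bound_of_continuousOn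
    (hyc.continuousOn : ContinuousOn y (Icc a t0))
  set M : ℝ := max (max B Bv) (max Mx My) with hM
  have hBM : B ≤ M := le_trans (le_max_left _ _) (le_max_left _ _)
  have hBvM : Bv ≤ M := le_trans (le_max_right _ _) (le_max_left _ _)
  have hMxM : Mx ≤ M := le_trans (le_max_left _ _) (le_max_right _ _)
  have hMyM : My ≤ M := le_trans (le_max_right _ _) (le_max_right _ _)
  have hbounds : ∀ t < t0, |(x t).1| ≤ M ∧ |(y t).1| ≤ M
      ∧ |deriv (fun s => (x s).1) t| ≤ M ∧ |deriv (fun s => (y s).1) t| ≤ M := by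
    intro t ht
    simp only [hdwp, hdwm]
    by_cases hta : t < a
    · have hx' := hxw t (lt_trans hta hat1)
      have hy' := hyv t (lt_trans hta hat1)
      rw [show (x t).1 = w t from congrArg Prod.fst hx',
        show (x t).2 = w' t from congrArg Prod.snd hx',
        show (y t).1 = v t from congrArg Prod.fst hy',
        show (y t).2 = v' t from congrArg Prod.snd hy']
      exact ⟨(hwb t).trans hBM, (hvb t).trans hBvM,
        (hw'b t (lt_trans hta hat1)).trans hBM, (hv'b t (lt_trans hta hat1)).trans hBvM⟩
    · have htIcc : t ∈ Icc a t0 := ⟨not_lt.mp hta, le_of_lt ht⟩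
      have h1 : ‖x t‖ ≤ Mx := hMx t htIcc
      have h2 : ‖y t‖ ≤ My := hMy t htIcc
      have hf1 : |(x t).1| ≤ ‖x t‖ := by
        rw [← Real.norm_eq_abs]; exact norm_fst_le (x t)
      have hf2 : |(x t).2| ≤ ‖x t‖ := by
        rw [← Real.norm_eq_abs]; exact norm_snd_le (x t)
      have hg1 : |(y t).1| ≤ ‖y t‖ := by
        rw [← Real.norm_eq_abs]; exact norm_fst_le (y t)
      have hg2 : |(y t).2| ≤ ‖y t‖ := by
        rw [← Real.norm_eq_abs]; exact norm_snd_le (y t)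
      exact ⟨(hf1.trans h1).trans hMxM, (hg1.trans h2).trans hMyM,
        (hf2.trans h1).trans hMxM, (hg2.trans h2).trans hMyM⟩
  exact ⟨fun t => (x t).1, fun t => (y t).1, hsm1, hsm2, hode1, hode2, hind1, hind2,
    htendp, htendm, M, hbounds⟩
end

section
/- Let λ > 0, η > 0, c > 0 and t₀ ∈ ℝ, and let V : ℝ → ℝ be a smooth function satisfying |V(t) − λ²| ≤ c·exp(η·t) for all t < t₀. Then every twice continuously differentiable solution w : ℝ → ℝ of w''(t) + V(t)·w(t) = 0 is bounded, together with its derivative, on the interval (−∞, t₀); that is, there exists M > 0 with |w(t)| + |w'(t)| ≤ M for all t ≤ t₀. -/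
/-- oscillatory regime: every solution is bounded together
with its derivative on `(-∞, t₀]`. -/
theorem stmt7 (lam eta c t0 : ℝ) (hlam : 0 < lam) (heta : 0 < eta) (hc : 0 < c)
    (V : ℝ → ℝ) (hV : ContDiff ℝ (⊤ : ℕ∞) V)
    (hVb : ∀ t < t0, |V t - lam ^ 2| ≤ c * Real.exp (eta * t))
    (w : ℝ → ℝ) (hw : ContDiff ℝ 2 w)
    (hode : ∀ t : ℝ, deriv (deriv w) t + V t * w t = 0) :
    ∃ M : ℝ, 0 < M ∧ ∀ t ≤ t0, |w t| + |deriv w t| ≤ M := by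
  have hlam2 : 0 < lam ^ 2 := by positivity
  -- differentiability facts
  have hw' : ContDiff ℝ ((1:ℕ∞) + 1) w := by exact_mod_cast hw
  have hdd := contDiff_succ_iff_deriv.mp hw'
  have hw1 : Differentiable ℝ w := hdd.1
  have hw2 : Differentiable ℝ (deriv w) := hdd.2.2.differentiable (by simp)
  -- energy
  set K : ℝ := c * (1 + 1 / lam ^ 2) with hK
  have hKpos : 0 < K := by positivity
  set E : ℝ → ℝ := fun t => (deriv w t) ^ 2 + lam ^ 2 * (w t) ^ 2 with hE
  set φ : ℝ → ℝ := fun t => K / eta * Real.exp (eta * t) with hφ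
  set G : ℝ → ℝ := fun t => E t * Real.exp (φ t) with hG
  have hEnonneg : ∀ t, 0 ≤ E t := fun t => by positivity
  have hEd : ∀ t, HasDerivAt E
      (2 * deriv w t * deriv (deriv w) t + lam ^ 2 * (2 * w t * deriv w t)) t := by
    intro t
    have h1 : HasDerivAt (fun s => (deriv w s) ^ 2)
        (2 * deriv w t * deriv (deriv w) t) t := by
      have := ((hw2 t).hasDerivAt).fun_pow 2
      simpa [mul_comm, mul_assoc, mul_left_comm] using this
    have h2 : HasDerivAt (fun s => lam ^ 2 * (w s) ^ 2)
        (lam ^ 2 * (2 * w t * deriv w t)) t := by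
      have := (((hw1 t).hasDerivAt).pow 2).const_mul (lam ^ 2)
      simpa [mul_comm, mul_assoc, mul_left_comm] using this
    exact h1.add h2
  have hφd : ∀ t, HasDerivAt φ (K * Real.exp (eta * t)) t := by
    intro t
    have h0 : HasDerivAt (fun s => eta * s) eta t := by
      simpa using (hasDerivAt_id t).const_mul eta
    have := (h0.exp).const_mul (K / eta)
    have hne : eta ≠ 0 := ne_of_gt heta
    refine this.congr_deriv ?_
    field_simp
  have hGd : ∀ t, HasDerivAt G
      ((2 * deriv w t * deriv (deriv w) t + lam ^ 2 * (2 * w t * deriv w t))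
        * Real.exp (φ t) + E t * (Real.exp (φ t) * (K * Real.exp (eta * t)))) t := by
    intro t
    exact (hEd t).mul ((hφd t).exp)
  have hGdiff : Differentiable ℝ G := fun t => (hGd t).differentiableAt
  -- monotonicity of G on Iic t0
  have hmono : MonotoneOn G (Set.Iic t0) := by
    apply monotoneOn_of_deriv_nonneg (convex_Iic t0) hGdiff.continuous.continuousOn
      (fun t _ => (hGd t).differentiableAt.differentiableWithinAt)
    intro t ht
    rw [interior_Iic] at ht
    rw [(hGd t).deriv]
    have hode' := hode t
    have hw'' : deriv (deriv w) t = -(V t * w t) := by linarith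
    have hVt := hVb t ht
    have habs : |(lam ^ 2 - V t)| ≤ c * Real.exp (eta * t) := by
      rw [abs_sub_comm]; exact hVt
    have hexp : 0 < Real.exp (φ t) := Real.exp_pos _
    have key : 0 ≤ 2 * deriv w t * deriv (deriv w) t + lam ^ 2 * (2 * w t * deriv w t)
        + E t * (K * Real.exp (eta * t)) := by
      rw [hw'']
      have hE' : 2 * deriv w t * (-(V t * w t)) + lam ^ 2 * (2 * w t * deriv w t)
          = 2 * deriv w t * w t * (lam ^ 2 - V t) := by ring
      rw [hE']
      have h1 : -(c * Real.exp (eta * t)) ≤ (lam ^ 2 - V t) := neg_le_of_abs_le habs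
      have h2 : (lam ^ 2 - V t) ≤ c * Real.exp (eta * t) := le_of_abs_le habs
      have hb : |2 * deriv w t * w t * (lam ^ 2 - V t)|
          ≤ (2 * |deriv w t| * |w t|) * (c * Real.exp (eta * t)) := by
        rw [abs_mul]
        apply mul_le_mul _ habs (abs_nonneg _) (by positivity)
        rw [abs_mul, abs_mul]
        simp
      have hsq : 2 * |deriv w t| * |w t| ≤ (deriv w t) ^ 2 + (w t) ^ 2 := by
        nlinarith [sq_nonneg (|deriv w t| - |w t|), sq_abs (deriv w t), sq_abs (w t)]
      have hEK : ((deriv w t) ^ 2 + (w t) ^ 2) * c ≤ E t * K := by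
        have hKl : K * lam ^ 2 = c * (lam ^ 2 + 1) := by
          rw [hK]; field_simp
        rw [← mul_le_mul_iff_of_pos_right hlam2]
        have hEt : E t = (deriv w t) ^ 2 + lam ^ 2 * (w t) ^ 2 := rfl
        have hre : ((deriv w t) ^ 2 + lam ^ 2 * (w t) ^ 2) * K * lam ^ 2
            = ((deriv w t) ^ 2 + lam ^ 2 * (w t) ^ 2) * (c * (lam ^ 2 + 1)) := by
          rw [mul_assoc, hKl]
        rw [hEt, hre]
        nlinarith [mul_nonneg hc.le (sq_nonneg (deriv w t)),
          mul_nonneg hc.le (mul_nonneg hlam2.le (mul_nonneg hlam2.le (sq_nonneg (w t))))]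
      have hEb : (2 * |deriv w t| * |w t|) * (c * Real.exp (eta * t))
          ≤ E t * (K * Real.exp (eta * t)) := by
        have he : (0:ℝ) ≤ Real.exp (eta * t) := (Real.exp_pos _).le
        calc (2 * |deriv w t| * |w t|) * (c * Real.exp (eta * t))
            ≤ ((deriv w t) ^ 2 + (w t) ^ 2) * (c * Real.exp (eta * t)) :=
              mul_le_mul_of_nonneg_right hsq (by positivity)
          _ = (((deriv w t) ^ 2 + (w t) ^ 2) * c) * Real.exp (eta * t) := by ring
          _ ≤ (E t * K) * Real.exp (eta * t) := mul_le_mul_of_nonneg_right hEK he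
          _ = E t * (K * Real.exp (eta * t)) := by ring
      have := neg_le_of_abs_le hb
      linarith
    nlinarith [mul_nonneg key hexp.le]
  -- conclude
  set B : ℝ := E t0 * Real.exp (φ t0) with hB
  have hBnonneg : 0 ≤ B := by
    have := hEnonneg t0
    positivity
  have hEle : ∀ t ≤ t0, E t ≤ B := by
    intro t ht
    have h1 : G t ≤ G t0 := hmono ht (le_refl t0 : t0 ∈ Set.Iic t0) ht
    have h2 : 1 ≤ Real.exp (φ t) := by
      have : 0 ≤ φ t := by
        rw [hφ]; positivity
      simpa using Real.one_le_exp this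
    have h3 : E t * 1 ≤ E t * Real.exp (φ t) :=
      mul_le_mul_of_nonneg_left h2 (hEnonneg t)
    calc E t = E t * 1 := by ring
      _ ≤ G t := h3
      _ ≤ G t0 := h1
      _ = B := rfl
  refine ⟨Real.sqrt B * (1 + 1 / lam) + 1, by positivity, ?_⟩
  intro t ht
  have hEt := hEle t ht
  have hEt' : (deriv w t) ^ 2 + lam ^ 2 * (w t) ^ 2 ≤ B := hEt
  have h1 : lam * |w t| ≤ Real.sqrt B := by
    rw [show lam * |w t| = Real.sqrt ((lam * w t) ^ 2) by
      rw [Real.sqrt_sq_eq_abs, abs_mul, abs_of_pos hlam]]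
    apply Real.sqrt_le_sqrt
    nlinarith [sq_nonneg (deriv w t)]
  have h2 : |deriv w t| ≤ Real.sqrt B := by
    rw [show |deriv w t| = Real.sqrt ((deriv w t) ^ 2) from (Real.sqrt_sq_eq_abs _).symm]
    apply Real.sqrt_le_sqrt
    nlinarith [mul_nonneg hlam2.le (sq_nonneg (w t))]
  have h1' : |w t| ≤ Real.sqrt B / lam := by
    rw [le_div_iff₀ hlam, mul_comm]
    exact h1
  have hsplit : Real.sqrt B * (1 + 1 / lam) = Real.sqrt B + Real.sqrt B / lam := by
    field_simp
  linarith [h1', h2, hsplit]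
end

section
/- Let λ > 0, η > 0, c > 0 and t₀ ∈ ℝ, and let V : ℝ → ℝ be a smooth function satisfying |V(t) − λ²| ≤ c·exp(η·t) for all t < t₀. If w : ℝ → ℝ is a twice continuously differentiable solution of w''(t) + V(t)·w(t) = 0 such that w(t) → 0 as t → −∞, then w is identically zero on ℝ. -/
open Filter Set Real

set_option maxHeartbeats 1000000

/-- oscillatory regime: a solution decaying at `-∞` is
identically zero. -/
theorem stmt8 (lam eta c t0 : ℝ) (hlam : 0 < lam) (heta : 0 < eta) (hc : 0 < c)
    (V : ℝ → ℝ) (hV : ContDiff ℝ (⊤ : ℕ∞) V)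
    (hVb : ∀ t < t0, |V t - lam ^ 2| ≤ c * Real.exp (eta * t))
    (w : ℝ → ℝ) (hw : ContDiff ℝ 2 w)
    (hode : ∀ t : ℝ, deriv (deriv w) t + V t * w t = 0)
    (hdec : Filter.Tendsto w Filter.atBot (nhds 0)) :
    ∀ t : ℝ, w t = 0 := by
  -- basic differentiability
  have h2 : ((2 : ℕ) : WithTop ℕ∞) = (1 : ℕ) + 1 := by norm_num
  have hw1 : Differentiable ℝ w := hw.differentiable (by norm_num)
  have hwd : ContDiff ℝ 1 (deriv w) := by
    have hw' : ContDiff ℝ ((1 : WithTop ℕ∞) + 1) w := by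
      rw [show ((1 : WithTop ℕ∞) + 1) = 2 by norm_num]; exact_mod_cast hw
    exact (contDiff_succ_iff_deriv.mp hw').2.2
  have hw2 : Differentiable ℝ (deriv w) := hwd.differentiable (by norm_num)
  have hODE : ∀ t, deriv (deriv w) t = -(V t * w t) := fun t => by linarith [hode t]
  -- the energy
  set E : ℝ → ℝ := fun s => (deriv w s) ^ 2 + lam ^ 2 * (w s) ^ 2 with hEdef
  set E' : ℝ → ℝ := fun s => 2 * (w s * deriv w s) * (lam ^ 2 - V s) with hE'def
  have hEnn : ∀ s, 0 ≤ E s := fun s => by positivity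
  have habs : ∀ s, 2 * |w s * deriv w s| * lam ≤ E s := by
    intro s
    show 2 * |w s * deriv w s| * lam ≤ deriv w s ^ 2 + lam ^ 2 * (w s) ^ 2
    rcases abs_cases (w s * deriv w s) with ⟨h, _⟩ | ⟨h, _⟩ <;> rw [h] <;>
      nlinarith [sq_nonneg (lam * w s - deriv w s), sq_nonneg (lam * w s + deriv w s)]
  have hE : ∀ t, HasDerivAt E (E' t) t := by
    intro t
    have h1 : HasDerivAt w (deriv w t) t := (hw1 t).hasDerivAt
    have hdd : HasDerivAt (deriv w) (deriv (deriv w) t) t := (hw2 t).hasDerivAt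
    have := (hdd.pow 2).add ((h1.pow 2).const_mul (lam ^ 2))
    refine HasDerivAt.congr_deriv this ?_
    rw [hE'def, hODE t]; push_cast; ring
  have hEdiff : Differentiable ℝ E := fun s => (hE s).differentiableAt
  -- bound on E' near -∞
  have hEb : ∀ s, s < t0 → |E' s| ≤ (c / lam) * Real.exp (eta * s) * E s := by
    intro s hs
    have h1 : |lam ^ 2 - V s| ≤ c * Real.exp (eta * s) := abs_sub_comm (V s) (lam ^ 2) ▸ hVb s hs
    have hexp : 0 < Real.exp (eta * s) := Real.exp_pos _
    have : |E' s| = 2 * |w s * deriv w s| * |lam ^ 2 - V s| := by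
      rw [hE'def]; rw [abs_mul, abs_mul]; simp [abs_of_nonneg]
    rw [this]
    calc 2 * |w s * deriv w s| * |lam ^ 2 - V s|
        ≤ (E s / lam) * (c * Real.exp (eta * s)) := by
          apply mul_le_mul _ h1 (abs_nonneg _) (by positivity)
          rw [le_div_iff₀ hlam]; linarith [habs s]
      _ = (c / lam) * Real.exp (eta * s) * E s := by field_simp
  -- w'' tends to 0 at -∞
  have hVbd : ∀ s, s < t0 → |V s| ≤ lam ^ 2 + c * Real.exp (eta * t0) := by
    intro s hs
    have h1 := hVb s hs
    have h2 : Real.exp (eta * s) ≤ Real.exp (eta * t0) :=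
      Real.exp_le_exp.mpr (by nlinarith)
    have := abs_sub_abs_le_abs_sub (V s) (lam ^ 2)
    have hl : |lam ^ 2| = lam ^ 2 := abs_of_nonneg (by positivity)
    nlinarith
  have hw''0 : Tendsto (fun s => deriv (deriv w) s) atBot (nhds 0) := by
    apply squeeze_zero_norm' (a := fun s => (lam ^ 2 + c * Real.exp (eta * t0)) * |w s|)
    · filter_upwards [eventually_lt_atBot t0] with s hs
      rw [hODE s, Real.norm_eq_abs, abs_neg, abs_mul]
      exact mul_le_mul_of_nonneg_right (hVbd s hs) (abs_nonneg _)
    · have := (hdec.abs.const_mul (lam ^ 2 + c * Real.exp (eta * t0)))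
      simpa using this
  -- w' tends to 0 at -∞
  have hw'0 : Tendsto (deriv w) atBot (nhds 0) := by
    rw [Metric.tendsto_nhds]
    intro ε hε
    have h1 := Metric.tendsto_nhds.mp hdec (ε / 4) (by positivity)
    have h2 := Metric.tendsto_nhds.mp hw''0 (ε / 4) (by positivity)
    rw [eventually_atBot] at h1 h2 ⊢
    obtain ⟨N1, hN1⟩ := h1
    obtain ⟨N2, hN2⟩ := h2
    refine ⟨min N1 N2 - 1, fun t ht => ?_⟩
    have ht1 : t + 1 ≤ N1 := by
      have := min_le_left N1 N2; linarith
    have ht2 : t + 1 ≤ N2 := by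
      have := min_le_right N1 N2; linarith
    obtain ⟨ξ, hξ, hslope⟩ := exists_deriv_eq_slope w (show t < t + 1 by linarith)
      hw1.continuous.continuousOn hw1.differentiableOn
    have hξv : deriv w ξ = w (t + 1) - w t := by
      rw [hslope]; simp
    have hmvt : ‖deriv w ξ - deriv w t‖ ≤ (ε / 4) * ‖ξ - t‖ := by
      apply Convex.norm_image_sub_le_of_norm_hasDerivWithin_le
        (f' := fun x => deriv (deriv w) x) (s := Icc t (t + 1))
        (fun x _ => (hw2 x).hasDerivAt.hasDerivWithinAt)
        (fun x hx => le_of_lt (by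
          have := hN2 x (le_trans hx.2 ht2)
          simpa [Real.dist_eq] using this))
        (convex_Icc _ _)
        ⟨le_refl t, by linarith⟩ ⟨hξ.1.le, hξ.2.le⟩
    have hat : dist (w t) 0 < ε / 4 := hN1 t (by linarith)
    have hat1 : dist (w (t + 1)) 0 < ε / 4 := hN1 (t + 1) ht1
    rw [Real.dist_eq, sub_zero] at hat hat1 ⊢
    have hnorm : |ξ - t| ≤ 1 := by
      rw [abs_of_nonneg (by linarith [hξ.1])]; linarith [hξ.2]
    rw [Real.norm_eq_abs, Real.norm_eq_abs] at hmvt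
    have : |deriv w ξ - deriv w t| ≤ ε / 4 := by nlinarith
    have h5 : |deriv w ξ| ≤ |w (t + 1)| + |w t| := by
      rw [hξv]; exact abs_sub _ _
    calc |deriv w t| ≤ |deriv w ξ| + |deriv w ξ - deriv w t| := by
          have := abs_sub_abs_le_abs_sub (deriv w t) (deriv w ξ)
          have := abs_sub_comm (deriv w t) (deriv w ξ)
          nlinarith [abs_nonneg (deriv w ξ - deriv w t)]
      _ < ε := by linarith
  -- E tends to 0 at -∞
  have hE0 : Tendsto E atBot (nhds 0) := by
    have h := (hw'0.mul hw'0).add ((hdec.mul hdec).const_mul (lam ^ 2))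
    simp only [mul_zero, zero_mul, add_zero] at h
    apply h.congr
    intro s; rw [hEdef]; ring
  -- Gronwall-type function G
  set K : ℝ := c / (lam * eta) with hKdef
  set G : ℝ → ℝ := fun s => E s * Real.exp (-K * Real.exp (eta * s)) with hGdef
  have hKeta : K * eta = c / lam := by
    rw [hKdef]; field_simp
  have hGderiv : ∀ s, HasDerivAt G
      (E' s * Real.exp (-K * Real.exp (eta * s)) +
        E s * (Real.exp (-K * Real.exp (eta * s)) * (-K * (Real.exp (eta * s) * eta)))) s := by
    intro s
    have ha : HasDerivAt (fun u : ℝ => eta * u) eta s := by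
      simpa using (hasDerivAt_id s).const_mul eta
    have hb := (Real.hasDerivAt_exp (eta * s)).comp s ha
    have hc2 := hb.const_mul (-K)
    have hd := (Real.hasDerivAt_exp (-K * Real.exp (eta * s))).comp s hc2
    have he : HasDerivAt (fun u => Real.exp (-K * Real.exp (eta * u)))
        (Real.exp (-K * Real.exp (eta * s)) * (-K * (Real.exp (eta * s) * eta))) s := by
      simpa [Function.comp_def] using hd
    exact (hE s).mul he
  have hGdiff : Differentiable ℝ G := fun s => (hGderiv s).differentiableAt
  have hGd : ∀ s ∈ interior (Set.Iic t0), deriv G s ≤ 0 := by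
    rw [interior_Iic]
    intro s hs
    rw [(hGderiv s).deriv]
    have hb := hEb s hs
    have hP : 0 < Real.exp (-K * Real.exp (eta * s)) := Real.exp_pos _
    have hQ : 0 < Real.exp (eta * s) := Real.exp_pos _
    have h1 : E' s ≤ (c / lam) * Real.exp (eta * s) * E s := le_trans (le_abs_self _) hb
    have h2 : E s * (Real.exp (-K * Real.exp (eta * s)) * (-K * (Real.exp (eta * s) * eta)))
        = -((c / lam) * Real.exp (eta * s) * E s) * Real.exp (-K * Real.exp (eta * s)) := by
      rw [← hKeta]; ring
    rw [h2]
    nlinarith [mul_le_mul_of_nonneg_right h1 hP.le]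
  have hant : AntitoneOn G (Set.Iic t0) :=
    antitoneOn_of_deriv_nonpos (convex_Iic t0) hGdiff.continuous.continuousOn
      hGdiff.differentiableOn hGd
  have hG0 : Tendsto G atBot (nhds 0) := by
    have hetb : Tendsto (fun s : ℝ => eta * s) atBot atBot :=
      tendsto_id.const_mul_atBot heta
    have hexp0 : Tendsto (fun s : ℝ => Real.exp (eta * s)) atBot (nhds 0) :=
      Real.tendsto_exp_atBot.comp hetb
    have h0 : Tendsto (fun s : ℝ => -K * Real.exp (eta * s)) atBot (nhds 0) := by
      simpa using hexp0.const_mul (-K)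
    have hexp1 : Tendsto (fun s : ℝ => Real.exp (-K * Real.exp (eta * s))) atBot (nhds 1) := by
      have := (Real.continuous_exp.tendsto 0).comp h0
      simpa [Function.comp_def] using this
    simpa only [zero_mul] using hE0.mul hexp1
  have hEzero : ∀ s, s ≤ t0 → E s = 0 := by
    intro s hs
    have h1 : G s ≤ 0 := by
      apply ge_of_tendsto hG0
      rw [eventually_atBot]
      exact ⟨s, fun u hu => hant (le_trans hu hs) hs hu⟩
    have h2 : 0 ≤ G s := mul_nonneg (hEnn s) (Real.exp_pos _).le
    have h3 : G s = 0 := le_antisymm h1 h2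
    rcases mul_eq_zero.mp h3 with h | h
    · exact h
    · exact absurd h (Real.exp_ne_zero _)
  have hwzero' : ∀ s, E s = 0 → w s = 0 := by
    intro s h0
    have h : deriv w s ^ 2 + lam ^ 2 * (w s) ^ 2 = 0 := h0
    have h1 : lam ^ 2 * (w s) ^ 2 ≤ 0 := by nlinarith [sq_nonneg (deriv w s)]
    have h2 : (0:ℝ) ≤ lam ^ 2 * (w s) ^ 2 := by positivity
    have h3 : lam ^ 2 * (w s) ^ 2 = 0 := le_antisymm h1 h2
    rcases mul_eq_zero.mp h3 with h4 | h4
    · exact absurd h4 (pow_ne_zero _ hlam.ne')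
    · exact pow_eq_zero_iff (n := 2) (by norm_num) |>.mp h4
  have hwzero : ∀ s, s ≤ t0 → w s = 0 := fun s hs => hwzero' s (hEzero s hs)
  -- extend to t > t0 via forward Gronwall
  intro t
  by_cases ht : t ≤ t0
  · exact hwzero t ht
  push_neg at ht
  obtain ⟨M, hM⟩ := (isCompact_Icc (a := t0) (b := t)).exists_bound_of_continuousOn
    (Continuous.continuousOn (continuous_const.sub hV.continuous : Continuous fun s => lam ^ 2 - V s))
  have hMnn : 0 ≤ M := le_trans (norm_nonneg _) (hM t0 ⟨le_refl _, ht.le⟩)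
  set H : ℝ → ℝ := fun s => E s * Real.exp (-(M / lam) * s) with hHdef
  have hHderiv : ∀ s, HasDerivAt H
      (E' s * Real.exp (-(M / lam) * s) + E s * (Real.exp (-(M / lam) * s) * (-(M / lam)))) s := by
    intro s
    have ha : HasDerivAt (fun u : ℝ => -(M / lam) * u) (-(M / lam)) s := by
      simpa using (hasDerivAt_id s).const_mul (-(M / lam))
    have hb := (Real.hasDerivAt_exp (-(M / lam) * s)).comp s ha
    exact (hE s).mul hb
  have hHdiff : Differentiable ℝ H := fun s => (hHderiv s).differentiableAt
  have hHd : ∀ s ∈ interior (Set.Icc t0 t), deriv H s ≤ 0 := by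
    rw [interior_Icc]
    intro s hs
    rw [(hHderiv s).deriv]
    have hP : 0 < Real.exp (-(M / lam) * s) := Real.exp_pos _
    have hMs : |lam ^ 2 - V s| ≤ M := by
      have := hM s ⟨hs.1.le, hs.2.le⟩
      simpa using this
    have h1 : E' s ≤ (M / lam) * E s := by
      have hEe : |E' s| = 2 * |w s * deriv w s| * |lam ^ 2 - V s| := by
        rw [hE'def]; rw [abs_mul, abs_mul]; simp [abs_of_nonneg]
      have : |E' s| ≤ (E s / lam) * M := by
        rw [hEe]
        apply mul_le_mul _ hMs (abs_nonneg _) (by positivity)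
        rw [le_div_iff₀ hlam]; linarith [habs s]
      have h4 : (E s / lam) * M = (M / lam) * E s := by field_simp
      linarith [le_abs_self (E' s), h4 ▸ this]
    nlinarith [mul_le_mul_of_nonneg_right h1 hP.le]
  have hantH : AntitoneOn H (Set.Icc t0 t) :=
    antitoneOn_of_deriv_nonpos (convex_Icc t0 t) hHdiff.continuous.continuousOn
      hHdiff.differentiableOn hHd
  have hHt : H t ≤ H t0 := hantH ⟨le_refl _, ht.le⟩ ⟨ht.le, le_refl _⟩ ht.le
  have hHt0 : H t0 = 0 := by
    rw [hHdef]; simp [hEzero t0 le_rfl]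
  have hHnn : 0 ≤ H t := mul_nonneg (hEnn t) (Real.exp_pos _).le
  have hHt0' : H t = 0 := le_antisymm (hHt0 ▸ hHt) hHnn
  have hEt : E t = 0 := by
    rcases mul_eq_zero.mp hHt0' with h | h
    · exact h
    · exact absurd h (Real.exp_ne_zero _)
  exact hwzero' t hEt
end

section
/- Let λ > 0 and t₀ ∈ ℝ, and let q : ℝ → ℝ be a continuous function with ∫_{−∞}^{t₀} |q(ζ)| dζ < ∞. If x : (−∞, t₀] → ℝ is continuous and satisfies the Volterra integral equation x(t) = 1 + ∫_t^{t₀} x(ζ)·q(ζ)·(1 − exp(−2λ·(ζ − t)))/(2λ) dζ for all t ≤ t₀, then |x(t)| ≤ exp( (1/(2λ))·∫_{−∞}^{t₀} |q(ζ)| dζ ) for all t ≤ t₀; in particular x is bounded on (−∞, t₀]. -/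
open MeasureTheory intervalIntegral Set Real

/-- Gronwall bound for the Volterra integral equation
associated to `w'' + V w = 0`, `V = -λ² + q`. -/
theorem stmt9 (lam t0 : ℝ) (hlam : 0 < lam)
    (q : ℝ → ℝ) (hq : Continuous q)
    (hqi : MeasureTheory.IntegrableOn (fun ζ => |q ζ|) (Set.Iic t0))
    (x : ℝ → ℝ) (hx : ContinuousOn x (Set.Iic t0))
    (heq : ∀ t ≤ t0, x t =
      1 + ∫ ζ in t..t0, x ζ * q ζ * (1 - Real.exp (-(2 * lam) * (ζ - t))) / (2 * lam)) :
    ∀ t ≤ t0, |x t| ≤ Real.exp ((1 / (2 * lam)) * ∫ ζ in Set.Iic t0, |q ζ|) := by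
  intro t ht
  have hlam2 : (0:ℝ) < 2 * lam := by linarith
  set f : ℝ → ℝ := fun ζ => |x ζ| * |q ζ| / (2 * lam) with hfdef
  have hfc : ContinuousOn f (Set.Iic t0) :=
    (hx.abs.mul hq.continuousOn.abs).div_const _
  -- interval integrability of f
  have hfint : ∀ a b : ℝ, a ≤ t0 → b ≤ t0 → IntervalIntegrable f volume a b := by
    intro a b ha hb
    apply (hfc.mono ?_).intervalIntegrable
    intro z hz
    rcases le_total a b with h | h
    · rw [Set.uIcc_of_le h] at hz; exact le_trans hz.2 hb
    · rw [Set.uIcc_of_ge h] at hz; exact le_trans hz.2 ha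
  set g : ℝ → ℝ := fun u => ∫ ζ in u..t0, f ζ with hgdef
  set h : ℝ → ℝ := fun u => ∫ ζ in u..t0, |q ζ| / (2 * lam) with hhdef
  have hqc : Continuous fun ζ => |q ζ| / (2 * lam) := hq.abs.div_const _
  -- key pointwise bound from the Volterra equation
  have hb : ∀ u ≤ t0, |x u| ≤ 1 + g u := by
    intro u hu
    rw [heq u hu]
    set F : ℝ → ℝ := fun ζ => x ζ * q ζ * (1 - Real.exp (-(2 * lam) * (ζ - u))) / (2 * lam)
      with hFdef
    have hFc : ContinuousOn F (Set.Icc u t0) := by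
      apply ContinuousOn.div_const
      exact ((hx.mono (Set.Icc_subset_Iic_self)).mul
        (hq.continuousOn)).mul
        (continuousOn_const.sub ((continuous_exp.comp
          ((continuous_const.mul (continuous_id.sub continuous_const)))).continuousOn))
    have hFint : IntervalIntegrable F volume u t0 := by
      apply hFc.intervalIntegrable_of_Icc hu
    have h1 : |∫ ζ in u..t0, F ζ| ≤ ∫ ζ in u..t0, |F ζ| :=
      intervalIntegral.abs_integral_le_integral_abs hu
    have h2 : (∫ ζ in u..t0, |F ζ|) ≤ ∫ ζ in u..t0, f ζ := by
      apply intervalIntegral.integral_mono_on hu hFint.abs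
        (hfint u t0 hu le_rfl)
      intro ζ hζ
      have hexp : Real.exp (-(2 * lam) * (ζ - u)) ≤ 1 := by
        rw [Real.exp_le_one_iff]
        nlinarith [hζ.1]
      have hexp0 : (0:ℝ) < Real.exp (-(2 * lam) * (ζ - u)) := Real.exp_pos _
      have : |F ζ| = |x ζ| * |q ζ| * (1 - Real.exp (-(2 * lam) * (ζ - u))) / (2 * lam) := by
        rw [hFdef]
        rw [abs_div, abs_of_pos hlam2, abs_mul, abs_mul,
          abs_of_nonneg (by linarith : (0:ℝ) ≤ 1 - Real.exp (-(2 * lam) * (ζ - u)))]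
      rw [this, hfdef]
      have hnn : (0:ℝ) ≤ |x ζ| * |q ζ| := mul_nonneg (abs_nonneg _) (abs_nonneg _)
      have : |x ζ| * |q ζ| * (1 - Real.exp (-(2 * lam) * (ζ - u))) ≤ |x ζ| * |q ζ| := by
        nlinarith
      exact div_le_div_of_nonneg_right this hlam2.le |>.trans_eq rfl
    calc |1 + ∫ ζ in u..t0, F ζ| ≤ |(1:ℝ)| + |∫ ζ in u..t0, F ζ| := abs_add_le _ _
      _ ≤ 1 + g u := by rw [abs_one]; exact add_le_add_right (h1.trans h2) 1
  -- the comparison function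
  set ψ : ℝ → ℝ := fun u => (1 + g u) * Real.exp (-(h u)) with hψdef
  -- continuity of ψ on Icc t t0
  have hgc : ContinuousOn g (Set.Icc t t0) := by
    have := intervalIntegral.continuousOn_primitive_interval_left
      (f := f) (μ := volume) (a := t) (b := t0)
      (by rw [Set.uIcc_of_le ht]
          exact (hfc.mono Set.Icc_subset_Iic_self).integrableOn_compact isCompact_Icc)
    rwa [Set.uIcc_of_le ht] at this
  have hhc : Continuous h := by
    have : ∀ u, HasDerivAt h (-(|q u| / (2 * lam))) u := by
      intro u
      exact intervalIntegral.integral_hasDerivAt_left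
        (hqc.intervalIntegrable u t0)
        hqc.stronglyMeasurable.stronglyMeasurableAtFilter
        hqc.continuousAt
    exact continuous_iff_continuousAt.mpr fun u => (this u).differentiableAt.continuousAt
  have hψc : ContinuousOn ψ (Set.Icc t t0) :=
    (continuousOn_const.add hgc).mul (hhc.neg.rexp.continuousOn)
  -- derivative facts on the interior
  have hderiv : ∀ u ∈ interior (Set.Icc t t0),
      HasDerivAt ψ (Real.exp (-(h u)) * ((|q u| / (2 * lam)) * ((1 + g u) - |x u|))) u := by
    intro u hu
    rw [interior_Icc] at hu
    have hu0 : u < t0 := hu.2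
    have hmem : Set.Iic t0 ∈ nhds u := Iic_mem_nhds hu0
    have hfu : ContinuousAt f u := (hfc u (le_of_lt hu0)).continuousAt hmem
    have hmeasf : StronglyMeasurableAtFilter f (nhds u) :=
      ⟨Set.Iio t0, Iio_mem_nhds hu0,
        ((hfc.mono (Set.Iio_subset_Iic_self)).aestronglyMeasurable measurableSet_Iio)⟩
    have hg' : HasDerivAt g (-(f u)) u :=
      intervalIntegral.integral_hasDerivAt_left (hfint u t0 (le_of_lt hu0) le_rfl) hmeasf hfu
    have hh' : HasDerivAt h (-(|q u| / (2 * lam))) u :=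
      intervalIntegral.integral_hasDerivAt_left (hqc.intervalIntegrable u t0)
        hqc.stronglyMeasurable.stronglyMeasurableAtFilter hqc.continuousAt
    have hE : HasDerivAt (fun v => Real.exp (-(h v)))
        (Real.exp (-(h u)) * (|q u| / (2 * lam))) u := by
      have := hh'.neg.exp
      simpa using this
    have := ((hasDerivAt_const u (1:ℝ)).add hg').mul hE
    refine this.congr_deriv ?_
    simp only [Pi.add_apply, hfdef]
    ring
  have hmono : MonotoneOn ψ (Set.Icc t t0) := by
    apply monotoneOn_of_deriv_nonneg (convex_Icc t t0) hψc
    · intro u hu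
      exact ((hderiv u hu).differentiableAt).differentiableWithinAt
    · intro u hu
      rw [(hderiv u hu).deriv]
      have hu' : u ≤ t0 := by rw [interior_Icc] at hu; exact le_of_lt hu.2
      have := hb u hu'
      have h1 : (0:ℝ) ≤ |q u| / (2 * lam) := div_nonneg (abs_nonneg _) (le_of_lt hlam2)
      have h2 : (0:ℝ) ≤ Real.exp (-(h u)) := Real.exp_nonneg _
      have h3 : (0:ℝ) ≤ (1 + g u) - |x u| := by linarith
      positivity
  have hψt0 : ψ t0 = 1 := by
    simp [hψdef, hgdef, hhdef, intervalIntegral.integral_same]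
  have hkey : ψ t ≤ 1 := by
    rw [← hψt0]
    exact hmono (Set.left_mem_Icc.mpr ht) (Set.right_mem_Icc.mpr ht) ht
  -- deduce 1 + g t ≤ exp (h t)
  have hg_le : 1 + g t ≤ Real.exp (h t) := by
    have hinv : Real.exp (-(h t)) * Real.exp (h t) = 1 := by
      rw [← Real.exp_add]; simp
    simp only [hψdef] at hkey
    calc 1 + g t = ((1 + g t) * Real.exp (-(h t))) * Real.exp (h t) := by
          rw [mul_assoc, hinv, mul_one]
      _ ≤ 1 * Real.exp (h t) :=
          mul_le_mul_of_nonneg_right hkey (Real.exp_nonneg _)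
      _ = Real.exp (h t) := one_mul _
  -- bound h t by the integral over Iic t0
  have hht : h t ≤ (1 / (2 * lam)) * ∫ ζ in Set.Iic t0, |q ζ| := by
    have h1 : h t = (1 / (2 * lam)) * ∫ ζ in t..t0, |q ζ| := by
      rw [hhdef]
      simp only [div_eq_mul_inv, intervalIntegral.integral_mul_const]
      ring
    rw [h1]
    apply mul_le_mul_of_nonneg_left _ (by positivity)
    rw [intervalIntegral.integral_of_le ht]
    exact setIntegral_mono_set hqi (Filter.Eventually.of_forall fun ζ => abs_nonneg _)
      (HasSubset.Subset.eventuallyLE Set.Ioc_subset_Iic_self)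
  calc |x t| ≤ 1 + g t := hb t ht
    _ ≤ Real.exp (h t) := hg_le
    _ ≤ Real.exp ((1 / (2 * lam)) * ∫ ζ in Set.Iic t0, |q ζ|) := Real.exp_le_exp.mpr hht
end

section
/- Let λ > 0, η > 0, c > 0 and t₀ ∈ ℝ, and let q : ℝ → ℝ be a continuous function with |q(t)| ≤ c·exp(η·t) for all t ≤ t₀. If x : (−∞, t₀] → ℝ is continuous and satisfies the Volterra integral equation x(t) = 1 + ∫_t^{t₀} x(ζ)·q(ζ)·(1 − exp(−2λ·(ζ − t)))/(2λ) dζ for all t ≤ t₀, then x(t) converges to a finite limit as t → −∞. -/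
open MeasureTheory Real Filter Set

/-- the solution of the Volterra integral equation converges
to a finite limit as `t → -∞` when `q` decays exponentially. -/
theorem stmt10 (lam eta c t0 : ℝ) (hlam : 0 < lam) (heta : 0 < eta) (hc : 0 < c)
    (q : ℝ → ℝ) (hq : Continuous q)
    (hqb : ∀ t ≤ t0, |q t| ≤ c * Real.exp (eta * t))
    (x : ℝ → ℝ) (hx : ContinuousOn x (Set.Iic t0))
    (heq : ∀ t ≤ t0, x t =
      1 + ∫ ζ in t..t0, x ζ * q ζ * (1 - Real.exp (-(2 * lam) * (ζ - t))) / (2 * lam)) :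
    ∃ L : ℝ, Filter.Tendsto x Filter.atBot (nhds L) := by
  have h2lam : (0:ℝ) < 2 * lam := by linarith
  set f : ℝ → ℝ → ℝ :=
    fun t ζ => x ζ * q ζ * (1 - Real.exp (-(2 * lam) * (ζ - t))) / (2 * lam) with hf
  -- continuity of the integrand
  have hfc : ∀ t : ℝ, ContinuousOn (f t) (Set.Iic t0) := by
    intro t
    apply ContinuousOn.div_const
    exact (hx.mul hq.continuousOn).mul
      (Continuous.continuousOn (by fun_prop))
  have hfi : ∀ t a b : ℝ, a ≤ b → b ≤ t0 → IntervalIntegrable (f t) volume a b := by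
    intro t a b hab hb
    apply ContinuousOn.intervalIntegrable
    apply (hfc t).mono
    rw [Set.uIcc_of_le hab]
    intro ζ hζ
    exact le_trans hζ.2 hb
  have hfia : ∀ t a b : ℝ, a ≤ b → b ≤ t0 →
      IntervalIntegrable (fun ζ => |f t ζ|) volume a b := by
    intro t a b hab hb
    apply ContinuousOn.intervalIntegrable
    apply ContinuousOn.abs
    apply (hfc t).mono
    rw [Set.uIcc_of_le hab]
    intro ζ hζ
    exact le_trans hζ.2 hb
  -- pointwise bound on the integrand
  have hfb : ∀ t ζ : ℝ, t ≤ ζ → ζ ≤ t0 →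
      |f t ζ| ≤ |x ζ| * (c * Real.exp (eta * ζ)) / (2 * lam) := by
    intro t ζ htζ hζ
    have hker : 0 ≤ 1 - Real.exp (-(2 * lam) * (ζ - t)) ∧
        1 - Real.exp (-(2 * lam) * (ζ - t)) ≤ 1 := by
      constructor
      · have : Real.exp (-(2 * lam) * (ζ - t)) ≤ 1 := by
          rw [Real.exp_le_one_iff]
          nlinarith
        linarith
      · have := Real.exp_pos (-(2 * lam) * (ζ - t))
        linarith
    rw [hf, abs_div, abs_of_pos h2lam, abs_mul, abs_mul]
    have h1 : |1 - Real.exp (-(2 * lam) * (ζ - t))| ≤ 1 := by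
      rw [abs_le]; constructor <;> linarith [hker.1, hker.2]
    have h2 : |q ζ| ≤ c * Real.exp (eta * ζ) := hqb ζ hζ
    have h3 : |x ζ| * |q ζ| * |1 - Real.exp (-(2 * lam) * (ζ - t))| ≤
        |x ζ| * (c * Real.exp (eta * ζ)) := by
      have hx0 : (0:ℝ) ≤ |x ζ| := abs_nonneg _
      have hq0 : (0:ℝ) ≤ |q ζ| := abs_nonneg _
      calc |x ζ| * |q ζ| * |1 - Real.exp (-(2 * lam) * (ζ - t))| ≤ |x ζ| * |q ζ| * 1 :=
            mul_le_mul_of_nonneg_left h1 (mul_nonneg hx0 hq0)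
        _ = |x ζ| * |q ζ| := by ring
        _ ≤ |x ζ| * (c * Real.exp (eta * ζ)) := mul_le_mul_of_nonneg_left h2 hx0
    exact div_le_div_of_nonneg_right h3 h2lam.le
  -- antiderivative of the exponential
  have hexpI : ∀ a b : ℝ, (∫ ζ in a..b, Real.exp (eta * ζ)) =
      (Real.exp (eta * b) - Real.exp (eta * a)) / eta := by
    intro a b
    rw [intervalIntegral.integral_comp_mul_left (fun u => Real.exp u) (ne_of_gt heta)]
    rw [integral_exp]
    rw [smul_eq_mul]
    field_simp
  -- choose t1
  obtain ⟨t1, ht1, hsmall⟩ : ∃ t1, t1 ≤ t0 ∧ c * Real.exp (eta * t1) ≤ lam * eta := by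
    have h1 : Filter.Tendsto (fun t : ℝ => c * Real.exp (eta * t)) Filter.atBot (nhds 0) := by
      have h2 : Filter.Tendsto (fun t : ℝ => eta * t) Filter.atBot Filter.atBot :=
        Filter.Tendsto.const_mul_atBot heta Filter.tendsto_id
      simpa using (Real.tendsto_exp_atBot.comp h2).const_mul c
    have h3 : ∀ᶠ t in Filter.atBot, c * Real.exp (eta * t) < lam * eta :=
      h1.eventually_lt_const (mul_pos hlam heta)
    obtain ⟨t1, h4, h5⟩ := (h3.and (Filter.eventually_le_atBot t0)).exists
    exact ⟨t1, h5, le_of_lt h4⟩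
  -- bound on the compact piece
  obtain ⟨M0, hM0⟩ := isCompact_Icc.exists_bound_of_continuousOn
    (hx.mono (fun ζ hζ => hζ.2 : Set.Icc t1 t0 ⊆ Set.Iic t0))
  have hM0' : ∀ ζ ∈ Set.Icc t1 t0, |x ζ| ≤ M0 := by
    intro ζ hζ; simpa using hM0 ζ hζ
  have hM0nn : 0 ≤ M0 := le_trans (abs_nonneg _) (hM0' t1 ⟨le_refl _, ht1⟩)
  set D : ℝ := M0 * (c * Real.exp (eta * t0)) / (2 * lam) * (t0 - t1) with hD
  have hDnn : 0 ≤ D := by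
    apply mul_nonneg
    · positivity
    · linarith
  set B : ℝ := 2 * (1 + D) with hBdef
  -- uniform bound on (-∞, t1]
  have hB : ∀ t ≤ t1, |x t| ≤ B := by
    intro t ht
    obtain ⟨τ, hτmem, hτmax⟩ := isCompact_Icc.exists_isMaxOn (Set.nonempty_Icc.mpr ht)
      ((hx.mono (fun ζ hζ => le_trans hζ.2 ht1 : Set.Icc t t1 ⊆ Set.Iic t0)).abs)
    set S := |x τ| with hSdef
    have hSnn : 0 ≤ S := abs_nonneg _
    have hxle : ∀ s ∈ Set.Icc t t1, |x s| ≤ S := fun s hs => hτmax hs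
    have hτ1 : τ ≤ t1 := hτmem.2
    have hτ0 : τ ≤ t0 := le_trans hτ1 ht1
    -- first integral
    have hI1 : (∫ ζ in τ..t1, |f τ ζ|) ≤ S / 2 := by
      have step1 : (∫ ζ in τ..t1, |f τ ζ|) ≤
          ∫ ζ in τ..t1, S * (c * Real.exp (eta * ζ)) / (2 * lam) := by
        apply intervalIntegral.integral_mono_on hτ1 (hfia τ τ t1 hτ1 ht1)
        · apply ContinuousOn.intervalIntegrable
          apply Continuous.continuousOn; fun_prop
        · intro ζ hζ
          refine le_trans (hfb τ ζ hζ.1 (le_trans hζ.2 ht1)) ?_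
          have hxS : |x ζ| ≤ S := hxle ζ ⟨le_trans hτmem.1 hζ.1, hζ.2⟩
          apply div_le_div_of_nonneg_right _ h2lam.le
          exact mul_le_mul_of_nonneg_right hxS (by positivity)
      have step2 : (∫ ζ in τ..t1, S * (c * Real.exp (eta * ζ)) / (2 * lam)) ≤ S / 2 := by
        have : (∫ ζ in τ..t1, S * (c * Real.exp (eta * ζ)) / (2 * lam)) =
            S * c / (2 * lam) * ∫ ζ in τ..t1, Real.exp (eta * ζ) := by
          rw [← intervalIntegral.integral_const_mul]
          congr 1; funext ζ; ring
        rw [this, hexpI]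
        have he1 : Real.exp (eta * τ) > 0 := Real.exp_pos _
        have he2 : (Real.exp (eta * t1) - Real.exp (eta * τ)) / eta ≤
            Real.exp (eta * t1) / eta := by
          apply div_le_div_of_nonneg_right _ heta.le
          linarith
        have hkey : S * c / (2 * lam) * (Real.exp (eta * t1) / eta) ≤ S / 2 := by
          rw [div_mul_div_comm, div_le_div_iff₀ (by positivity) (by norm_num)]
          have : c * Real.exp (eta * t1) ≤ lam * eta := hsmall
          nlinarith [mul_le_mul_of_nonneg_left this hSnn]
        refine le_trans ?_ hkey
        apply mul_le_mul_of_nonneg_left he2 (by positivity)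
      exact le_trans step1 step2
    -- second integral
    have hI2 : (∫ ζ in t1..t0, |f τ ζ|) ≤ D := by
      have step1 : (∫ ζ in t1..t0, |f τ ζ|) ≤
          ∫ ζ in t1..t0, M0 * (c * Real.exp (eta * t0)) / (2 * lam) := by
        apply intervalIntegral.integral_mono_on ht1 (hfia τ t1 t0 ht1 le_rfl)
          intervalIntegrable_const
        intro ζ hζ
        refine le_trans (hfb τ ζ (le_trans hτ1 hζ.1) hζ.2) ?_
        apply div_le_div_of_nonneg_right _ h2lam.le
        have h1 : |x ζ| ≤ M0 := hM0' ζ hζ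
        have h2 : Real.exp (eta * ζ) ≤ Real.exp (eta * t0) := by
          apply Real.exp_le_exp.mpr; nlinarith [hζ.2]
        calc |x ζ| * (c * Real.exp (eta * ζ)) ≤ M0 * (c * Real.exp (eta * ζ)) :=
              mul_le_mul_of_nonneg_right h1 (by positivity)
          _ ≤ M0 * (c * Real.exp (eta * t0)) :=
              mul_le_mul_of_nonneg_left (mul_le_mul_of_nonneg_left h2 hc.le) hM0nn
      rw [intervalIntegral.integral_const, smul_eq_mul] at step1
      rw [hD]
      linarith [step1]
    -- combine
    have hsplit : (∫ ζ in τ..t0, |f τ ζ|) =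
        (∫ ζ in τ..t1, |f τ ζ|) + ∫ ζ in t1..t0, |f τ ζ| :=
      (intervalIntegral.integral_add_adjacent_intervals
        (hfia τ τ t1 hτ1 ht1) (hfia τ t1 t0 ht1 le_rfl)).symm
    have hSb : S ≤ 1 + (S / 2 + D) := by
      have h1 := heq τ hτ0
      have h2 : |x τ| ≤ 1 + |∫ ζ in τ..t0, f τ ζ| := by
        have h1' : x τ = 1 + ∫ ζ in τ..t0, f τ ζ := h1
        rw [h1']
        exact (abs_add_le 1 _).trans (by rw [abs_one])
      have h3 : |∫ ζ in τ..t0, f τ ζ| ≤ ∫ ζ in τ..t0, |f τ ζ| :=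
        intervalIntegral.abs_integral_le_integral_abs hτ0
      rw [hsplit] at h3
      calc S = |x τ| := rfl
        _ ≤ 1 + |∫ ζ in τ..t0, f τ ζ| := h2
        _ ≤ 1 + ((∫ ζ in τ..t1, |f τ ζ|) + ∫ ζ in t1..t0, |f τ ζ|) := by linarith
        _ ≤ 1 + (S / 2 + D) := by linarith
    have hSB : S ≤ B := by rw [hBdef]; linarith
    exact le_trans (hxle t ⟨le_refl _, ht⟩) hSB
  -- global bound
  set B' : ℝ := max B M0 with hB'def
  have hB' : ∀ ζ ≤ t0, |x ζ| ≤ B' := by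
    intro ζ hζ
    rcases le_total ζ t1 with h | h
    · exact le_trans (hB ζ h) (le_max_left _ _)
    · exact le_trans (hM0' ζ ⟨h, hζ⟩) (le_max_right _ _)
  have hB'nn : 0 ≤ B' := le_trans hM0nn (le_max_right _ _)
  -- dominated convergence setup
  set F : ℝ → ℝ → ℝ := fun t => Set.indicator (Set.Ioc t t0) (f t) with hF
  set g : ℝ → ℝ := Set.indicator (Set.Iic t0) (fun ζ => x ζ * q ζ / (2 * lam)) with hg
  set bound : ℝ → ℝ :=
    Set.indicator (Set.Iic t0) (fun ζ => B' * (c * Real.exp (eta * ζ)) / (2 * lam))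
    with hbounddef
  have hbound_nn : ∀ ζ, 0 ≤ bound ζ := by
    intro ζ
    apply Set.indicator_nonneg
    intro ζ' _
    positivity
  have hmeas : ∀ t : ℝ, AEStronglyMeasurable (F t) volume := by
    intro t
    simp only [hF]
    rw [aestronglyMeasurable_indicator_iff measurableSet_Ioc]
    exact ((hfc t).mono Set.Ioc_subset_Iic_self).aestronglyMeasurable measurableSet_Ioc
  have hbound : ∀ t : ℝ, ∀ ζ : ℝ, ‖F t ζ‖ ≤ bound ζ := by
    intro t ζ
    simp only [hF, hbounddef, Real.norm_eq_abs]
    by_cases hζ : ζ ∈ Set.Ioc t t0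
    · rw [Set.indicator_of_mem hζ,
        Set.indicator_of_mem (Set.mem_Iic.mpr hζ.2)]
      refine le_trans (hfb t ζ (le_of_lt hζ.1) hζ.2) ?_
      apply div_le_div_of_nonneg_right _ h2lam.le
      exact mul_le_mul_of_nonneg_right (hB' ζ hζ.2) (by positivity)
    · rw [Set.indicator_of_notMem hζ]
      have := hbound_nn ζ
      simp only [hbounddef] at this
      simpa using this
  have hbint : Integrable bound volume := by
    rw [hbounddef, integrable_indicator_iff measurableSet_Iic]
    have hexp : IntegrableOn (fun ζ => Real.exp (eta * ζ)) (Set.Iic t0) := by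
      rw [← (Measure.measurePreserving_neg (volume : Measure ℝ)).integrableOn_comp_preimage
        (Homeomorph.neg ℝ).measurableEmbedding]
      have : (Neg.neg ⁻¹' Set.Iic t0 : Set ℝ) = Set.Ici (-t0) := by
        ext u; simp [neg_le]
      rw [this]
      rw [integrableOn_Ici_iff_integrableOn_Ioi]
      have := exp_neg_integrableOn_Ioi (-t0) heta
      apply this.congr_fun _ measurableSet_Ioi
      intro u _; simp [Function.comp, mul_comm]
    have : (fun ζ => B' * (c * Real.exp (eta * ζ)) / (2 * lam)) =
        fun ζ => (B' * c / (2 * lam)) * Real.exp (eta * ζ) := by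
      funext ζ; ring
    rw [this]
    exact hexp.const_mul _
  have hlim : ∀ ζ : ℝ, Filter.Tendsto (fun t => F t ζ) Filter.atBot (nhds (g ζ)) := by
    intro ζ
    by_cases hζ : ζ ≤ t0
    · rw [hg, Set.indicator_of_mem (Set.mem_Iic.mpr hζ)]
      have hev : (fun t => F t ζ) =ᶠ[Filter.atBot] fun t => f t ζ := by
        filter_upwards [Filter.eventually_lt_atBot ζ] with t ht
        simp only [hF]
        rw [Set.indicator_of_mem (Set.mem_Ioc.mpr ⟨ht, hζ⟩)]
      have harg : Filter.Tendsto (fun t : ℝ => -(2 * lam) * (ζ - t)) Filter.atBot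
          Filter.atBot := by
        have h1 : Filter.Tendsto (fun t : ℝ => 2 * lam * t) Filter.atBot Filter.atBot :=
          Filter.Tendsto.const_mul_atBot h2lam Filter.tendsto_id
        have h2 := Filter.tendsto_atBot_add_const_right Filter.atBot (-(2 * lam * ζ)) h1
        apply h2.congr
        intro t; ring
      have hexp0 : Filter.Tendsto (fun t : ℝ => Real.exp (-(2 * lam) * (ζ - t)))
          Filter.atBot (nhds 0) := Real.tendsto_exp_atBot.comp harg
      have hflim : Filter.Tendsto (fun t => f t ζ) Filter.atBot
          (nhds (x ζ * q ζ / (2 * lam))) := by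
        have : Filter.Tendsto
            (fun t => x ζ * q ζ * (1 - Real.exp (-(2 * lam) * (ζ - t))) / (2 * lam))
            Filter.atBot (nhds (x ζ * q ζ * (1 - 0) / (2 * lam))) := by
          apply Filter.Tendsto.div_const
          exact (tendsto_const_nhds.mul (tendsto_const_nhds.sub hexp0))
        have h10 : x ζ * q ζ * (1 - 0) / (2 * lam) = x ζ * q ζ / (2 * lam) := by ring
        rw [← h10]
        exact this
      exact hflim.congr' hev.symm
    · rw [hg, Set.indicator_of_notMem (Set.notMem_Iic.mpr (lt_of_not_ge hζ))]
      have hz : ∀ t : ℝ, F t ζ = 0 := by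
        intro t
        simp only [hF]
        rw [Set.indicator_of_notMem]
        intro hmem
        exact hζ hmem.2
      simpa [hz] using tendsto_const_nhds
  have key : Filter.Tendsto (fun t => ∫ ζ, F t ζ) Filter.atBot (nhds (∫ ζ, g ζ)) := by
    apply MeasureTheory.tendsto_integral_filter_of_dominated_convergence bound
    · exact Filter.Eventually.of_forall hmeas
    · exact Filter.Eventually.of_forall fun t => Filter.Eventually.of_forall (hbound t)
    · exact hbint
    · exact Filter.Eventually.of_forall hlim
  refine ⟨1 + ∫ ζ, g ζ, ?_⟩
  have hxF : ∀ t ≤ t0, x t = 1 + ∫ ζ, F t ζ := by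
    intro t ht
    rw [heq t ht]
    congr 1
    rw [intervalIntegral.integral_of_le ht]
    simp only [hF]
    rw [MeasureTheory.integral_indicator measurableSet_Ioc]
  apply Filter.Tendsto.congr' _ (tendsto_const_nhds.add key)
  filter_upwards [Filter.eventually_le_atBot t0] with t ht
  exact (hxF t ht).symm
end
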